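/- arXiv:2203.10477 — 6 statements merged into one kernel-verified Lean document; each statement's English description precedes it below -/
import Mathlib

section
/- Let a > 0, c < d, and T > 0. Suppose u and v are classical solutions of the 1-D wave equation with speed a on [c, d] × [0, T] such that u(x,0) = v(x,0) and ∂u/∂t(x,0) = ∂v/∂t(x,0) for all x ∈ [c, d], u(c,t) = v(c,t) for all t ∈ [0, T] (equal Dirichlet data at the left end), and ∂u/∂x(d,t) = ∂v/∂x(d,t) for all t ∈ [0, T] (equal Neumann flux data at the right end). Then u(x,t) = v(x,t) for all (x,t) ∈ [c, d] × [0, T]. -/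
open Set Filter Topology
open scoped Interval

section WDNhelpers
variable {F : ℝ × ℝ → ℝ} {U : Set (ℝ × ℝ)}

private lemma WDN.slice1 (hU : IsOpen U) (hF : ContDiffOn ℝ 2 F U) {x t : ℝ} (hq : (x, t) ∈ U) :
    HasDerivAt (fun y => F (y, t)) (fderiv ℝ F (x, t) (1, 0)) x := by
  have hd : DifferentiableAt ℝ F (x, t) :=
    ((hF.contDiffAt (hU.mem_nhds hq)).differentiableAt two_ne_zero)
  have h1 : HasDerivAt (fun y : ℝ => (y, t)) ((1 : ℝ), (0 : ℝ)) x :=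
    (hasDerivAt_id x).prodMk (hasDerivAt_const x t)
  exact (hd.hasFDerivAt.comp_hasDerivAt x h1)

private lemma WDN.slice2 (hU : IsOpen U) (hF : ContDiffOn ℝ 2 F U) {x t : ℝ} (hq : (x, t) ∈ U) :
    HasDerivAt (fun s => F (x, s)) (fderiv ℝ F (x, t) (0, 1)) t := by
  have hd : DifferentiableAt ℝ F (x, t) :=
    ((hF.contDiffAt (hU.mem_nhds hq)).differentiableAt two_ne_zero)
  have h1 : HasDerivAt (fun s : ℝ => (x, s)) ((0 : ℝ), (1 : ℝ)) t :=
    (hasDerivAt_const t x).prodMk (hasDerivAt_id t)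
  exact (hd.hasFDerivAt.comp_hasDerivAt t h1)

private lemma WDN.dslice2 (hU : IsOpen U) (hF : ContDiffOn ℝ 2 F U) {x t : ℝ} (hq : (x, t) ∈ U)
    (v₀ : ℝ × ℝ) :
    HasDerivAt (fun s => fderiv ℝ F (x, s) v₀)
      (fderiv ℝ (fderiv ℝ F) (x, t) (0, 1) v₀) t := by
  have hd : DifferentiableAt ℝ (fderiv ℝ F) (x, t) := by
    have h := (hF.contDiffAt (hU.mem_nhds hq)).fderiv_right (m := 1) (by norm_num)
    exact h.differentiableAt one_ne_zero
  have h1 : HasDerivAt (fun s : ℝ => (x, s)) ((0 : ℝ), (1 : ℝ)) t :=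
    (hasDerivAt_const t x).prodMk (hasDerivAt_id t)
  have h2 : HasDerivAt (fun s => fderiv ℝ F (x, s))
      (fderiv ℝ (fderiv ℝ F) (x, t) (0, 1)) t := by
    exact (hd.hasFDerivAt.comp_hasDerivAt t h1)
  exact ((ContinuousLinearMap.apply ℝ ℝ v₀).hasFDerivAt.comp_hasDerivAt t h2)

private lemma WDN.dslice1 (hU : IsOpen U) (hF : ContDiffOn ℝ 2 F U) {x t : ℝ} (hq : (x, t) ∈ U)
    (v₀ : ℝ × ℝ) :
    HasDerivAt (fun y => fderiv ℝ F (y, t) v₀)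
      (fderiv ℝ (fderiv ℝ F) (x, t) (1, 0) v₀) x := by
  have hd : DifferentiableAt ℝ (fderiv ℝ F) (x, t) := by
    have h := (hF.contDiffAt (hU.mem_nhds hq)).fderiv_right (m := 1) (by norm_num)
    exact h.differentiableAt one_ne_zero
  have h1 : HasDerivAt (fun y : ℝ => (y, t)) ((1 : ℝ), (0 : ℝ)) x :=
    (hasDerivAt_id x).prodMk (hasDerivAt_const x t)
  have h2 : HasDerivAt (fun y => fderiv ℝ F (y, t))
      (fderiv ℝ (fderiv ℝ F) (x, t) (1, 0)) x := by
    exact (hd.hasFDerivAt.comp_hasDerivAt x h1)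
  exact ((ContinuousLinearMap.apply ℝ ℝ v₀).hasFDerivAt.comp_hasDerivAt x h2)

private lemma WDN.curried_tt {p : ℝ → ℝ → ℝ} (hU : IsOpen U)
    (hF : ContDiffOn ℝ 2 (fun q : ℝ × ℝ => p q.1 q.2) U) {x t : ℝ} (hq : (x, t) ∈ U) :
    deriv (deriv (fun s => p x s)) t
      = fderiv ℝ (fderiv ℝ (fun q : ℝ × ℝ => p q.1 q.2)) (x, t) (0, 1) (0, 1) := by
  set F := fun q : ℝ × ℝ => p q.1 q.2
  have hnb : ∀ᶠ s in 𝓝 t, (x, s) ∈ U := by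
    have hcont : Continuous (fun s : ℝ => (x, s)) := by fun_prop
    exact hcont.continuousAt (hU.mem_nhds hq)
  have heq : deriv (fun s => p x s) =ᶠ[𝓝 t] fun s => fderiv ℝ F (x, s) (0, 1) := by
    filter_upwards [hnb] with s hs
    exact (WDN.slice2 hU hF hs).deriv
  rw [heq.deriv_eq]
  exact (WDN.dslice2 hU hF hq (0, 1)).deriv

private lemma WDN.curried_xx {p : ℝ → ℝ → ℝ} (hU : IsOpen U)
    (hF : ContDiffOn ℝ 2 (fun q : ℝ × ℝ => p q.1 q.2) U) {x t : ℝ} (hq : (x, t) ∈ U) :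
    deriv (deriv (fun y => p y t)) x
      = fderiv ℝ (fderiv ℝ (fun q : ℝ × ℝ => p q.1 q.2)) (x, t) (1, 0) (1, 0) := by
  set F := fun q : ℝ × ℝ => p q.1 q.2
  have hnb : ∀ᶠ y in 𝓝 x, (y, t) ∈ U := by
    have hcont : Continuous (fun y : ℝ => (y, t)) := by fun_prop
    exact hcont.continuousAt (hU.mem_nhds hq)
  have heq : deriv (fun y => p y t) =ᶠ[𝓝 x] fun y => fderiv ℝ F (y, t) (1, 0) := by
    filter_upwards [hnb] with y hy
    exact (WDN.slice1 hU hF hy).deriv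
  rw [heq.deriv_eq]
  exact (WDN.dslice1 hU hF hq (1, 0)).deriv

private lemma WDN.symm2 (hU : IsOpen U) (hF : ContDiffOn ℝ 2 F U) {q : ℝ × ℝ} (hq : q ∈ U) :
    fderiv ℝ (fderiv ℝ F) q (0, 1) (1, 0) = fderiv ℝ (fderiv ℝ F) q (1, 0) (0, 1) :=
  (hF.contDiffAt (hU.mem_nhds hq)).isSymmSndFDerivAt (by simp) _ _

private lemma WDN.cont_g (hU : IsOpen U) (hF : ContDiffOn ℝ 2 F U) (v₀ : ℝ × ℝ) :
    ContinuousOn (fun q => fderiv ℝ F q v₀) U := by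
  have h := hF.continuousOn_fderiv_of_isOpen hU one_le_two
  exact (ContinuousLinearMap.apply ℝ ℝ v₀).continuous.comp_continuousOn h

private lemma WDN.cont_g2 (hU : IsOpen U) (hF : ContDiffOn ℝ 2 F U) (v₀ w₀ : ℝ × ℝ) :
    ContinuousOn (fun q => fderiv ℝ (fderiv ℝ F) q v₀ w₀) U := by
  have h1 : ContDiffOn ℝ 1 (fderiv ℝ F) U := hF.fderiv_of_isOpen hU (by norm_num)
  have h := h1.continuousOn_fderiv_of_isOpen hU le_rfl
  exact (ContinuousLinearMap.apply ℝ ℝ w₀).continuous.comp_continuousOn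
    ((ContinuousLinearMap.apply ℝ (ℝ × ℝ →L[ℝ] ℝ) v₀).continuous.comp_continuousOn h)

private lemma WDN.deriv_zero_of_vanish {f : ℝ → ℝ} {f' c d x : ℝ} (hcd : c < d)
    (hx : x ∈ Icc c d) (hf : HasDerivAt f f' x) (h0 : ∀ y ∈ Icc c d, f y = 0) :
    f' = 0 := by
  rcases eq_or_lt_of_le hx.2 with h | h
  · have hmem : Icc c d ∈ 𝓝[≤] x := by
      rw [h]; exact Icc_mem_nhdsLE_of_mem ⟨hcd, le_rfl⟩
    have h1 : HasDerivWithinAt f 0 (Iic x) x := by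
      refine (hasDerivWithinAt_const x _ (0 : ℝ)).congr_of_eventuallyEq ?_ (h0 x hx)
      filter_upwards [hmem] with y hy using h0 y hy
    have h2 : HasDerivWithinAt f f' (Iic x) x := hf.hasDerivWithinAt
    have := h2.derivWithin (uniqueDiffOn_Iic x x (Set.mem_Iic.2 le_rfl))
    rw [← this, h1.derivWithin (uniqueDiffOn_Iic x x (Set.mem_Iic.2 le_rfl))]
  · have hmem : Icc c d ∈ 𝓝[≥] x := Icc_mem_nhdsGE_of_mem ⟨hx.1, h⟩
    have h1 : HasDerivWithinAt f 0 (Ici x) x := by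
      refine (hasDerivWithinAt_const x _ (0 : ℝ)).congr_of_eventuallyEq ?_ (h0 x hx)
      filter_upwards [hmem] with y hy using h0 y hy
    have h2 : HasDerivWithinAt f f' (Ici x) x := hf.hasDerivWithinAt
    have := h2.derivWithin (uniqueDiffOn_Ici x x (Set.mem_Ici.2 le_rfl))
    rw [← this, h1.derivWithin (uniqueDiffOn_Ici x x (Set.mem_Ici.2 le_rfl))]

private lemma WDN.zero_of_integral_zero {f : ℝ → ℝ} {c d : ℝ} (hcd : c < d)
    (hc : ∀ x ∈ Icc c d, ContinuousAt f x)
    (hnn : ∀ x ∈ Icc c d, 0 ≤ f x)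
    (hint : ∫ x in c..d, f x = 0) :
    ∀ x ∈ Icc c d, f x = 0 := by
  have hcont : ContinuousOn f (Icc c d) := fun x hx => (hc x hx).continuousWithinAt
  intro x₀ hx₀
  by_contra hne
  have hpos : 0 < f x₀ := lt_of_le_of_ne (hnn x₀ hx₀) (Ne.symm hne)
  set m := f x₀ / 2 with hm
  have hmpos : 0 < m := by positivity
  have hev : ∀ᶠ y in 𝓝 x₀, m < f y :=
    (hc x₀ hx₀).eventually (eventually_gt_nhds (by simpa [hm] using half_lt_self hpos))
  rcases Metric.eventually_nhds_iff.1 hev with ⟨δ, hδpos, hδ⟩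
  set α := max c (x₀ - δ / 2) with hα
  set β := min d (x₀ + δ / 2) with hβ
  have hαx : α ≤ x₀ := max_le hx₀.1 (by linarith)
  have hxβ : x₀ ≤ β := le_min hx₀.2 (by linarith)
  have hαβ : α < β := by
    rcases lt_or_ge x₀ d with h | h
    · exact lt_of_le_of_lt hαx (lt_min h (by linarith))
    · have hxd : x₀ = d := le_antisymm hx₀.2 h
      refine lt_of_lt_of_le (max_lt ?_ (by linarith)) hxβ
      linarith [hxd]
  have hcα : c ≤ α := le_max_left _ _
  have hβd : β ≤ d := min_le_left _ _
  have hi : IntervalIntegrable f MeasureTheory.volume c d :=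
    ContinuousOn.intervalIntegrable (by rwa [uIcc_of_le hcd.le])
  have hball : ∀ y ∈ Icc α β, m < f y := by
    intro y hy
    apply hδ
    have h1 : x₀ - δ / 2 ≤ y := le_trans (le_max_right _ _) hy.1
    have h2 : y ≤ x₀ + δ / 2 := le_trans hy.2 (min_le_right _ _)
    rw [Real.dist_eq, abs_sub_lt_iff]
    constructor <;> linarith
  have hmono : ∀ a b : ℝ, c ≤ a → a ≤ b → b ≤ d →
      IntervalIntegrable f MeasureTheory.volume a b := by
    intro a b h1 h2 h3
    refine hi.mono_set ?_
    rw [uIcc_of_le h2, uIcc_of_le hcd.le]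
    exact Icc_subset_Icc h1 h3
  have hi1 := hmono c α le_rfl hcα (hαβ.le.trans hβd)
  have hi2 := hmono α β hcα hαβ.le hβd
  have hi3 := hmono β d (hcα.trans hαβ.le) hβd le_rfl
  have e1 : (∫ x in c..α, f x) + (∫ x in α..β, f x) + (∫ x in β..d, f x)
      = ∫ x in c..d, f x := by
    rw [intervalIntegral.integral_add_adjacent_intervals hi1 hi2,
        intervalIntegral.integral_add_adjacent_intervals (hi1.trans hi2) hi3]
  have n1 : 0 ≤ ∫ x in c..α, f x :=
    intervalIntegral.integral_nonneg hcα (fun x hx => hnn x ⟨hx.1, hx.2.trans (hαβ.le.trans hβd)⟩)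
  have n3 : 0 ≤ ∫ x in β..d, f x :=
    intervalIntegral.integral_nonneg hβd (fun x hx => hnn x ⟨(hcα.trans hαβ.le).trans hx.1, hx.2⟩)
  have n2 : m * (β - α) ≤ ∫ x in α..β, f x := by
    have := intervalIntegral.integral_mono_on hαβ.le
      (intervalIntegrable_const (c := m)) hi2 (fun x hx => (hball x hx).le)
    rw [intervalIntegral.integral_const, smul_eq_mul, mul_comm] at this
    exact this
  have : 0 < m * (β - α) := by
    have : 0 < β - α := by linarith
    positivity
  linarith [n1, n2, n3, e1.symm ▸ hint]

end WDNhelpers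

private lemma WDN.core {a c d T : ℝ} (ha : 0 < a) (hcd : c < d) (hT : 0 < T)
    {W : ℝ × ℝ → ℝ} {U : Set (ℝ × ℝ)} (hUo : IsOpen U)
    (hKU : Icc c d ×ˢ Icc (0:ℝ) T ⊆ U)
    (hW : ContDiffOn ℝ 2 W U)
    (hwave : ∀ q ∈ Icc c d ×ˢ Icc (0:ℝ) T,
      fderiv ℝ (fderiv ℝ W) q (0, 1) (0, 1) = a ^ 2 * fderiv ℝ (fderiv ℝ W) q (1, 0) (1, 0))
    (hinit : ∀ x ∈ Icc c d, W (x, 0) = 0)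
    (hinit' : ∀ x ∈ Icc c d, fderiv ℝ W (x, 0) (0, 1) = 0)
    (hDir : ∀ t ∈ Icc (0:ℝ) T, W (c, t) = 0)
    (hNeu : ∀ t ∈ Icc (0:ℝ) T, fderiv ℝ W (d, t) (1, 0) = 0) :
    ∀ x ∈ Icc c d, ∀ t ∈ Icc (0:ℝ) T, W (x, t) = 0 := by
  have hΙ : Ι c d ⊆ Icc c d := by
    rw [uIoc_of_le hcd.le]; exact Ioc_subset_Icc_self
  -- boundary facts
  have hg2c : ∀ t ∈ Icc (0:ℝ) T, fderiv ℝ W (c, t) (0, 1) = 0 := by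
    intro t ht
    exact WDN.deriv_zero_of_vanish hT ht
      (WDN.slice2 hUo hW (hKU ⟨⟨le_rfl, hcd.le⟩, ht⟩)) hDir
  have hg1x0 : ∀ x ∈ Icc c d, fderiv ℝ W (x, 0) (1, 0) = 0 := by
    intro x hx
    exact WDN.deriv_zero_of_vanish hcd hx
      (WDN.slice1 hUo hW (hKU ⟨hx, ⟨le_rfl, hT.le⟩⟩)) hinit
  -- the energy
  set φ : ℝ × ℝ → ℝ := fun q => (fderiv ℝ W q (0, 1)) ^ 2 + a ^ 2 * (fderiv ℝ W q (1, 0)) ^ 2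
    with hφdef
  set ψ : ℝ × ℝ → ℝ := fun q => 2 * fderiv ℝ W q (0, 1) * fderiv ℝ (fderiv ℝ W) q (0, 1) (0, 1)
      + a ^ 2 * (2 * fderiv ℝ W q (1, 0) * fderiv ℝ (fderiv ℝ W) q (0, 1) (1, 0)) with hψdef
  set E : ℝ → ℝ := fun t => ∫ x in c..d, φ (x, t) with hEdef
  have hφcont : ContinuousOn φ U :=
    ((WDN.cont_g hUo hW (0, 1)).pow 2).add
      (continuousOn_const.mul ((WDN.cont_g hUo hW (1, 0)).pow 2))
  have hψcont : ContinuousOn ψ U :=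
    ((continuousOn_const.mul (WDN.cont_g hUo hW (0, 1))).mul
        (WDN.cont_g2 hUo hW (0, 1) (0, 1))).add
      (continuousOn_const.mul ((continuousOn_const.mul (WDN.cont_g hUo hW (1, 0))).mul
        (WDN.cont_g2 hUo hW (0, 1) (1, 0))))
  have hψderiv : ∀ x t : ℝ, (x, t) ∈ U →
      HasDerivAt (fun s => φ (x, s)) (ψ (x, t)) t := by
    intro x t hq
    have h2 := (WDN.dslice2 hUo hW hq (0, 1)).pow 2
    have h1 := ((WDN.dslice2 hUo hW hq (1, 0)).pow 2).const_mul (a ^ 2)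
    have h := h2.add h1
    simp only [hφdef, hψdef, pow_one, Nat.cast_ofNat]
    refine h.congr_deriv ?_
    norm_num
  have hφslicecont : ∀ s : ℝ, (∀ x ∈ Icc c d, (x, s) ∈ U) →
      ContinuousOn (fun x => φ (x, s)) (Icc c d) := by
    intro s hs
    refine ContinuousOn.comp hφcont ?_ (fun x hx => hs x hx)
    exact (continuous_id.prodMk continuous_const).continuousOn
  -- energy has zero derivative
  have hE' : ∀ t ∈ Icc (0:ℝ) T, HasDerivAt E 0 t := by
    intro t ht
    have hKt : (Icc c d ×ˢ ({t} : Set ℝ)) ⊆ U := by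
      rintro ⟨x, s⟩ ⟨hx, hsmem⟩
      rcases hsmem with rfl
      exact hKU ⟨hx, ht⟩
    obtain ⟨δ, hδpos, hδ⟩ := (isCompact_Icc.prod isCompact_singleton).exists_thickening_subset_open
      hUo hKt
    set ε := δ / 2 with hεdef
    have hεpos : 0 < ε := by positivity
    have hRU : Icc c d ×ˢ Icc (t - ε) (t + ε) ⊆ U := by
      rintro ⟨x, s⟩ ⟨hx, hs⟩
      apply hδ
      rw [Metric.mem_thickening_iff]
      refine ⟨(x, t), ⟨hx, rfl⟩, ?_⟩
      rw [Prod.dist_eq]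
      have h1 : dist x x = 0 := dist_self x
      have h2 : dist s t ≤ ε := by
        rw [Real.dist_eq, abs_le]
        constructor <;> [linarith [hs.1]; linarith [hs.2] ]
      calc max (dist x x) (dist s t) ≤ max 0 ε := max_le_max h1.le h2
        _ = ε := by simp [hεpos.le]
        _ < δ := by rw [hεdef]; linarith
    have hball : Metric.ball t ε ⊆ Icc (t - ε) (t + ε) := by
      rw [Real.ball_eq_Ioo]; exact Ioo_subset_Icc_self
    have hmemR : ∀ x ∈ Ι c d, ∀ s ∈ Metric.ball t ε, (x, s) ∈ U :=
      fun x hx s hs => hRU ⟨hΙ hx, hball hs⟩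
    obtain ⟨C, hC⟩ := (isCompact_Icc.prod isCompact_Icc).exists_bound_of_continuousOn
      (hψcont.mono hRU)
    have htself : t ∈ Metric.ball t ε := Metric.mem_ball_self hεpos
    have key := intervalIntegral.hasDerivAt_integral_of_dominated_loc_of_deriv_le
      (F := fun s x => φ (x, s)) (F' := fun s x => ψ (x, s)) (x₀ := t)
      (a := c) (b := d) (bound := fun _ => C) (μ := MeasureTheory.volume) (Metric.ball_mem_nhds t hεpos)
      ?_ ?_ ?_ ?_ ?_ ?_
    · have hzero : (∫ x in c..d, ψ (x, t)) = 0 := by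
        have hH : ∀ x ∈ uIcc c d, HasDerivAt
            (fun y => 2 * a ^ 2 * (fderiv ℝ W (y, t) (0, 1) * fderiv ℝ W (y, t) (1, 0)))
            (ψ (x, t)) x := by
          intro x hx'
          have hx : x ∈ Icc c d := by rwa [uIcc_of_le hcd.le] at hx'
          have hqU : (x, t) ∈ U := hKU ⟨hx, ht⟩
          have h1 := WDN.dslice1 hUo hW hqU (0, 1)
          have h2 := WDN.dslice1 hUo hW hqU (1, 0)
          have h := (h1.mul h2).const_mul (2 * a ^ 2)
          have heq : ψ (x, t) = 2 * a ^ 2 *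
              (fderiv ℝ (fderiv ℝ W) (x, t) (1, 0) (0, 1) * fderiv ℝ W (x, t) (1, 0)
                + fderiv ℝ W (x, t) (0, 1) * fderiv ℝ (fderiv ℝ W) (x, t) (1, 0) (1, 0)) := by
            have hw := hwave (x, t) ⟨hx, ht⟩
            have hs := WDN.symm2 hUo hW hqU
            simp only [hψdef]
            rw [hw, hs]
            ring
          rw [heq]
          exact h
        have hint' : IntervalIntegrable (fun x => ψ (x, t)) MeasureTheory.volume c d := by
          apply ContinuousOn.intervalIntegrable
          rw [uIcc_of_le hcd.le]
          refine ContinuousOn.comp hψcont ?_ (fun x hx => hKU ⟨hx, ht⟩)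
          exact (continuous_id.prodMk continuous_const).continuousOn
        rw [intervalIntegral.integral_eq_sub_of_hasDerivAt hH hint']
        rw [hNeu t ht, hg2c t ht]
        ring
      rw [hzero] at key
      exact key.2
    · filter_upwards [Metric.ball_mem_nhds t hεpos] with s hs
      apply ContinuousOn.aestronglyMeasurable _ measurableSet_uIoc
      exact (hφslicecont s (fun x hx => hRU ⟨hx, hball hs⟩)).mono hΙ
    · apply ContinuousOn.intervalIntegrable
      rw [uIcc_of_le hcd.le]
      exact hφslicecont t (fun x hx => hKU ⟨hx, ht⟩)
    · apply ContinuousOn.aestronglyMeasurable _ measurableSet_uIoc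
      refine (ContinuousOn.comp hψcont ?_ (fun x hx => hKU ⟨hΙ hx, ht⟩)).mono (fun x hx => hx)
      exact (continuous_id.prodMk continuous_const).continuousOn
    · apply Filter.Eventually.of_forall
      intro x hx s hs
      exact hC (x, s) ⟨hΙ hx, hball hs⟩
    · exact intervalIntegrable_const
    · apply Filter.Eventually.of_forall
      intro x hx s hs
      exact hψderiv x s (hmemR x hx s hs)
  -- energy vanishes
  have hE0 : E 0 = 0 := by
    have h : ∀ x ∈ uIcc c d, φ (x, 0) = (fun _ : ℝ => (0:ℝ)) x := by
      intro x hx'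
      have hx : x ∈ Icc c d := by rwa [uIcc_of_le hcd.le] at hx'
      simp [hφdef, hinit' x hx, hg1x0 x hx]
    rw [hEdef]
    simp only
    rw [intervalIntegral.integral_congr h, intervalIntegral.integral_const]
    simp
  have hEzero : ∀ t ∈ Icc (0:ℝ) T, E t = 0 := by
    intro t ht
    have hcont : ContinuousOn E (Icc 0 T) := fun s hs =>
      (hE' s hs).continuousAt.continuousWithinAt
    have hder : ∀ s ∈ Ico (0:ℝ) T, HasDerivWithinAt E 0 (Ici s) s := fun s hs =>
      (hE' s ⟨hs.1, hs.2.le⟩).hasDerivWithinAt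
    have := constant_of_has_deriv_right_zero hcont hder t ht
    rw [this, hE0]
  -- deduce time derivative vanishes everywhere
  have hg2all : ∀ t ∈ Icc (0:ℝ) T, ∀ x ∈ Icc c d, fderiv ℝ W (x, t) (0, 1) = 0 := by
    intro t ht x hx
    have hcφ : ∀ y ∈ Icc c d, ContinuousAt (fun z => φ (z, t)) y := by
      intro y hy
      have hU' : U ∈ 𝓝 ((y, t) : ℝ × ℝ) := hUo.mem_nhds (hKU ⟨hy, ht⟩)
      have hpm : ContinuousAt (fun z : ℝ => ((z, t) : ℝ × ℝ)) y :=
        (continuous_id.prodMk continuous_const).continuousAt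
      exact ContinuousAt.comp (f := fun z : ℝ => ((z, t) : ℝ × ℝ)) (x := y) (hφcont.continuousAt hU') hpm
    have hnnφ : ∀ y ∈ Icc c d, 0 ≤ φ (y, t) := by
      intro y hy
      simp only [hφdef]
      positivity
    have hφz := WDN.zero_of_integral_zero hcd hcφ hnnφ (hEzero t ht) x hx
    simp only [hφdef] at hφz
    have h1 : (fderiv ℝ W (x, t) (0, 1)) ^ 2 = 0 := by
      nlinarith [sq_nonneg (a * fderiv ℝ W (x, t) (1, 0))]
    exact (pow_eq_zero_iff two_ne_zero).1 h1
  -- conclude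
  intro x hx t ht
  have hcont : ContinuousOn (fun s => W (x, s)) (Icc 0 t) := by
    intro s hs
    have hsT : s ∈ Icc (0:ℝ) T := ⟨hs.1, hs.2.trans ht.2⟩
    exact (WDN.slice2 hUo hW (hKU ⟨hx, hsT⟩)).continuousAt.continuousWithinAt
  have hder : ∀ s ∈ Ico (0:ℝ) t, HasDerivWithinAt (fun s' => W (x, s')) 0 (Ici s) s := by
    intro s hs
    have hsT : s ∈ Icc (0:ℝ) T := ⟨hs.1, hs.2.le.trans ht.2⟩
    have h := WDN.slice2 hUo hW (hKU ⟨hx, hsT⟩)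
    rw [hg2all s hsT x hx] at h
    exact h.hasDerivWithinAt
  have := constant_of_has_deriv_right_zero hcont hder t ⟨ht.1, le_rfl⟩
  rw [this]
  exact hinit x hx

/-- `p` is a classical solution of the 1-D wave equation with speed `a` on
`[c, d] × [T₀, T₁]`: it is twice continuously differentiable on an open
neighbourhood of the rectangle and satisfies
`∂²p/∂t² = a² ∂²p/∂x²` there. -/
def IsWaveSolution (a c d T₀ T₁ : ℝ) (p : ℝ → ℝ → ℝ) : Prop :=
  ∃ U : Set (ℝ × ℝ), IsOpen U ∧ (Set.Icc c d ×ˢ Set.Icc T₀ T₁) ⊆ U ∧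
    ContDiffOn ℝ 2 (fun q : ℝ × ℝ => p q.1 q.2) U ∧
    ∀ x ∈ Set.Icc c d, ∀ t ∈ Set.Icc T₀ T₁,
      deriv (deriv (fun s => p x s)) t = a ^ 2 * deriv (deriv (fun y => p y t)) x

/-- Uniqueness for the mixed Dirichlet–Neumann initial–boundary value problem
for the 1-D wave equation. -/
theorem wave_dirichlet_neumann_uniqueness
    (a c d T : ℝ) (ha : 0 < a) (hcd : c < d) (hT : 0 < T)
    (u v : ℝ → ℝ → ℝ)
    (hu : IsWaveSolution a c d 0 T u)
    (hv : IsWaveSolution a c d 0 T v)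
    (hinit : ∀ x ∈ Set.Icc c d, u x 0 = v x 0)
    (hinit' : ∀ x ∈ Set.Icc c d,
      deriv (fun s => u x s) 0 = deriv (fun s => v x s) 0)
    (hDir : ∀ t ∈ Set.Icc (0 : ℝ) T, u c t = v c t)
    (hNeu : ∀ t ∈ Set.Icc (0 : ℝ) T,
      deriv (fun y => u y t) d = deriv (fun y => v y t) d) :
    ∀ x ∈ Set.Icc c d, ∀ t ∈ Set.Icc (0 : ℝ) T, u x t = v x t := by
  obtain ⟨Uu, hUuo, hKUu, hFu, hwu⟩ := hu
  obtain ⟨Uv, hUvo, hKUv, hFv, hwv⟩ := hv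
  have hUo : IsOpen (Uu ∩ Uv) := hUuo.inter hUvo
  have hKU : (Icc c d ×ˢ Icc (0:ℝ) T) ⊆ Uu ∩ Uv := subset_inter hKUu hKUv
  have hW : ContDiffOn ℝ 2 (fun q : ℝ × ℝ => u q.1 q.2 - v q.1 q.2) (Uu ∩ Uv) :=
    (hFu.mono inter_subset_left).sub (hFv.mono inter_subset_right)
  -- differentiability of the pieces
  have hdu : ∀ q ∈ Uu ∩ Uv, DifferentiableAt ℝ (fun q : ℝ × ℝ => u q.1 q.2) q := fun q hq =>
    (hFu.contDiffAt (hUuo.mem_nhds hq.1)).differentiableAt two_ne_zero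
  have hdv : ∀ q ∈ Uu ∩ Uv, DifferentiableAt ℝ (fun q : ℝ × ℝ => v q.1 q.2) q := fun q hq =>
    (hFv.contDiffAt (hUvo.mem_nhds hq.2)).differentiableAt two_ne_zero
  have hdDu : ∀ q ∈ Uu ∩ Uv, DifferentiableAt ℝ (fderiv ℝ (fun q : ℝ × ℝ => u q.1 q.2)) q :=
    fun q hq => ((hFu.contDiffAt (hUuo.mem_nhds hq.1)).fderiv_right (m := 1)
      (by norm_num)).differentiableAt one_ne_zero
  have hdDv : ∀ q ∈ Uu ∩ Uv, DifferentiableAt ℝ (fderiv ℝ (fun q : ℝ × ℝ => v q.1 q.2)) q :=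
    fun q hq => ((hFv.contDiffAt (hUvo.mem_nhds hq.2)).fderiv_right (m := 1)
      (by norm_num)).differentiableAt one_ne_zero
  have hD1 : ∀ q ∈ Uu ∩ Uv, ∀ w₀ : ℝ × ℝ,
      fderiv ℝ (fun q : ℝ × ℝ => u q.1 q.2 - v q.1 q.2) q w₀
        = fderiv ℝ (fun q : ℝ × ℝ => u q.1 q.2) q w₀
          - fderiv ℝ (fun q : ℝ × ℝ => v q.1 q.2) q w₀ := by
    intro q hq w₀
    rw [fderiv_fun_sub (hdu q hq) (hdv q hq)]
    rfl
  have hD2 : ∀ q ∈ Uu ∩ Uv, ∀ v₀ w₀ : ℝ × ℝ,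
      fderiv ℝ (fderiv ℝ (fun q : ℝ × ℝ => u q.1 q.2 - v q.1 q.2)) q v₀ w₀
        = fderiv ℝ (fderiv ℝ (fun q : ℝ × ℝ => u q.1 q.2)) q v₀ w₀
          - fderiv ℝ (fderiv ℝ (fun q : ℝ × ℝ => v q.1 q.2)) q v₀ w₀ := by
    intro q hq v₀ w₀
    have heq : fderiv ℝ (fun q : ℝ × ℝ => u q.1 q.2 - v q.1 q.2) =ᶠ[𝓝 q]
        fun r => fderiv ℝ (fun q : ℝ × ℝ => u q.1 q.2) r
          - fderiv ℝ (fun q : ℝ × ℝ => v q.1 q.2) r := by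
      filter_upwards [hUo.mem_nhds hq] with r hr
      exact fderiv_fun_sub (hdu r hr) (hdv r hr)
    rw [heq.fderiv_eq, fderiv_fun_sub (hdDu q hq) (hdDv q hq)]
    rfl
  -- wave equation for the difference
  have hwave : ∀ q ∈ Icc c d ×ˢ Icc (0:ℝ) T,
      fderiv ℝ (fderiv ℝ (fun q : ℝ × ℝ => u q.1 q.2 - v q.1 q.2)) q (0, 1) (0, 1)
        = a ^ 2 * fderiv ℝ (fderiv ℝ (fun q : ℝ × ℝ => u q.1 q.2 - v q.1 q.2)) q (1, 0) (1, 0) := by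
    rintro ⟨x, t⟩ ⟨hx, ht⟩
    have hqU : ((x, t) : ℝ × ℝ) ∈ Uu ∩ Uv := hKU ⟨hx, ht⟩
    rw [hD2 (x, t) hqU, hD2 (x, t) hqU]
    rw [← WDN.curried_tt hUuo hFu (hKUu ⟨hx, ht⟩), ← WDN.curried_tt hUvo hFv (hKUv ⟨hx, ht⟩),
      ← WDN.curried_xx hUuo hFu (hKUu ⟨hx, ht⟩), ← WDN.curried_xx hUvo hFv (hKUv ⟨hx, ht⟩),
      hwu x hx t ht, hwv x hx t ht]
    ring
  -- initial and boundary conditions for the difference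
  have hinitW : ∀ x ∈ Icc c d, (fun q : ℝ × ℝ => u q.1 q.2 - v q.1 q.2) (x, 0) = 0 := by
    intro x hx
    simp only
    rw [hinit x hx]
    ring
  have hinitW' : ∀ x ∈ Icc c d,
      fderiv ℝ (fun q : ℝ × ℝ => u q.1 q.2 - v q.1 q.2) (x, 0) (0, 1) = 0 := by
    intro x hx
    have hqU : ((x, 0) : ℝ × ℝ) ∈ Uu ∩ Uv := hKU ⟨hx, ⟨le_rfl, hT.le⟩⟩
    rw [hD1 (x, 0) hqU]
    have h1 : HasDerivAt (fun s => u x s)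
        (fderiv ℝ (fun q : ℝ × ℝ => u q.1 q.2) (x, 0) (0, 1)) 0 := by
      simpa using WDN.slice2 hUuo hFu (hKUu ⟨hx, ⟨le_rfl, hT.le⟩⟩)
    have h2 : HasDerivAt (fun s => v x s)
        (fderiv ℝ (fun q : ℝ × ℝ => v q.1 q.2) (x, 0) (0, 1)) 0 := by
      simpa using WDN.slice2 hUvo hFv (hKUv ⟨hx, ⟨le_rfl, hT.le⟩⟩)
    rw [← h1.deriv, ← h2.deriv, hinit' x hx]
    ring
  have hDirW : ∀ t ∈ Icc (0:ℝ) T, (fun q : ℝ × ℝ => u q.1 q.2 - v q.1 q.2) (c, t) = 0 := by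
    intro t ht
    simp only
    rw [hDir t ht]
    ring
  have hNeuW : ∀ t ∈ Icc (0:ℝ) T,
      fderiv ℝ (fun q : ℝ × ℝ => u q.1 q.2 - v q.1 q.2) (d, t) (1, 0) = 0 := by
    intro t ht
    have hqU : ((d, t) : ℝ × ℝ) ∈ Uu ∩ Uv := hKU ⟨⟨hcd.le, le_rfl⟩, ht⟩
    rw [hD1 (d, t) hqU]
    have h1 : HasDerivAt (fun y => u y t)
        (fderiv ℝ (fun q : ℝ × ℝ => u q.1 q.2) (d, t) (1, 0)) d := by
      simpa using WDN.slice1 hUuo hFu (hKUu ⟨⟨hcd.le, le_rfl⟩, ht⟩)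
    have h2 : HasDerivAt (fun y => v y t)
        (fderiv ℝ (fun q : ℝ × ℝ => v q.1 q.2) (d, t) (1, 0)) d := by
      simpa using WDN.slice1 hUvo hFv (hKUv ⟨⟨hcd.le, le_rfl⟩, ht⟩)
    rw [← h1.deriv, ← h2.deriv, hNeu t ht]
    ring
  -- apply the core lemma
  intro x hx t ht
  have := WDN.core ha hcd hT hUo hKU hW hwave hinitW hinitW' hDirW hNeuW x hx t ht
  simp only at this
  linarith [this]
end

section
/- (Decomposition Theorem, N = 2.) Let a > 0, T > 0, and X_A = X_{1A} < X_{2A} < X_{1B} < X_{2B} = X_B, so that Ω₁ = [X_{1A}, X_{1B}] and Ω₂ = [X_{2A}, X_{2B}] overlap in [X_{2A}, X_{1B}] ≠ ∅. Let u be a classical solution of the 1-D wave equation with speed a on [X_A, X_B] × [0, T]. Suppose p₁ and p₂ are classical solutions of the 1-D wave equation with speed a on Ω₁ × [0, T] and Ω₂ × [0, T] respectively, satisfying: (i) pᵢ(x,0) = u(x,0) and ∂pᵢ/∂t(x,0) = ∂u/∂t(x,0) for all x in Ωᵢ (i = 1,2); (ii) the outer Dirichlet conditions p₁(X_{1A},t)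 = u(X_{1A},t) and p₂(X_{2B},t) = u(X_{2B},t) for all t ∈ [0, T]; and (iii) the Neumann transmission (flux matching) conditions ∂p₁/∂x(X_{1B},t) = ∂p₂/∂x(X_{1B},t) and ∂p₂/∂x(X_{2A},t) = ∂p₁/∂x(X_{2A},t) for all t ∈ [0, T]. Then p₁(x,t) = u(x,t) for all (x,t) ∈ Ω₁ × [0, T] and p₂(x,t) = u(x,t) for all (x,t) ∈ Ω₂ × [0, T]. -/
open Set Filter Topology

namespace WaveDecomp

noncomputable def pd (f : ℝ × ℝ → ℝ) (q : ℝ × ℝ) : ℝ × ℝ →L[ℝ] ℝ := fderiv ℝ f q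

noncomputable def pd2 (f : ℝ × ℝ → ℝ) (q : ℝ × ℝ) : ℝ × ℝ →L[ℝ] ℝ × ℝ →L[ℝ] ℝ :=
  fderiv ℝ (fun y => fderiv ℝ f y) q

variable {f : ℝ × ℝ → ℝ} {U : Set (ℝ × ℝ)} {q : ℝ × ℝ}

theorem hasFDerivAt_of_mem (hU : IsOpen U) (hf : ContDiffOn ℝ 2 f U) (hq : q ∈ U) :
    HasFDerivAt f (pd f q) q := by
  have h1 : DifferentiableOn ℝ f U := hf.differentiableOn (by norm_num)
  exact (h1.differentiableAt (hU.mem_nhds hq)).hasFDerivAt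

theorem hasFDerivAt_pd (hU : IsOpen U) (hf : ContDiffOn ℝ 2 f U) (hq : q ∈ U) :
    HasFDerivAt (pd f) (pd2 f q) q := by
  have h : ContDiffOn ℝ 1 (fun y => fderiv ℝ f y) U :=
    hf.fderiv_of_isOpen hU (by norm_num)
  exact ((h.differentiableOn one_ne_zero).differentiableAt (hU.mem_nhds hq)).hasFDerivAt

theorem pd2_symm (hU : IsOpen U) (hf : ContDiffOn ℝ 2 f U) (hq : q ∈ U) (v w : ℝ × ℝ) :
    pd2 f q v w = pd2 f q w v := by
  refine second_derivative_symmetric_of_eventually (f := f) ?_ (hasFDerivAt_pd hU hf hq) v w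
  filter_upwards [hU.mem_nhds hq] with y hy using hasFDerivAt_of_mem hU hf hy

theorem hasDerivAt_x (hU : IsOpen U) (hf : ContDiffOn ℝ 2 f U) {x t : ℝ} (hq : (x, t) ∈ U) :
    HasDerivAt (fun y => f (y, t)) (pd f (x, t) (1, 0)) x := by
  have hline : HasDerivAt (fun y : ℝ => (y, t)) ((1 : ℝ), (0 : ℝ)) x :=
    (hasDerivAt_id x).prodMk (hasDerivAt_const x t)
  exact (hasFDerivAt_of_mem hU hf hq).comp_hasDerivAt x hline

theorem hasDerivAt_t (hU : IsOpen U) (hf : ContDiffOn ℝ 2 f U) {x t : ℝ} (hq : (x, t) ∈ U) :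
    HasDerivAt (fun s => f (x, s)) (pd f (x, t) (0, 1)) t := by
  have hline : HasDerivAt (fun s : ℝ => (x, s)) ((0 : ℝ), (1 : ℝ)) t :=
    (hasDerivAt_const t x).prodMk (hasDerivAt_id t)
  exact (hasFDerivAt_of_mem hU hf hq).comp_hasDerivAt t hline

theorem hasDerivAt_pd_t (hU : IsOpen U) (hf : ContDiffOn ℝ 2 f U) {x t : ℝ}
    (hq : (x, t) ∈ U) (w : ℝ × ℝ) :
    HasDerivAt (fun s => pd f (x, s) w) (pd2 f (x, t) (0, 1) w) t := by
  have hline : HasDerivAt (fun s : ℝ => (x, s)) ((0 : ℝ), (1 : ℝ)) t :=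
    (hasDerivAt_const t x).prodMk (hasDerivAt_id t)
  have h1 := (hasFDerivAt_pd hU hf hq).comp_hasDerivAt t hline
  exact ((ContinuousLinearMap.apply ℝ ℝ w).hasFDerivAt.comp_hasDerivAt t h1 :)

theorem hasDerivAt_pd_x (hU : IsOpen U) (hf : ContDiffOn ℝ 2 f U) {x t : ℝ}
    (hq : (x, t) ∈ U) (w : ℝ × ℝ) :
    HasDerivAt (fun y => pd f (y, t) w) (pd2 f (x, t) (1, 0) w) x := by
  have hline : HasDerivAt (fun y : ℝ => (y, t)) ((1 : ℝ), (0 : ℝ)) x :=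
    (hasDerivAt_id x).prodMk (hasDerivAt_const x t)
  have h1 := (hasFDerivAt_pd hU hf hq).comp_hasDerivAt x hline
  exact ((ContinuousLinearMap.apply ℝ ℝ w).hasFDerivAt.comp_hasDerivAt x h1 :)

theorem deriv2_t (hU : IsOpen U) (hf : ContDiffOn ℝ 2 f U) {x t : ℝ} (hq : (x, t) ∈ U) :
    deriv (deriv (fun s => f (x, s))) t = pd2 f (x, t) (0, 1) (0, 1) := by
  have hev : ∀ᶠ s in 𝓝 t, (x, s) ∈ U := by
    have hc : Continuous fun s : ℝ => (x, s) := by continuity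
    exact hc.continuousAt.preimage_mem_nhds (hU.mem_nhds hq)
  have h1 : deriv (fun s => f (x, s)) =ᶠ[𝓝 t] fun s => pd f (x, s) (0, 1) := by
    filter_upwards [hev] with s hs using (hasDerivAt_t hU hf hs).deriv
  rw [h1.deriv_eq]
  exact (hasDerivAt_pd_t hU hf hq (0, 1)).deriv

theorem deriv2_x (hU : IsOpen U) (hf : ContDiffOn ℝ 2 f U) {x t : ℝ} (hq : (x, t) ∈ U) :
    deriv (deriv (fun y => f (y, t))) x = pd2 f (x, t) (1, 0) (1, 0) := by
  have hev : ∀ᶠ y in 𝓝 x, (y, t) ∈ U := by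
    have hc : Continuous fun y : ℝ => (y, t) := by continuity
    exact hc.continuousAt.preimage_mem_nhds (hU.mem_nhds hq)
  have h1 : deriv (fun y => f (y, t)) =ᶠ[𝓝 x] fun y => pd f (y, t) (1, 0) := by
    filter_upwards [hev] with y hy using (hasDerivAt_x hU hf hy).deriv
  rw [h1.deriv_eq]
  exact (hasDerivAt_pd_x hU hf hq (1, 0)).deriv

/-- transport of the invariant `pd f · (-σ,1)` along lines of direction `(σ,1)`. -/
theorem transport (hU : IsOpen U) (hf : ContDiffOn ℝ 2 f U) {R : Set (ℝ × ℝ)}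
    (hR : Convex ℝ R) (hRU : R ⊆ U) {a : ℝ}
    (hwave : ∀ q ∈ R, pd2 f q (0, 1) (0, 1) = a ^ 2 * pd2 f q (1, 0) (1, 0))
    {σ : ℝ} (hσ : σ ^ 2 = a ^ 2) {q₀ q₁ : ℝ × ℝ} (hq₀ : q₀ ∈ R) (hq₁ : q₁ ∈ R)
    {τ : ℝ} (hτ : 0 ≤ τ) (heq : q₁ = q₀ + τ • ((σ : ℝ), (1 : ℝ))) :
    pd f q₁ (-σ, 1) = pd f q₀ (-σ, 1) := by
  rcases eq_or_lt_of_le hτ with h | h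
  · rw [heq, ← h]; norm_num
  have hmem : ∀ s ∈ Icc (0:ℝ) τ, q₀ + s • ((σ:ℝ), (1:ℝ)) ∈ R := by
    intro s hs
    have h1 : q₀ + (s / τ) • (τ • ((σ:ℝ), (1:ℝ))) ∈ R := by
      refine hR.add_smul_mem hq₀ ?_ ?_
      · rw [← heq]; exact hq₁
      · exact ⟨div_nonneg hs.1 hτ, div_le_one_of_le₀ hs.2 hτ⟩
    rwa [smul_smul, div_mul_cancel₀ _ h.ne'] at h1
  set g : ℝ → ℝ := fun s => pd f (q₀ + s • ((σ:ℝ), (1:ℝ))) (-σ, 1) with hg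
  have key : ∀ s ∈ Icc (0:ℝ) τ, HasDerivAt g 0 s := by
    intro s hs
    have hmemU : q₀ + s • ((σ:ℝ), (1:ℝ)) ∈ U := hRU (hmem s hs)
    have hline : HasDerivAt (fun s : ℝ => q₀ + s • ((σ:ℝ), (1:ℝ))) ((σ:ℝ), (1:ℝ)) s := by
      simpa using ((hasDerivAt_id s).smul_const ((σ:ℝ), (1:ℝ))).const_add q₀
    have h1 := (hasFDerivAt_pd hU hf hmemU).comp_hasDerivAt s hline
    have h2 : HasDerivAt g (pd2 f (q₀ + s • ((σ:ℝ), (1:ℝ))) (σ, 1) (-σ, 1)) s :=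
      ((ContinuousLinearMap.apply ℝ ℝ ((-σ : ℝ), (1:ℝ))).hasFDerivAt.comp_hasDerivAt s h1 :)
    have h3 : pd2 f (q₀ + s • ((σ:ℝ), (1:ℝ))) (σ, 1) (-σ, 1) = 0 := by
      set q' := q₀ + s • ((σ:ℝ), (1:ℝ)) with hq'def
      have hq' : q' ∈ R := hmem s hs
      have e1 : ((σ:ℝ), (1:ℝ)) = σ • ((1:ℝ), (0:ℝ)) + ((0:ℝ), (1:ℝ)) := by
        simp [Prod.ext_iff]
      have e2 : ((-σ:ℝ), (1:ℝ)) = (-σ) • ((1:ℝ), (0:ℝ)) + ((0:ℝ), (1:ℝ)) := by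
        simp [Prod.ext_iff]
      rw [e1, e2]
      have hsymm := pd2_symm hU hf (hRU hq') ((1:ℝ), (0:ℝ)) ((0:ℝ), (1:ℝ))
      have hw := hwave q' hq'
      simp only [map_add, map_smul, ContinuousLinearMap.add_apply,
        ContinuousLinearMap.smul_apply, smul_eq_mul]
      linear_combination hw - ((pd2 f q') (1, 0)) (1, 0) * hσ + σ * hsymm
    rwa [h3] at h2
  have hcont : ContinuousOn g (Icc 0 τ) :=
    fun s hs => ((key s hs).continuousAt).continuousWithinAt
  obtain ⟨c, hc, hc'⟩ := exists_hasDerivAt_eq_slope g (fun _ => 0) h hcont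
    (fun s hs => key s ⟨le_of_lt hs.1, le_of_lt hs.2⟩)
  have h0 : (g τ - g 0) / (τ - 0) = 0 := hc'.symm
  rw [sub_zero] at h0
  have h0' : g τ - g 0 = 0 := (div_eq_zero_iff.mp h0).resolve_right h.ne'
  have hgg : g τ = g 0 := by linarith
  have e0 : q₀ + (0:ℝ) • ((σ:ℝ), (1:ℝ)) = q₀ := by simp
  have eτ : pd f q₁ (-σ, 1) = g τ := by rw [heq]
  rw [eτ, hgg, hg]
  simp


section Trace

variable {a c d T x t : ℝ}

theorem traceF_zero (hU : IsOpen U) (hf : ContDiffOn ℝ 2 f U)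
    (hRU : Icc c d ×ˢ Icc 0 T ⊆ U) (ha : 0 < a)
    (hwave : ∀ q ∈ Icc c d ×ˢ Icc 0 T,
      pd2 f q (0, 1) (0, 1) = a ^ 2 * pd2 f q (1, 0) (1, 0))
    (hx : x ∈ Icc c d) (ht : t ∈ Icc (0:ℝ) T) (h : a * t ≤ x - c) :
    pd f (x, t) (-a, 1) = pd f (x - a * t, 0) (-a, 1) := by
  refine transport hU hf ((convex_Icc c d).prod (convex_Icc 0 T)) hRU hwave rfl
    (q₀ := (x - a * t, 0)) ?_ ?_ ht.1 ?_
  · constructor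
    · constructor
      · simp only; linarith
      · simp only; nlinarith [ht.1, hx.2]
    · simp only; exact ⟨le_refl 0, le_trans ht.1 ht.2⟩
  · exact ⟨hx, ht⟩
  · simp [Prod.ext_iff]; ring

theorem traceF_bdry (hU : IsOpen U) (hf : ContDiffOn ℝ 2 f U)
    (hRU : Icc c d ×ˢ Icc 0 T ⊆ U) (ha : 0 < a)
    (hwave : ∀ q ∈ Icc c d ×ˢ Icc 0 T,
      pd2 f q (0, 1) (0, 1) = a ^ 2 * pd2 f q (1, 0) (1, 0))
    (hx : x ∈ Icc c d) (ht : t ∈ Icc (0:ℝ) T) (h : x - c ≤ a * t) :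
    pd f (x, t) (-a, 1) = pd f (c, t - (x - c) / a) (-a, 1) := by
  have hτ : 0 ≤ (x - c) / a := div_nonneg (by linarith [hx.1]) ha.le
  have ht' : 0 ≤ t - (x - c) / a := by
    have := (div_le_iff₀ ha).mpr (by linarith : x - c ≤ t * a)
    linarith
  refine transport hU hf ((convex_Icc c d).prod (convex_Icc 0 T)) hRU hwave rfl
    (q₀ := (c, t - (x - c) / a)) ?_ ?_ hτ ?_
  · exact ⟨⟨le_refl c, le_trans hx.1 hx.2⟩, ⟨ht', by linarith [ht.2]⟩⟩
  · exact ⟨hx, ht⟩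
  · simp [Prod.ext_iff]; rw [div_mul_cancel₀ _ ha.ne']; ring

theorem traceG_zero (hU : IsOpen U) (hf : ContDiffOn ℝ 2 f U)
    (hRU : Icc c d ×ˢ Icc 0 T ⊆ U) (ha : 0 < a)
    (hwave : ∀ q ∈ Icc c d ×ˢ Icc 0 T,
      pd2 f q (0, 1) (0, 1) = a ^ 2 * pd2 f q (1, 0) (1, 0))
    (hx : x ∈ Icc c d) (ht : t ∈ Icc (0:ℝ) T) (h : a * t ≤ d - x) :
    pd f (x, t) (a, 1) = pd f (x + a * t, 0) (a, 1) := by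
  have key := transport hU hf ((convex_Icc c d).prod (convex_Icc 0 T)) hRU hwave
    (σ := -a) (by ring) (q₀ := (x + a * t, 0)) (q₁ := (x, t)) ?_ ⟨hx, ht⟩ ht.1 ?_
  · simpa using key
  · constructor
    · constructor
      · simp only; nlinarith [ht.1, hx.1]
      · simp only; linarith
    · simp only; exact ⟨le_refl 0, le_trans ht.1 ht.2⟩
  · simp [Prod.ext_iff]; ring

theorem traceG_bdry (hU : IsOpen U) (hf : ContDiffOn ℝ 2 f U)
    (hRU : Icc c d ×ˢ Icc 0 T ⊆ U) (ha : 0 < a)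
    (hwave : ∀ q ∈ Icc c d ×ˢ Icc 0 T,
      pd2 f q (0, 1) (0, 1) = a ^ 2 * pd2 f q (1, 0) (1, 0))
    (hx : x ∈ Icc c d) (ht : t ∈ Icc (0:ℝ) T) (h : d - x ≤ a * t) :
    pd f (x, t) (a, 1) = pd f (d, t - (d - x) / a) (a, 1) := by
  have hτ : 0 ≤ (d - x) / a := div_nonneg (by linarith [hx.2]) ha.le
  have ht' : 0 ≤ t - (d - x) / a := by
    have := (div_le_iff₀ ha).mpr (by linarith : d - x ≤ t * a)
    linarith
  have key := transport hU hf ((convex_Icc c d).prod (convex_Icc 0 T)) hRU hwave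
    (σ := -a) (by ring) (q₀ := (d, t - (d - x) / a)) (q₁ := (x, t)) ?_ ⟨hx, ht⟩ hτ ?_
  · simpa using key
  · exact ⟨⟨le_trans hx.1 hx.2, le_refl d⟩, ⟨ht', by linarith [ht.2]⟩⟩
  · simp [Prod.ext_iff]; rw [div_mul_cancel₀ _ ha.ne']; ring

end Trace

/-- A linear map on `ℝ²` is determined by its values on the basis. -/
theorem clm_eq_of_basis {L M : ℝ × ℝ →L[ℝ] ℝ} (h1 : L (1, 0) = M (1, 0))
    (h2 : L (0, 1) = M (0, 1)) (w : ℝ × ℝ) : L w = M w := by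
  have hw : w = w.1 • ((1:ℝ), (0:ℝ)) + w.2 • ((0:ℝ), (1:ℝ)) := by simp [Prod.ext_iff]
  conv_lhs => rw [hw]
  conv_rhs => rw [hw]
  simp only [map_add, map_smul, h1, h2]

theorem clm_sum (L : ℝ × ℝ →L[ℝ] ℝ) (a : ℝ) :
    L (a, 1) + L (-a, 1) = 2 * L (0, 1) := by
  have : ((a:ℝ), (1:ℝ)) + ((-a : ℝ), (1:ℝ)) = (2:ℝ) • ((0:ℝ), (1:ℝ)) := by
    simp [Prod.ext_iff]; ring
  rw [← map_add, this, map_smul]; simp [smul_eq_mul]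

theorem clm_diff (L : ℝ × ℝ →L[ℝ] ℝ) (a : ℝ) :
    L (a, 1) - L (-a, 1) = (2 * a) * L (1, 0) := by
  have : ((a:ℝ), (1:ℝ)) - ((-a : ℝ), (1:ℝ)) = (2*a) • ((1:ℝ), (0:ℝ)) := by
    simp [Prod.ext_iff]; ring
  rw [← map_sub, this, map_smul]; simp [smul_eq_mul]

/-- One-dimensional: equal functions on a nondegenerate interval have equal derivs there. -/
theorem deriv_eq_of_eqOn {g h : ℝ → ℝ} {c d x : ℝ} (hcd : c < d) (hx : x ∈ Icc c d)
    (hg : DifferentiableAt ℝ g x) (hh : DifferentiableAt ℝ h x)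
    (heq : ∀ y ∈ Icc c d, g y = h y) : deriv g x = deriv h x := by
  have hu : UniqueDiffWithinAt ℝ (Icc c d) x := (uniqueDiffOn_Icc hcd) x hx
  have h1 : derivWithin g (Icc c d) x = derivWithin h (Icc c d) x :=
    derivWithin_congr heq (heq x hx)
  rwa [hg.derivWithin hu, hh.derivWithin hu] at h1

/-- From vanishing derivative on `[0,T]` and zero initial value, conclude zero value. -/
theorem val_eq_zero_of_deriv_zero {g : ℝ → ℝ} {T t : ℝ} (ht : t ∈ Icc (0:ℝ) T)
    (hg : ∀ s ∈ Icc (0:ℝ) T, HasDerivAt g 0 s) (h0 : g 0 = 0) : g t = 0 := by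
  rcases eq_or_lt_of_le ht.1 with h | h
  · rw [← h]; exact h0
  have hsub : Icc (0:ℝ) t ⊆ Icc 0 T := Icc_subset_Icc le_rfl ht.2
  have hcont : ContinuousOn g (Icc 0 t) :=
    fun s hs => ((hg s (hsub hs)).continuousAt).continuousWithinAt
  obtain ⟨c, hc, hc'⟩ := exists_hasDerivAt_eq_slope g (fun _ => 0) h hcont
    (fun s hs => hg s (hsub ⟨le_of_lt hs.1, le_of_lt hs.2⟩))
  have h1 : (g t - g 0) / (t - 0) = 0 := hc'.symm
  rw [sub_zero] at h1
  have := (div_eq_zero_iff.mp h1).resolve_right h.ne'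
  linarith

end WaveDecomp

open WaveDecomp Set

set_option maxHeartbeats 3000000 in
/-- Decomposition Theorem (N = 2): if the two overlapping sub-domain solutions
match the true solution's initial data and outer Dirichlet data, and their
fluxes match at the two input boundaries, then each equals the true solution. -/
theorem decomposition_theorem_two_subdomains
    (a T X_A X1A X2A X1B X2B X_B : ℝ)
    (ha : 0 < a) (hT : 0 < T)
    (hA : X_A = X1A) (h1 : X1A < X2A) (h2 : X2A < X1B) (h3 : X1B < X2B)
    (hB : X2B = X_B)
    (u p₁ p₂ : ℝ → ℝ → ℝ)
    (hu : IsWaveSolution a X_A X_B 0 T u)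
    (hp₁ : IsWaveSolution a X1A X1B 0 T p₁)
    (hp₂ : IsWaveSolution a X2A X2B 0 T p₂)
    (hinit₁ : ∀ x ∈ Set.Icc X1A X1B, p₁ x 0 = u x 0)
    (hinit₁' : ∀ x ∈ Set.Icc X1A X1B,
      deriv (fun s => p₁ x s) 0 = deriv (fun s => u x s) 0)
    (hinit₂ : ∀ x ∈ Set.Icc X2A X2B, p₂ x 0 = u x 0)
    (hinit₂' : ∀ x ∈ Set.Icc X2A X2B,
      deriv (fun s => p₂ x s) 0 = deriv (fun s => u x s) 0)
    (hDir₁ : ∀ t ∈ Set.Icc (0 : ℝ) T, p₁ X1A t = u X1A t)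
    (hDir₂ : ∀ t ∈ Set.Icc (0 : ℝ) T, p₂ X2B t = u X2B t)
    (hflux₁ : ∀ t ∈ Set.Icc (0 : ℝ) T,
      deriv (fun y => p₁ y t) X1B = deriv (fun y => p₂ y t) X1B)
    (hflux₂ : ∀ t ∈ Set.Icc (0 : ℝ) T,
      deriv (fun y => p₂ y t) X2A = deriv (fun y => p₁ y t) X2A) :
    (∀ x ∈ Set.Icc X1A X1B, ∀ t ∈ Set.Icc (0 : ℝ) T, p₁ x t = u x t) ∧
    (∀ x ∈ Set.Icc X2A X2B, ∀ t ∈ Set.Icc (0 : ℝ) T, p₂ x t = u x t) := by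
  rw [hA, ← hB] at hu
  obtain ⟨Uu, hUu, hsubu, hCu, hWu⟩ := hu
  obtain ⟨U1, hU1, hsub1, hC1, hW1⟩ := hp₁
  obtain ⟨U2, hU2, hsub2, hC2, hW2⟩ := hp₂
  set fu : ℝ × ℝ → ℝ := fun q => u q.1 q.2 with hfudef
  set f1 : ℝ × ℝ → ℝ := fun q => p₁ q.1 q.2 with hf1def
  set f2 : ℝ × ℝ → ℝ := fun q => p₂ q.1 q.2 with hf2def
  have h12 : X1A < X1B := h1.trans h2
  have h23 : X2A < X2B := h2.trans h3
  -- interval inclusions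
  have hI10 : Icc X2A X1B ⊆ Icc X1A X1B := Icc_subset_Icc h1.le le_rfl
  have hI20 : Icc X2A X1B ⊆ Icc X2A X2B := Icc_subset_Icc le_rfl h3.le
  have hIu1 : Icc X1A X1B ⊆ Icc X1A X2B := Icc_subset_Icc le_rfl h3.le
  have hIu2 : Icc X2A X2B ⊆ Icc X1A X2B := Icc_subset_Icc h1.le le_rfl
  -- wave equations in second-fderiv form
  have hwu : ∀ q ∈ Icc X1A X2B ×ˢ Icc (0:ℝ) T,
      pd2 fu q (0,1) (0,1) = a^2 * pd2 fu q (1,0) (1,0) := by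
    rintro ⟨x, t⟩ ⟨hx, ht⟩
    have hm : ((x,t) : ℝ × ℝ) ∈ Uu := hsubu ⟨hx, ht⟩
    have h := hWu x hx t ht
    have e1 : deriv (deriv (fun s => u x s)) t = pd2 fu (x,t) (0,1) (0,1) :=
      deriv2_t hUu hCu hm
    have e2 : deriv (deriv (fun y => u y t)) x = pd2 fu (x,t) (1,0) (1,0) :=
      deriv2_x hUu hCu hm
    rw [e1, e2] at h; exact h
  have hw1 : ∀ q ∈ Icc X1A X1B ×ˢ Icc (0:ℝ) T,
      pd2 f1 q (0,1) (0,1) = a^2 * pd2 f1 q (1,0) (1,0) := by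
    rintro ⟨x, t⟩ ⟨hx, ht⟩
    have hm : ((x,t) : ℝ × ℝ) ∈ U1 := hsub1 ⟨hx, ht⟩
    have h := hW1 x hx t ht
    have e1 : deriv (deriv (fun s => p₁ x s)) t = pd2 f1 (x,t) (0,1) (0,1) :=
      deriv2_t hU1 hC1 hm
    have e2 : deriv (deriv (fun y => p₁ y t)) x = pd2 f1 (x,t) (1,0) (1,0) :=
      deriv2_x hU1 hC1 hm
    rw [e1, e2] at h; exact h
  have hw2 : ∀ q ∈ Icc X2A X2B ×ˢ Icc (0:ℝ) T,
      pd2 f2 q (0,1) (0,1) = a^2 * pd2 f2 q (1,0) (1,0) := by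
    rintro ⟨x, t⟩ ⟨hx, ht⟩
    have hm : ((x,t) : ℝ × ℝ) ∈ U2 := hsub2 ⟨hx, ht⟩
    have h := hW2 x hx t ht
    have e1 : deriv (deriv (fun s => p₂ x s)) t = pd2 f2 (x,t) (0,1) (0,1) :=
      deriv2_t hU2 hC2 hm
    have e2 : deriv (deriv (fun y => p₂ y t)) x = pd2 f2 (x,t) (1,0) (1,0) :=
      deriv2_x hU2 hC2 hm
    rw [e1, e2] at h; exact h
  -- memberships
  have m1 : ∀ {x t : ℝ}, x ∈ Icc X1A X1B → t ∈ Icc (0:ℝ) T → ((x,t) : ℝ × ℝ) ∈ U1 :=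
    fun hx ht => hsub1 ⟨hx, ht⟩
  have m2 : ∀ {x t : ℝ}, x ∈ Icc X2A X2B → t ∈ Icc (0:ℝ) T → ((x,t) : ℝ × ℝ) ∈ U2 :=
    fun hx ht => hsub2 ⟨hx, ht⟩
  have mu : ∀ {x t : ℝ}, x ∈ Icc X1A X2B → t ∈ Icc (0:ℝ) T → ((x,t) : ℝ × ℝ) ∈ Uu :=
    fun hx ht => hsubu ⟨hx, ht⟩
  have ht0 : (0:ℝ) ∈ Icc (0:ℝ) T := ⟨le_rfl, hT.le⟩
  -- initial data: full first derivatives agree at t = 0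
  have hinitD₁ : ∀ x ∈ Icc X1A X1B, ∀ w, pd f1 (x,0) w = pd fu (x,0) w := by
    intro x hx w
    have hm1 : ((x,(0:ℝ)) : ℝ × ℝ) ∈ U1 := m1 hx ht0
    have hmu : ((x,(0:ℝ)) : ℝ × ℝ) ∈ Uu := mu (hIu1 hx) ht0
    refine clm_eq_of_basis ?_ ?_ w
    · have d1 := hasDerivAt_x hU1 hC1 hm1
      have du := hasDerivAt_x hUu hCu hmu
      have heq : deriv (fun y => p₁ y 0) x = deriv (fun y => u y 0) x :=
        deriv_eq_of_eqOn h12 hx d1.differentiableAt du.differentiableAt hinit₁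
      calc pd f1 (x,0) (1,0) = deriv (fun y => p₁ y 0) x := d1.deriv.symm
        _ = deriv (fun y => u y 0) x := heq
        _ = pd fu (x,0) (1,0) := du.deriv
    · have d1 := hasDerivAt_t hU1 hC1 hm1
      have du := hasDerivAt_t hUu hCu hmu
      calc pd f1 (x,0) (0,1) = deriv (fun s => p₁ x s) 0 := d1.deriv.symm
        _ = deriv (fun s => u x s) 0 := hinit₁' x hx
        _ = pd fu (x,0) (0,1) := du.deriv
  have hinitD₂ : ∀ x ∈ Icc X2A X2B, ∀ w, pd f2 (x,0) w = pd fu (x,0) w := by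
    intro x hx w
    have hm2 : ((x,(0:ℝ)) : ℝ × ℝ) ∈ U2 := m2 hx ht0
    have hmu : ((x,(0:ℝ)) : ℝ × ℝ) ∈ Uu := mu (hIu2 hx) ht0
    refine clm_eq_of_basis ?_ ?_ w
    · have d2 := hasDerivAt_x hU2 hC2 hm2
      have du := hasDerivAt_x hUu hCu hmu
      have heq : deriv (fun y => p₂ y 0) x = deriv (fun y => u y 0) x :=
        deriv_eq_of_eqOn h23 hx d2.differentiableAt du.differentiableAt hinit₂
      calc pd f2 (x,0) (1,0) = deriv (fun y => p₂ y 0) x := d2.deriv.symm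
        _ = deriv (fun y => u y 0) x := heq
        _ = pd fu (x,0) (1,0) := du.deriv
    · have d2 := hasDerivAt_t hU2 hC2 hm2
      have du := hasDerivAt_t hUu hCu hmu
      calc pd f2 (x,0) (0,1) = deriv (fun s => p₂ x s) 0 := d2.deriv.symm
        _ = deriv (fun s => u x s) 0 := hinit₂' x hx
        _ = pd fu (x,0) (0,1) := du.deriv
  -- Dirichlet boundaries: time derivatives agree
  have hDt₁ : ∀ t ∈ Icc (0:ℝ) T, pd f1 (X1A,t) (0,1) = pd fu (X1A,t) (0,1) := by
    intro t ht
    have d1 := hasDerivAt_t hU1 hC1 (m1 ⟨le_rfl, h12.le⟩ ht)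
    have du := hasDerivAt_t hUu hCu (mu ⟨le_rfl, (h12.trans h3).le⟩ ht)
    calc pd f1 (X1A,t) (0,1) = deriv (fun s => p₁ X1A s) t := d1.deriv.symm
      _ = deriv (fun s => u X1A s) t :=
        deriv_eq_of_eqOn hT ht d1.differentiableAt du.differentiableAt hDir₁
      _ = pd fu (X1A,t) (0,1) := du.deriv
  have hDt₂ : ∀ t ∈ Icc (0:ℝ) T, pd f2 (X2B,t) (0,1) = pd fu (X2B,t) (0,1) := by
    intro t ht
    have d2 := hasDerivAt_t hU2 hC2 (m2 ⟨h23.le, le_rfl⟩ ht)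
    have du := hasDerivAt_t hUu hCu (mu ⟨(h1.trans h23).le, le_rfl⟩ ht)
    calc pd f2 (X2B,t) (0,1) = deriv (fun s => p₂ X2B s) t := d2.deriv.symm
      _ = deriv (fun s => u X2B s) t :=
        deriv_eq_of_eqOn hT ht d2.differentiableAt du.differentiableAt hDir₂
      _ = pd fu (X2B,t) (0,1) := du.deriv
  -- flux matching: spatial derivatives agree at interface points
  have hFx₁ : ∀ t ∈ Icc (0:ℝ) T, pd f1 (X1B,t) (1,0) = pd f2 (X1B,t) (1,0) := by
    intro t ht
    have d1 := hasDerivAt_x hU1 hC1 (m1 ⟨h12.le, le_rfl⟩ ht)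
    have d2 := hasDerivAt_x hU2 hC2 (m2 ⟨h2.le, h3.le⟩ ht)
    calc pd f1 (X1B,t) (1,0) = deriv (fun y => p₁ y t) X1B := d1.deriv.symm
      _ = deriv (fun y => p₂ y t) X1B := hflux₁ t ht
      _ = pd f2 (X1B,t) (1,0) := d2.deriv
  have hFx₂ : ∀ t ∈ Icc (0:ℝ) T, pd f1 (X2A,t) (1,0) = pd f2 (X2A,t) (1,0) := by
    intro t ht
    have d1 := hasDerivAt_x hU1 hC1 (m1 ⟨h1.le, h2.le⟩ ht)
    have d2 := hasDerivAt_x hU2 hC2 (m2 ⟨le_rfl, h23.le⟩ ht)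
    calc pd f1 (X2A,t) (1,0) = deriv (fun y => p₁ y t) X2A := d1.deriv.symm
      _ = deriv (fun y => p₂ y t) X2A := (hflux₂ t ht).symm
      _ = pd f2 (X2A,t) (1,0) := d2.deriv
  -- overlap rectangle data
  have hsub10 : Icc X2A X1B ×ˢ Icc (0:ℝ) T ⊆ U1 :=
    (Set.prod_mono hI10 (subset_refl _)).trans hsub1
  have hsub20 : Icc X2A X1B ×ˢ Icc (0:ℝ) T ⊆ U2 :=
    (Set.prod_mono hI20 (subset_refl _)).trans hsub2
  have hw1R0 : ∀ q ∈ Icc X2A X1B ×ˢ Icc (0:ℝ) T,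
      pd2 f1 q (0,1) (0,1) = a^2 * pd2 f1 q (1,0) (1,0) :=
    fun q hq => hw1 q (Set.prod_mono hI10 (subset_refl _) hq)
  have hw2R0 : ∀ q ∈ Icc X2A X1B ×ˢ Icc (0:ℝ) T,
      pd2 f2 q (0,1) (0,1) = a^2 * pd2 f2 q (1,0) (1,0) :=
    fun q hq => hw2 q (Set.prod_mono hI20 (subset_refl _) hq)
  have hδ0pos : 0 < (X1B - X2A)/a := div_pos (by linarith) ha
  -- Step 1: the two sub-solutions have equal invariants on the overlap
  have step1 : ∀ n : ℕ,
      (∀ x ∈ Icc X2A X1B, ∀ t ∈ Icc (0:ℝ) T, t ≤ (n:ℝ) * ((X1B - X2A)/a) →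
        pd f1 (x,t) (-a,1) = pd f2 (x,t) (-a,1)) ∧
      (∀ x ∈ Icc X2A X1B, ∀ t ∈ Icc (0:ℝ) T, t ≤ (n:ℝ) * ((X1B - X2A)/a) →
        pd f1 (x,t) (a,1) = pd f2 (x,t) (a,1)) := by
    intro n
    induction n with
    | zero =>
      constructor <;> intro x hx t ht hle <;>
        [skip; skip] <;>
        · have ht0' : t = 0 := le_antisymm (by simpa using hle) ht.1
          subst ht0'
          exact (hinitD₁ x (hI10 hx) _).trans (hinitD₂ x (hI20 hx) _).symm
    | succ n ih =>
      have subG : ∀ t1 ∈ Icc (0:ℝ) T, t1 ≤ ((n:ℝ)+1) * ((X1B - X2A)/a) →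
          pd f1 (X2A,t1) (a,1) = pd f2 (X2A,t1) (a,1) := by
        intro t1 ht1 hle1
        by_cases hcase : a * t1 ≤ X1B - X2A
        · rw [traceG_zero hU1 hC1 hsub10 ha hw1R0 ⟨le_rfl, h2.le⟩ ht1 hcase,
              traceG_zero hU2 hC2 hsub20 ha hw2R0 ⟨le_rfl, h2.le⟩ ht1 hcase]
          have hx0 : X2A + a * t1 ∈ Icc X2A X1B :=
            ⟨by nlinarith [ht1.1], by linarith⟩
          exact (hinitD₁ _ (hI10 hx0) _).trans (hinitD₂ _ (hI20 hx0) _).symm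
        · push_neg at hcase
          rw [traceG_bdry hU1 hC1 hsub10 ha hw1R0 ⟨le_rfl, h2.le⟩ ht1 (by linarith),
              traceG_bdry hU2 hC2 hsub20 ha hw2R0 ⟨le_rfl, h2.le⟩ ht1 (by linarith)]
          have hdiv : (X1B - X2A)/a ≤ t1 := (div_le_iff₀ ha).mpr (by linarith)
          set t2 := t1 - (X1B - X2A)/a with ht2def
          have ht2 : t2 ∈ Icc (0:ℝ) T :=
            ⟨by rw [ht2def]; linarith, by rw [ht2def]; linarith [ht1.2, hδ0pos.le]⟩
          have hle2 : t2 ≤ (n:ℝ) * ((X1B - X2A)/a) := by rw [ht2def]; linarith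
          have hF := ih.1 X1B ⟨h2.le, le_rfl⟩ t2 ht2 hle2
          have hx1 := hFx₁ t2 ht2
          have c1 := clm_diff (pd f1 (X1B,t2)) a
          have c2 := clm_diff (pd f2 (X1B,t2)) a
          rw [hx1] at c1
          linarith [hF, c1, c2]
      have subF : ∀ t1 ∈ Icc (0:ℝ) T, t1 ≤ ((n:ℝ)+1) * ((X1B - X2A)/a) →
          pd f1 (X1B,t1) (-a,1) = pd f2 (X1B,t1) (-a,1) := by
        intro t1 ht1 hle1
        by_cases hcase : a * t1 ≤ X1B - X2A
        · rw [traceF_zero hU1 hC1 hsub10 ha hw1R0 ⟨h2.le, le_rfl⟩ ht1 (by linarith),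
              traceF_zero hU2 hC2 hsub20 ha hw2R0 ⟨h2.le, le_rfl⟩ ht1 (by linarith)]
          have hx0 : X1B - a * t1 ∈ Icc X2A X1B :=
            ⟨by linarith, by nlinarith [ht1.1]⟩
          exact (hinitD₁ _ (hI10 hx0) _).trans (hinitD₂ _ (hI20 hx0) _).symm
        · push_neg at hcase
          rw [traceF_bdry hU1 hC1 hsub10 ha hw1R0 ⟨h2.le, le_rfl⟩ ht1 (by linarith),
              traceF_bdry hU2 hC2 hsub20 ha hw2R0 ⟨h2.le, le_rfl⟩ ht1 (by linarith)]
          have hdiv : (X1B - X2A)/a ≤ t1 := (div_le_iff₀ ha).mpr (by linarith)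
          set t2 := t1 - (X1B - X2A)/a with ht2def
          have ht2 : t2 ∈ Icc (0:ℝ) T :=
            ⟨by rw [ht2def]; linarith, by rw [ht2def]; linarith [ht1.2, hδ0pos.le]⟩
          have hle2 : t2 ≤ (n:ℝ) * ((X1B - X2A)/a) := by rw [ht2def]; linarith
          have hG := ih.2 X2A ⟨le_rfl, h2.le⟩ t2 ht2 hle2
          have hx2 := hFx₂ t2 ht2
          have c1 := clm_diff (pd f1 (X2A,t2)) a
          have c2 := clm_diff (pd f2 (X2A,t2)) a
          rw [hx2] at c1
          linarith [hG, c1, c2]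
      have partA : ∀ x ∈ Icc X2A X1B, ∀ t ∈ Icc (0:ℝ) T,
          t ≤ ((n:ℝ)+1) * ((X1B - X2A)/a) →
          pd f1 (x,t) (-a,1) = pd f2 (x,t) (-a,1) := by
        intro x hx t ht hle
        by_cases hcase : a * t ≤ x - X2A
        · rw [traceF_zero hU1 hC1 hsub10 ha hw1R0 hx ht hcase,
              traceF_zero hU2 hC2 hsub20 ha hw2R0 hx ht hcase]
          have hx0 : x - a * t ∈ Icc X2A X1B :=
            ⟨by linarith, by nlinarith [ht.1, hx.2]⟩
          exact (hinitD₁ _ (hI10 hx0) _).trans (hinitD₂ _ (hI20 hx0) _).symm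
        · push_neg at hcase
          rw [traceF_bdry hU1 hC1 hsub10 ha hw1R0 hx ht hcase.le,
              traceF_bdry hU2 hC2 hsub20 ha hw2R0 hx ht hcase.le]
          have hdiv : (x - X2A)/a ≤ t := (div_le_iff₀ ha).mpr (by linarith)
          have hdiv0 : 0 ≤ (x - X2A)/a := div_nonneg (by linarith [hx.1]) ha.le
          set t1 := t - (x - X2A)/a with ht1def
          have ht1m : t1 ∈ Icc (0:ℝ) T :=
            ⟨by rw [ht1def]; linarith, by rw [ht1def]; linarith [ht.2]⟩
          have hle1 : t1 ≤ ((n:ℝ)+1) * ((X1B - X2A)/a) := by rw [ht1def]; linarith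
          have hGb := subG t1 ht1m hle1
          have hx2 := hFx₂ t1 ht1m
          have c1 := clm_diff (pd f1 (X2A,t1)) a
          have c2 := clm_diff (pd f2 (X2A,t1)) a
          rw [hx2] at c1
          linarith [hGb, c1, c2]
      have partB : ∀ x ∈ Icc X2A X1B, ∀ t ∈ Icc (0:ℝ) T,
          t ≤ ((n:ℝ)+1) * ((X1B - X2A)/a) →
          pd f1 (x,t) (a,1) = pd f2 (x,t) (a,1) := by
        intro x hx t ht hle
        by_cases hcase : a * t ≤ X1B - x
        · rw [traceG_zero hU1 hC1 hsub10 ha hw1R0 hx ht hcase,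
              traceG_zero hU2 hC2 hsub20 ha hw2R0 hx ht hcase]
          have hx0 : x + a * t ∈ Icc X2A X1B :=
            ⟨by nlinarith [ht.1, hx.1], by linarith⟩
          exact (hinitD₁ _ (hI10 hx0) _).trans (hinitD₂ _ (hI20 hx0) _).symm
        · push_neg at hcase
          rw [traceG_bdry hU1 hC1 hsub10 ha hw1R0 hx ht hcase.le,
              traceG_bdry hU2 hC2 hsub20 ha hw2R0 hx ht hcase.le]
          have hdiv : (X1B - x)/a ≤ t := (div_le_iff₀ ha).mpr (by linarith)
          have hdiv0 : 0 ≤ (X1B - x)/a := div_nonneg (by linarith [hx.2]) ha.le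
          set t1 := t - (X1B - x)/a with ht1def
          have ht1m : t1 ∈ Icc (0:ℝ) T :=
            ⟨by rw [ht1def]; linarith, by rw [ht1def]; linarith [ht.2]⟩
          have hle1 : t1 ≤ ((n:ℝ)+1) * ((X1B - X2A)/a) := by rw [ht1def]; linarith
          have hFb := subF t1 ht1m hle1
          have hx1 := hFx₁ t1 ht1m
          have c1 := clm_diff (pd f1 (X1B,t1)) a
          have c2 := clm_diff (pd f2 (X1B,t1)) a
          rw [hx1] at c1
          linarith [hFb, c1, c2]
      exact ⟨fun x hx t ht hle => partA x hx t ht (by push_cast at hle; linarith),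
             fun x hx t ht hle => partB x hx t ht (by push_cast at hle; linarith)⟩
  -- full first derivatives of the two sub-solutions agree on the overlap
  have hoverD : ∀ x ∈ Icc X2A X1B, ∀ t ∈ Icc (0:ℝ) T, ∀ w,
      pd f1 (x,t) w = pd f2 (x,t) w := by
    intro x hx t ht w
    obtain ⟨n, hn⟩ := exists_nat_ge (T / ((X1B - X2A)/a))
    have hTn : T ≤ (n:ℝ) * ((X1B - X2A)/a) := by
      rw [div_le_iff₀ hδ0pos] at hn; linarith
    have hF := (step1 n).1 x hx t ht (le_trans ht.2 hTn)
    have hG := (step1 n).2 x hx t ht (le_trans ht.2 hTn)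
    refine clm_eq_of_basis ?_ ?_ w
    · have c1 := clm_diff (pd f1 (x,t)) a
      have c2 := clm_diff (pd f2 (x,t)) a
      have h2a : (2*a : ℝ) ≠ 0 := by positivity
      apply mul_left_cancel₀ h2a
      linarith [c1, c2, hF, hG]
    · have c1 := clm_sum (pd f1 (x,t)) a
      have c2 := clm_sum (pd f2 (x,t)) a
      linarith [c1, c2, hF, hG]
  -- data for tracing u on the sub-rectangles
  have hsubu1 : Icc X1A X1B ×ˢ Icc (0:ℝ) T ⊆ Uu :=
    (Set.prod_mono hIu1 (subset_refl _)).trans hsubu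
  have hsubu2 : Icc X2A X2B ×ˢ Icc (0:ℝ) T ⊆ Uu :=
    (Set.prod_mono hIu2 (subset_refl _)).trans hsubu
  have hwu1 : ∀ q ∈ Icc X1A X1B ×ˢ Icc (0:ℝ) T,
      pd2 fu q (0,1) (0,1) = a^2 * pd2 fu q (1,0) (1,0) :=
    fun q hq => hwu q (Set.prod_mono hIu1 (subset_refl _) hq)
  have hwu2 : ∀ q ∈ Icc X2A X2B ×ˢ Icc (0:ℝ) T,
      pd2 fu q (0,1) (0,1) = a^2 * pd2 fu q (1,0) (1,0) :=
    fun q hq => hwu q (Set.prod_mono hIu2 (subset_refl _) hq)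
  set δ : ℝ := min (X2A - X1A) (X2B - X1B) / a with hδdef
  have hδpos : 0 < δ := by
    rw [hδdef]; exact div_pos (lt_min (by linarith) (by linarith)) ha
  have hδ1 : δ ≤ (X2A - X1A)/a := by
    rw [hδdef, div_le_div_iff_of_pos_right ha]; exact min_le_left _ _
  have hδ2 : δ ≤ (X2B - X1B)/a := by
    rw [hδdef, div_le_div_iff_of_pos_right ha]; exact min_le_right _ _
  have hδ3 : δ ≤ (X1B - X1A)/a := by
    rw [hδdef, div_le_div_iff_of_pos_right ha]
    exact le_trans (min_le_left _ _) (by linarith)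
  have hδ4 : δ ≤ (X2B - X2A)/a := by
    rw [hδdef, div_le_div_iff_of_pos_right ha]
    exact le_trans (min_le_right _ _) (by linarith)
  -- Step 3: invariants of the sub-solutions match those of u
  have step3 : ∀ n : ℕ,
      (∀ x ∈ Icc X1A X1B, ∀ t ∈ Icc (0:ℝ) T, t ≤ (n:ℝ) * δ →
        pd f1 (x,t) (-a,1) = pd fu (x,t) (-a,1)) ∧
      (∀ x ∈ Icc X1A X1B, ∀ t ∈ Icc (0:ℝ) T, t ≤ (n:ℝ) * δ →
        pd f1 (x,t) (a,1) = pd fu (x,t) (a,1)) ∧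
      (∀ x ∈ Icc X2A X2B, ∀ t ∈ Icc (0:ℝ) T, t ≤ (n:ℝ) * δ →
        pd f2 (x,t) (-a,1) = pd fu (x,t) (-a,1)) ∧
      (∀ x ∈ Icc X2A X2B, ∀ t ∈ Icc (0:ℝ) T, t ≤ (n:ℝ) * δ →
        pd f2 (x,t) (a,1) = pd fu (x,t) (a,1)) := by
    intro n
    induction n with
    | zero =>
      refine ⟨fun x hx t ht hle => ?_, fun x hx t ht hle => ?_,
              fun x hx t ht hle => ?_, fun x hx t ht hle => ?_⟩ <;>
        · have ht0' : t = 0 := le_antisymm (by simpa using hle) ht.1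
          subst ht0'
          first
          | exact hinitD₁ x hx _
          | exact hinitD₂ x hx _
    | succ n ih =>
      -- G₁ = Gu at the left boundary X1A
      have subB1 : ∀ t1 ∈ Icc (0:ℝ) T, t1 ≤ ((n:ℝ)+1) * δ →
          pd f1 (X1A,t1) (a,1) = pd fu (X1A,t1) (a,1) := by
        intro t1 ht1 hle1
        by_cases hcase : a * t1 ≤ X1B - X1A
        · rw [traceG_zero hU1 hC1 hsub1 ha hw1 ⟨le_rfl, h12.le⟩ ht1 hcase,
              traceG_zero hUu hCu hsubu1 ha hwu1 ⟨le_rfl, h12.le⟩ ht1 hcase]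
          exact hinitD₁ _ ⟨by nlinarith [ht1.1], by linarith⟩ _
        · push_neg at hcase
          rw [traceG_bdry hU1 hC1 hsub1 ha hw1 ⟨le_rfl, h12.le⟩ ht1 (by linarith),
              traceG_bdry hUu hCu hsubu1 ha hwu1 ⟨le_rfl, h12.le⟩ ht1 (by linarith)]
          have hdiv : (X1B - X1A)/a ≤ t1 := (div_le_iff₀ ha).mpr (by linarith)
          have hdiv0 : 0 ≤ (X1B - X1A)/a := div_nonneg (by linarith) ha.le
          set t2 := t1 - (X1B - X1A)/a with ht2def
          have ht2 : t2 ∈ Icc (0:ℝ) T :=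
            ⟨by rw [ht2def]; linarith, by rw [ht2def]; linarith [ht1.2]⟩
          have hle2 : t2 ≤ (n:ℝ) * δ := by rw [ht2def]; linarith [hδ3]
          calc pd f1 (X1B,t2) (a,1) = pd f2 (X1B,t2) (a,1) :=
                hoverD X1B ⟨h2.le, le_rfl⟩ t2 ht2 _
            _ = pd fu (X1B,t2) (a,1) := ih.2.2.2 X1B ⟨h2.le, h3.le⟩ t2 ht2 hle2
      -- G₂ = Gu at the interface X1B
      have subG2 : ∀ t1 ∈ Icc (0:ℝ) T, t1 ≤ ((n:ℝ)+1) * δ →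
          pd f2 (X1B,t1) (a,1) = pd fu (X1B,t1) (a,1) := by
        intro t1 ht1 hle1
        by_cases hcase : a * t1 ≤ X2B - X1B
        · rw [traceG_zero hU2 hC2 hsub2 ha hw2 ⟨h2.le, h3.le⟩ ht1 hcase,
              traceG_zero hUu hCu hsubu2 ha hwu2 ⟨h2.le, h3.le⟩ ht1 hcase]
          exact hinitD₂ _ ⟨by nlinarith [ht1.1], by linarith⟩ _
        · push_neg at hcase
          rw [traceG_bdry hU2 hC2 hsub2 ha hw2 ⟨h2.le, h3.le⟩ ht1 (by linarith),
              traceG_bdry hUu hCu hsubu2 ha hwu2 ⟨h2.le, h3.le⟩ ht1 (by linarith)]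
          have hdiv : (X2B - X1B)/a ≤ t1 := (div_le_iff₀ ha).mpr (by linarith)
          have hdiv0 : 0 ≤ (X2B - X1B)/a := div_nonneg (by linarith) ha.le
          set t2 := t1 - (X2B - X1B)/a with ht2def
          have ht2 : t2 ∈ Icc (0:ℝ) T :=
            ⟨by rw [ht2def]; linarith, by rw [ht2def]; linarith [ht1.2]⟩
          have hle2 : t2 ≤ (n:ℝ) * δ := by rw [ht2def]; linarith [hδ2]
          have hFw := ih.2.2.1 X2B ⟨h23.le, le_rfl⟩ t2 ht2 hle2
          have c2 := clm_sum (pd f2 (X2B,t2)) a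
          have cu := clm_sum (pd fu (X2B,t2)) a
          have hd := hDt₂ t2 ht2
          rw [hd] at c2
          linarith [hFw, c2, cu]
      -- F₁ = Fu at the interface X2A
      have subF1 : ∀ t1 ∈ Icc (0:ℝ) T, t1 ≤ ((n:ℝ)+1) * δ →
          pd f1 (X2A,t1) (-a,1) = pd fu (X2A,t1) (-a,1) := by
        intro t1 ht1 hle1
        by_cases hcase : a * t1 ≤ X2A - X1A
        · rw [traceF_zero hU1 hC1 hsub1 ha hw1 ⟨h1.le, h2.le⟩ ht1 hcase,
              traceF_zero hUu hCu hsubu1 ha hwu1 ⟨h1.le, h2.le⟩ ht1 hcase]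
          exact hinitD₁ _ ⟨by linarith, by nlinarith [ht1.1]⟩ _
        · push_neg at hcase
          rw [traceF_bdry hU1 hC1 hsub1 ha hw1 ⟨h1.le, h2.le⟩ ht1 (by linarith),
              traceF_bdry hUu hCu hsubu1 ha hwu1 ⟨h1.le, h2.le⟩ ht1 (by linarith)]
          have hdiv : (X2A - X1A)/a ≤ t1 := (div_le_iff₀ ha).mpr (by linarith)
          have hdiv0 : 0 ≤ (X2A - X1A)/a := div_nonneg (by linarith) ha.le
          set t2 := t1 - (X2A - X1A)/a with ht2def
          have ht2 : t2 ∈ Icc (0:ℝ) T :=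
            ⟨by rw [ht2def]; linarith, by rw [ht2def]; linarith [ht1.2]⟩
          have hle2 : t2 ≤ (n:ℝ) * δ := by rw [ht2def]; linarith [hδ1]
          have hG1 := ih.2.1 X1A ⟨le_rfl, h12.le⟩ t2 ht2 hle2
          have c1 := clm_sum (pd f1 (X1A,t2)) a
          have cu := clm_sum (pd fu (X1A,t2)) a
          have hd := hDt₁ t2 ht2
          rw [hd] at c1
          linarith [hG1, c1, cu]
      -- F₂ = Fu at the right boundary X2B
      have subF2 : ∀ t1 ∈ Icc (0:ℝ) T, t1 ≤ ((n:ℝ)+1) * δ →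
          pd f2 (X2B,t1) (-a,1) = pd fu (X2B,t1) (-a,1) := by
        intro t1 ht1 hle1
        by_cases hcase : a * t1 ≤ X2B - X2A
        · rw [traceF_zero hU2 hC2 hsub2 ha hw2 ⟨h23.le, le_rfl⟩ ht1 hcase,
              traceF_zero hUu hCu hsubu2 ha hwu2 ⟨h23.le, le_rfl⟩ ht1 hcase]
          exact hinitD₂ _ ⟨by linarith, by nlinarith [ht1.1]⟩ _
        · push_neg at hcase
          rw [traceF_bdry hU2 hC2 hsub2 ha hw2 ⟨h23.le, le_rfl⟩ ht1 (by linarith),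
              traceF_bdry hUu hCu hsubu2 ha hwu2 ⟨h23.le, le_rfl⟩ ht1 (by linarith)]
          have hdiv : (X2B - X2A)/a ≤ t1 := (div_le_iff₀ ha).mpr (by linarith)
          have hdiv0 : 0 ≤ (X2B - X2A)/a := div_nonneg (by linarith) ha.le
          set t2 := t1 - (X2B - X2A)/a with ht2def
          have ht2 : t2 ∈ Icc (0:ℝ) T :=
            ⟨by rw [ht2def]; linarith, by rw [ht2def]; linarith [ht1.2]⟩
          have hle2 : t2 ≤ (n:ℝ) * δ := by rw [ht2def]; linarith [hδ4]
          calc pd f2 (X2A,t2) (-a,1) = pd f1 (X2A,t2) (-a,1) :=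
                (hoverD X2A ⟨le_rfl, h2.le⟩ t2 ht2 _).symm
            _ = pd fu (X2A,t2) (-a,1) := ih.1 X2A ⟨h1.le, h2.le⟩ t2 ht2 hle2
      -- the four main claims
      have mainA1 : ∀ x ∈ Icc X1A X1B, ∀ t ∈ Icc (0:ℝ) T, t ≤ ((n:ℝ)+1) * δ →
          pd f1 (x,t) (-a,1) = pd fu (x,t) (-a,1) := by
        intro x hx t ht hle
        by_cases hcase : a * t ≤ x - X1A
        · rw [traceF_zero hU1 hC1 hsub1 ha hw1 hx ht hcase,
              traceF_zero hUu hCu hsubu1 ha hwu1 hx ht hcase]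
          exact hinitD₁ _ ⟨by linarith, by nlinarith [ht.1, hx.2]⟩ _
        · push_neg at hcase
          rw [traceF_bdry hU1 hC1 hsub1 ha hw1 hx ht hcase.le,
              traceF_bdry hUu hCu hsubu1 ha hwu1 hx ht hcase.le]
          have hdiv : (x - X1A)/a ≤ t := (div_le_iff₀ ha).mpr (by linarith)
          have hdiv0 : 0 ≤ (x - X1A)/a := div_nonneg (by linarith [hx.1]) ha.le
          set t1 := t - (x - X1A)/a with ht1def
          have ht1m : t1 ∈ Icc (0:ℝ) T :=
            ⟨by rw [ht1def]; linarith, by rw [ht1def]; linarith [ht.2]⟩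
          have hle1 : t1 ≤ ((n:ℝ)+1) * δ := by rw [ht1def]; linarith
          have hG1 := subB1 t1 ht1m hle1
          have c1 := clm_sum (pd f1 (X1A,t1)) a
          have cu := clm_sum (pd fu (X1A,t1)) a
          have hd := hDt₁ t1 ht1m
          rw [hd] at c1
          linarith [hG1, c1, cu]
      have mainB1 : ∀ x ∈ Icc X1A X1B, ∀ t ∈ Icc (0:ℝ) T, t ≤ ((n:ℝ)+1) * δ →
          pd f1 (x,t) (a,1) = pd fu (x,t) (a,1) := by
        intro x hx t ht hle
        by_cases hcase : a * t ≤ X1B - x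
        · rw [traceG_zero hU1 hC1 hsub1 ha hw1 hx ht hcase,
              traceG_zero hUu hCu hsubu1 ha hwu1 hx ht hcase]
          exact hinitD₁ _ ⟨by nlinarith [ht.1, hx.1], by linarith⟩ _
        · push_neg at hcase
          rw [traceG_bdry hU1 hC1 hsub1 ha hw1 hx ht hcase.le,
              traceG_bdry hUu hCu hsubu1 ha hwu1 hx ht hcase.le]
          have hdiv : (X1B - x)/a ≤ t := (div_le_iff₀ ha).mpr (by linarith)
          have hdiv0 : 0 ≤ (X1B - x)/a := div_nonneg (by linarith [hx.2]) ha.le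
          set t1 := t - (X1B - x)/a with ht1def
          have ht1m : t1 ∈ Icc (0:ℝ) T :=
            ⟨by rw [ht1def]; linarith, by rw [ht1def]; linarith [ht.2]⟩
          have hle1 : t1 ≤ ((n:ℝ)+1) * δ := by rw [ht1def]; linarith
          calc pd f1 (X1B,t1) (a,1) = pd f2 (X1B,t1) (a,1) :=
                hoverD X1B ⟨h2.le, le_rfl⟩ t1 ht1m _
            _ = pd fu (X1B,t1) (a,1) := subG2 t1 ht1m hle1
      have mainA2 : ∀ x ∈ Icc X2A X2B, ∀ t ∈ Icc (0:ℝ) T, t ≤ ((n:ℝ)+1) * δ →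
          pd f2 (x,t) (-a,1) = pd fu (x,t) (-a,1) := by
        intro x hx t ht hle
        by_cases hcase : a * t ≤ x - X2A
        · rw [traceF_zero hU2 hC2 hsub2 ha hw2 hx ht hcase,
              traceF_zero hUu hCu hsubu2 ha hwu2 hx ht hcase]
          exact hinitD₂ _ ⟨by linarith, by nlinarith [ht.1, hx.2]⟩ _
        · push_neg at hcase
          rw [traceF_bdry hU2 hC2 hsub2 ha hw2 hx ht hcase.le,
              traceF_bdry hUu hCu hsubu2 ha hwu2 hx ht hcase.le]
          have hdiv : (x - X2A)/a ≤ t := (div_le_iff₀ ha).mpr (by linarith)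
          have hdiv0 : 0 ≤ (x - X2A)/a := div_nonneg (by linarith [hx.1]) ha.le
          set t1 := t - (x - X2A)/a with ht1def
          have ht1m : t1 ∈ Icc (0:ℝ) T :=
            ⟨by rw [ht1def]; linarith, by rw [ht1def]; linarith [ht.2]⟩
          have hle1 : t1 ≤ ((n:ℝ)+1) * δ := by rw [ht1def]; linarith
          calc pd f2 (X2A,t1) (-a,1) = pd f1 (X2A,t1) (-a,1) :=
                (hoverD X2A ⟨le_rfl, h2.le⟩ t1 ht1m _).symm
            _ = pd fu (X2A,t1) (-a,1) := subF1 t1 ht1m hle1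
      have mainB2 : ∀ x ∈ Icc X2A X2B, ∀ t ∈ Icc (0:ℝ) T, t ≤ ((n:ℝ)+1) * δ →
          pd f2 (x,t) (a,1) = pd fu (x,t) (a,1) := by
        intro x hx t ht hle
        by_cases hcase : a * t ≤ X2B - x
        · rw [traceG_zero hU2 hC2 hsub2 ha hw2 hx ht hcase,
              traceG_zero hUu hCu hsubu2 ha hwu2 hx ht hcase]
          exact hinitD₂ _ ⟨by nlinarith [ht.1, hx.1], by linarith⟩ _
        · push_neg at hcase
          rw [traceG_bdry hU2 hC2 hsub2 ha hw2 hx ht hcase.le,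
              traceG_bdry hUu hCu hsubu2 ha hwu2 hx ht hcase.le]
          have hdiv : (X2B - x)/a ≤ t := (div_le_iff₀ ha).mpr (by linarith)
          have hdiv0 : 0 ≤ (X2B - x)/a := div_nonneg (by linarith [hx.2]) ha.le
          set t1 := t - (X2B - x)/a with ht1def
          have ht1m : t1 ∈ Icc (0:ℝ) T :=
            ⟨by rw [ht1def]; linarith, by rw [ht1def]; linarith [ht.2]⟩
          have hle1 : t1 ≤ ((n:ℝ)+1) * δ := by rw [ht1def]; linarith
          have hFw := subF2 t1 ht1m hle1
          have c2 := clm_sum (pd f2 (X2B,t1)) a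
          have cu := clm_sum (pd fu (X2B,t1)) a
          have hd := hDt₂ t1 ht1m
          rw [hd] at c2
          linarith [hFw, c2, cu]
      exact ⟨fun x hx t ht hle => mainA1 x hx t ht (by push_cast at hle; linarith),
             fun x hx t ht hle => mainB1 x hx t ht (by push_cast at hle; linarith),
             fun x hx t ht hle => mainA2 x hx t ht (by push_cast at hle; linarith),
             fun x hx t ht hle => mainB2 x hx t ht (by push_cast at hle; linarith)⟩
  -- time derivatives of the sub-solutions equal those of u everywhere
  obtain ⟨N, hN⟩ := exists_nat_ge (T / δ)
  have hTN : T ≤ (N:ℝ) * δ := by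
    rw [div_le_iff₀ hδpos] at hN; linarith
  have hfin1 : ∀ x ∈ Icc X1A X1B, ∀ t ∈ Icc (0:ℝ) T,
      pd f1 (x,t) (0,1) = pd fu (x,t) (0,1) := by
    intro x hx t ht
    have hF := (step3 N).1 x hx t ht (le_trans ht.2 hTN)
    have hG := (step3 N).2.1 x hx t ht (le_trans ht.2 hTN)
    have c1 := clm_sum (pd f1 (x,t)) a
    have cu := clm_sum (pd fu (x,t)) a
    linarith [c1, cu, hF, hG]
  have hfin2 : ∀ x ∈ Icc X2A X2B, ∀ t ∈ Icc (0:ℝ) T,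
      pd f2 (x,t) (0,1) = pd fu (x,t) (0,1) := by
    intro x hx t ht
    have hF := (step3 N).2.2.1 x hx t ht (le_trans ht.2 hTN)
    have hG := (step3 N).2.2.2 x hx t ht (le_trans ht.2 hTN)
    have c2 := clm_sum (pd f2 (x,t)) a
    have cu := clm_sum (pd fu (x,t)) a
    linarith [c2, cu, hF, hG]
  constructor
  · intro x hx t ht
    have h0 : p₁ x 0 - u x 0 = 0 := by rw [hinit₁ x hx]; ring
    have key : ∀ s ∈ Icc (0:ℝ) T, HasDerivAt (fun s => p₁ x s - u x s) 0 s := by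
      intro s hs
      have d1 := hasDerivAt_t hU1 hC1 (m1 hx hs)
      have du := hasDerivAt_t hUu hCu (mu (hIu1 hx) hs)
      have hsub := d1.sub du
      rwa [hfin1 x hx s hs, sub_self] at hsub
    have hval : p₁ x t - u x t = 0 :=
      val_eq_zero_of_deriv_zero (g := fun s => p₁ x s - u x s) ht key h0
    linarith
  · intro x hx t ht
    have h0 : p₂ x 0 - u x 0 = 0 := by rw [hinit₂ x hx]; ring
    have key : ∀ s ∈ Icc (0:ℝ) T, HasDerivAt (fun s => p₂ x s - u x s) 0 s := by
      intro s hs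
      have d2 := hasDerivAt_t hU2 hC2 (m2 hx hs)
      have du := hasDerivAt_t hUu hCu (mu (hIu2 hx) hs)
      have hsub := d2.sub du
      rwa [hfin2 x hx s hs, sub_self] at hsub
    have hval : p₂ x t - u x t = 0 :=
      val_eq_zero_of_deriv_zero (g := fun s => p₂ x s - u x s) ht key h0
    linarith
end

section
/- (Prediction Validation Theorem, left sub-domain.) Let a > 0, T_s ∈ ℝ, τ > 0, and X_A = X_{1A} < X_{2A} < X_{1B} < X_{2B} = X_B. Let u be a classical solution of the 1-D wave equation with speed a on [X_A, X_B] × [T_s, T_s + τ]. Let p̂₁ be a classical solution of the 1-D wave equation with speed a on [X_{1A}, X_{1B}] × [T_s, T_s + τ] satisfying the predictive problem: p̂₁(x, T_s) = u(x, T_s) and ∂p̂₁/∂t(x, T_s) = ∂u/∂t(x, T_s) for all x ∈ [X_{1A}, X_{1B}]; p̂₁(X_{1A}, t) = u(X_{1A}, t) for all t ∈ [T_s, T_s + τ]; and the zero-flux prediction ∂p̂₁/∂x(X_{1B}, t) = 0 for all t ∈ [T_s, T_s + τ]. Then p̂₁(x,t) = u(x,t) for every (x,t) with x ∈ [X_{1A},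 X_{1B}], t ∈ [T_s, T_s + τ] and a·(t − T_s) ≤ X_{1B} − x; in particular, at the output boundary x = X_{2A} one has p̂₁(X_{2A}, t) = u(X_{2A}, t) and ∂p̂₁/∂x(X_{2A}, t) = ∂u/∂x(X_{2A}, t) for all t ∈ [T_s, T_s + τ] with a·(t − T_s) ≤ X_{1B} − X_{2A}. -/
section PVLHelpers

open Set Filter Topology

namespace PVL

variable {F : ℝ × ℝ → ℝ} {U : Set (ℝ × ℝ)}

lemma diffAt (hU : IsOpen U) (hF : ContDiffOn ℝ 2 F U) {q : ℝ × ℝ} (hq : q ∈ U) :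
    DifferentiableAt ℝ F q :=
  (hF.contDiffAt (hU.mem_nhds hq)).differentiableAt (by norm_num)

lemma hasFDerivAt_fderiv (hU : IsOpen U) (hF : ContDiffOn ℝ 2 F U) {q : ℝ × ℝ} (hq : q ∈ U) :
    HasFDerivAt (fderiv ℝ F) (fderiv ℝ (fderiv ℝ F) q) q := by
  have h := (hF.contDiffAt (hU.mem_nhds hq)).fderiv_right (m := 1) (by norm_num)
  exact (h.differentiableAt (by norm_num)).hasFDerivAt

lemma symm2 (hU : IsOpen U) (hF : ContDiffOn ℝ 2 F U) {q : ℝ × ℝ} (hq : q ∈ U) (v w : ℝ × ℝ) :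
    fderiv ℝ (fderiv ℝ F) q v w = fderiv ℝ (fderiv ℝ F) q w v :=
  ((hF.contDiffAt (hU.mem_nhds hq)).isSymmSndFDerivAt (by norm_num)) v w

lemma hasDerivAt_comp_line (hU : IsOpen U) (hF : ContDiffOn ℝ 2 F U)
    {c : ℝ → ℝ × ℝ} {v : ℝ × ℝ} {s : ℝ} (hc : HasDerivAt c v s) (hq : c s ∈ U) :
    HasDerivAt (fun r => F (c r)) (fderiv ℝ F (c s) v) s := by
  exact (diffAt hU hF hq).hasFDerivAt.comp_hasDerivAt s hc

lemma hasDerivAt_fderiv_comp (hU : IsOpen U) (hF : ContDiffOn ℝ 2 F U)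
    {c : ℝ → ℝ × ℝ} {v : ℝ × ℝ} {s : ℝ} (hc : HasDerivAt c v s) (hq : c s ∈ U) (w : ℝ × ℝ) :
    HasDerivAt (fun r => fderiv ℝ F (c r) w) (fderiv ℝ (fderiv ℝ F) (c s) v w) s := by
  have h1 : HasFDerivAt (fun q => fderiv ℝ F q w)
      ((ContinuousLinearMap.apply ℝ ℝ w).comp (fderiv ℝ (fderiv ℝ F) (c s))) (c s) :=
    (ContinuousLinearMap.apply ℝ ℝ w).hasFDerivAt.comp _ (hasFDerivAt_fderiv hU hF hq)
  exact h1.comp_hasDerivAt s hc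

lemma slice_t (hU : IsOpen U) (hF : ContDiffOn ℝ 2 F U) {x t : ℝ} (hq : (x, t) ∈ U) :
    HasDerivAt (fun s => F (x, s)) (fderiv ℝ F (x, t) (0, 1)) t :=
  hasDerivAt_comp_line hU hF ((hasDerivAt_const t x).prodMk (hasDerivAt_id t)) hq

lemma slice_x (hU : IsOpen U) (hF : ContDiffOn ℝ 2 F U) {x t : ℝ} (hq : (x, t) ∈ U) :
    HasDerivAt (fun y => F (y, t)) (fderiv ℝ F (x, t) (1, 0)) x :=
  hasDerivAt_comp_line hU hF ((hasDerivAt_id x).prodMk (hasDerivAt_const x t)) hq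

lemma deriv2_slice_t (hU : IsOpen U) (hF : ContDiffOn ℝ 2 F U) {x t : ℝ} (hq : (x, t) ∈ U) :
    deriv (deriv (fun s => F (x, s))) t = fderiv ℝ (fderiv ℝ F) (x, t) (0, 1) (0, 1) := by
  have hmem : ∀ᶠ s in 𝓝 t, (x, s) ∈ U :=
    (continuous_const.prodMk continuous_id).continuousAt (hU.mem_nhds hq)
  have hev : deriv (fun s => F (x, s)) =ᶠ[𝓝 t] fun s => fderiv ℝ F (x, s) (0, 1) := by
    filter_upwards [hmem] with s hs
    exact (slice_t hU hF hs).deriv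
  rw [hev.deriv_eq]
  exact (hasDerivAt_fderiv_comp hU hF ((hasDerivAt_const t x).prodMk (hasDerivAt_id t)) hq
    (0, 1)).deriv

lemma deriv2_slice_x (hU : IsOpen U) (hF : ContDiffOn ℝ 2 F U) {x t : ℝ} (hq : (x, t) ∈ U) :
    deriv (deriv (fun y => F (y, t))) x = fderiv ℝ (fderiv ℝ F) (x, t) (1, 0) (1, 0) := by
  have hmem : ∀ᶠ y in 𝓝 x, (y, t) ∈ U :=
    (continuous_id.prodMk continuous_const).continuousAt (hU.mem_nhds hq)
  have hev : deriv (fun y => F (y, t)) =ᶠ[𝓝 x] fun y => fderiv ℝ F (y, t) (1, 0) := by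
    filter_upwards [hmem] with y hy
    exact (slice_x hU hF hy).deriv
  rw [hev.deriv_eq]
  exact (hasDerivAt_fderiv_comp hU hF ((hasDerivAt_id x).prodMk (hasDerivAt_const x t)) hq
    (1, 0)).deriv


lemma char_const {a ε : ℝ} (hε : ε * ε = 1) (hU : IsOpen U) (hF : ContDiffOn ℝ 2 F U)
    {x₀ t₀ t₁ : ℝ} (ht : t₀ ≤ t₁)
    (hpath : ∀ s ∈ Icc t₀ t₁, (x₀ + ε * a * (s - t₀), s) ∈ U)
    (hwave : ∀ s ∈ Icc t₀ t₁,
      fderiv ℝ (fderiv ℝ F) (x₀ + ε * a * (s - t₀), s) (0, 1) (0, 1)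
        = a ^ 2 * fderiv ℝ (fderiv ℝ F) (x₀ + ε * a * (s - t₀), s) (1, 0) (1, 0)) :
    fderiv ℝ F (x₀ + ε * a * (t₁ - t₀), t₁) (0, 1)
        - ε * a * fderiv ℝ F (x₀ + ε * a * (t₁ - t₀), t₁) (1, 0)
      = fderiv ℝ F (x₀, t₀) (0, 1) - ε * a * fderiv ℝ F (x₀, t₀) (1, 0) := by
  set g : ℝ → ℝ := fun s => fderiv ℝ F (x₀ + ε * a * (s - t₀), s) (0, 1)
      - ε * a * fderiv ℝ F (x₀ + ε * a * (s - t₀), s) (1, 0) with hg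
  have key : ∀ s ∈ Icc t₀ t₁, HasDerivAt g 0 s := by
    intro s hs
    have hc : HasDerivAt (fun s : ℝ => ((x₀ + ε * a * (s - t₀), s) : ℝ × ℝ)) (ε * a, 1) s := by
      have hx : HasDerivAt (fun s : ℝ => x₀ + ε * a * (s - t₀)) (ε * a) s := by
        simpa using (((hasDerivAt_id s).sub_const t₀).const_mul (ε * a)).const_add x₀
      exact hx.prodMk (hasDerivAt_id s)
    have h1 := hasDerivAt_fderiv_comp hU hF hc (hpath s hs) ((0 : ℝ), (1 : ℝ))
    have h2 := hasDerivAt_fderiv_comp hU hF hc (hpath s hs) ((1 : ℝ), (0 : ℝ))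
    have h3 := h1.sub (h2.const_mul (ε * a))
    have hval : fderiv ℝ (fderiv ℝ F) (x₀ + ε * a * (s - t₀), s) (ε * a, 1) (0, 1)
        - ε * a * fderiv ℝ (fderiv ℝ F) (x₀ + ε * a * (s - t₀), s) (ε * a, 1) (1, 0) = 0 := by
      set A := fderiv ℝ (fderiv ℝ F) (x₀ + ε * a * (s - t₀), s) with hA
      have hsym := symm2 hU hF (hpath s hs) ((1 : ℝ), (0 : ℝ)) ((0 : ℝ), (1 : ℝ))
      have hw := hwave s hs
      have hexp : ((ε * a, 1) : ℝ × ℝ) = (ε * a) • ((1 : ℝ), (0 : ℝ)) + ((0 : ℝ), (1 : ℝ)) := by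
        simp [Prod.ext_iff]
      rw [hexp, A.map_add, A.map_smul]
      simp only [ContinuousLinearMap.add_apply, ContinuousLinearMap.coe_smul',
        Pi.smul_apply, smul_eq_mul]
      rw [← hA] at hw hsym
      rw [hw, hsym]
      linear_combination (-(a ^ 2 * ((A (1, 0)) (1, 0)))) * hε
    rw [hval] at h3
    exact h3
  have hcont : ContinuousOn g (Icc t₀ t₁) := fun s hs => (key s hs).continuousAt.continuousWithinAt
  have hconst := constant_of_has_deriv_right_zero hcont
    (fun s hs => (key s (Ico_subset_Icc_self hs)).hasDerivWithinAt)
  have h := hconst t₁ (right_mem_Icc.2 ht)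
  simpa [hg] using h


lemma core {a : ℝ} (ha : 0 < a) {Ts Te XA XB : ℝ} (hX : XA < XB) (hT : Ts < Te)
    {W : ℝ × ℝ → ℝ} {U : Set (ℝ × ℝ)} (hU : IsOpen U)
    (hUK : Icc XA XB ×ˢ Icc Ts Te ⊆ U)
    (hW : ContDiffOn ℝ 2 W U)
    (hwave : ∀ q ∈ Icc XA XB ×ˢ Icc Ts Te,
      fderiv ℝ (fderiv ℝ W) q (0, 1) (0, 1) = a ^ 2 * fderiv ℝ (fderiv ℝ W) q (1, 0) (1, 0))
    (h0 : ∀ x ∈ Icc XA XB, W (x, Ts) = 0)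
    (h0' : ∀ x ∈ Icc XA XB, fderiv ℝ W (x, Ts) (0, 1) = 0)
    (hbd : ∀ t ∈ Icc Ts Te, W (XA, t) = 0) :
    ∀ x ∈ Icc XA XB, ∀ t ∈ Icc Ts Te, a * (t - Ts) ≤ XB - x → W (x, t) = 0 := by
  have hTmem : Ts ∈ Icc Ts Te := left_mem_Icc.2 hT.le
  -- initial x-derivative vanishes
  have h0x : ∀ x ∈ Icc XA XB, fderiv ℝ W (x, Ts) (1, 0) = 0 := by
    intro x hx
    have hq : (x, Ts) ∈ U := hUK ⟨hx, hTmem⟩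
    have hd := slice_x hU hW hq
    have hdw : derivWithin (fun y => W (y, Ts)) (Icc XA XB) x = 0 := by
      rw [derivWithin_congr (fun y hy => h0 y hy) (h0 x hx)]
      exact congrFun (derivWithin_const (s := Icc XA XB) (c := (0:ℝ))) x
    rw [← hd.deriv, ← hd.differentiableAt.derivWithin (uniqueDiffOn_Icc hX x hx)]
    exact hdw
  -- boundary t-derivative vanishes
  have hbt : ∀ t ∈ Icc Ts Te, fderiv ℝ W (XA, t) (0, 1) = 0 := by
    intro t ht
    have hq : (XA, t) ∈ U := hUK ⟨left_mem_Icc.2 hX.le, ht⟩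
    have hd := slice_t hU hW hq
    have hdw : derivWithin (fun s => W (XA, s)) (Icc Ts Te) t = 0 := by
      rw [derivWithin_congr (fun s hs => hbd s hs) (hbd t ht)]
      exact congrFun (derivWithin_const (s := Icc Ts Te) (c := (0:ℝ))) t
    rw [← hd.deriv, ← hd.differentiableAt.derivWithin (uniqueDiffOn_Icc hT t ht)]
    exact hdw
  -- R = ∂t W + a ∂x W vanishes on the cone
  have hR : ∀ x ∈ Icc XA XB, ∀ t ∈ Icc Ts Te, a * (t - Ts) ≤ XB - x →
      fderiv ℝ W (x, t) (0, 1) + a * fderiv ℝ W (x, t) (1, 0) = 0 := by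
    intro x hx t ht hcone
    have hx0 : x + a * (t - Ts) ∈ Icc XA XB := by
      constructor
      · nlinarith [hx.1, ht.1, ha.le]
      · linarith [hcone]
    have hmemK : ∀ s ∈ Icc Ts t,
        ((x + a * (t - Ts)) + (-1) * a * (s - Ts), s) ∈ Icc XA XB ×ˢ Icc Ts Te := by
      intro s hs
      refine ⟨⟨?_, ?_⟩, ⟨hs.1, le_trans hs.2 ht.2⟩⟩
      · show XA ≤ x + a * (t - Ts) + -1 * a * (s - Ts)
        nlinarith [hx.1, hs.2, ha.le]
      · show x + a * (t - Ts) + -1 * a * (s - Ts) ≤ XB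
        nlinarith [hs.1, hcone, ha.le]
    have hc := char_const (a := a) (ε := -1) (by norm_num) hU hW ht.1
      (fun s hs => hUK (hmemK s hs)) (fun s hs => hwave _ (hmemK s hs))
    have hxx : x + a * (t - Ts) + (-1) * a * (t - Ts) = x := by ring
    rw [hxx] at hc
    rw [h0' _ hx0, h0x _ hx0] at hc
    linear_combination hc
  -- L = ∂t W - a ∂x W vanishes on the cone
  have hL : ∀ x ∈ Icc XA XB, ∀ t ∈ Icc Ts Te, a * (t - Ts) ≤ XB - x →
      fderiv ℝ W (x, t) (0, 1) - a * fderiv ℝ W (x, t) (1, 0) = 0 := by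
    intro x hx t ht hcone
    by_cases hcase : a * (t - Ts) ≤ x - XA
    · -- characteristic reaches the initial line
      have hx0 : x - a * (t - Ts) ∈ Icc XA XB := by
        constructor
        · linarith
        · nlinarith [hx.2, ht.1, ha.le]
      have hmemK : ∀ s ∈ Icc Ts t,
          ((x - a * (t - Ts)) + 1 * a * (s - Ts), s) ∈ Icc XA XB ×ˢ Icc Ts Te := by
        intro s hs
        refine ⟨⟨?_, ?_⟩, ⟨hs.1, le_trans hs.2 ht.2⟩⟩
        · show XA ≤ x - a * (t - Ts) + 1 * a * (s - Ts)
          nlinarith [hcase, hs.1, ha.le]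
        · show x - a * (t - Ts) + 1 * a * (s - Ts) ≤ XB
          nlinarith [hs.2, hx.2, ha.le]
      have hc := char_const (a := a) (ε := 1) (by norm_num) hU hW ht.1
        (fun s hs => hUK (hmemK s hs)) (fun s hs => hwave _ (hmemK s hs))
      have hxx : x - a * (t - Ts) + 1 * a * (t - Ts) = x := by ring
      rw [hxx] at hc
      rw [h0' _ hx0, h0x _ hx0] at hc
      linear_combination hc
    · -- characteristic reflects at the left boundary
      push_neg at hcase
      obtain ⟨t₁, ht₁def⟩ : ∃ t₁ : ℝ, t₁ = t - (x - XA) / a := ⟨_, rfl⟩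
      have hd : a * (t - t₁) = x - XA := by
        rw [ht₁def]
        field_simp
        ring
      have ht₁Ts : Ts ≤ t₁ := by
        by_contra h
        push_neg at h
        nlinarith [hd, hcase, ha]
      have ht₁t : t₁ ≤ t := by nlinarith [hd, hx.1, ha]
      have ht₁mem : t₁ ∈ Icc Ts Te := ⟨ht₁Ts, le_trans ht₁t ht.2⟩
      have hXAmem : XA ∈ Icc XA XB := left_mem_Icc.2 hX.le
      -- R vanishes at the reflection point
      have hRrefl : fderiv ℝ W (XA, t₁) (0, 1) + a * fderiv ℝ W (XA, t₁) (1, 0) = 0 :=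
        hR XA hXAmem t₁ ht₁mem (by nlinarith [hd, hcone, hx.1])
      have hDt : fderiv ℝ W (XA, t₁) (0, 1) = 0 := hbt t₁ ht₁mem
      have hDx : fderiv ℝ W (XA, t₁) (1, 0) = 0 := by
        have h5 : a * fderiv ℝ W (XA, t₁) (1, 0) = 0 := by linarith
        exact (mul_eq_zero.1 h5).resolve_left (ne_of_gt ha)
      -- transport L from the reflection point
      have hmemK : ∀ s ∈ Icc t₁ t, (XA + 1 * a * (s - t₁), s) ∈ Icc XA XB ×ˢ Icc Ts Te := by
        intro s hs
        refine ⟨⟨?_, ?_⟩, ⟨le_trans ht₁Ts hs.1, le_trans hs.2 ht.2⟩⟩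
        · show XA ≤ XA + 1 * a * (s - t₁)
          nlinarith [hs.1, ha.le]
        · show XA + 1 * a * (s - t₁) ≤ XB
          nlinarith [hs.2, hx.2, ha.le, hd]
      have hc := char_const (a := a) (ε := 1) (by norm_num) hU hW ht₁t
        (fun s hs => hUK (hmemK s hs)) (fun s hs => hwave _ (hmemK s hs))
      have hxx : XA + 1 * a * (t - t₁) = x := by linarith [hd]
      rw [hxx] at hc
      rw [hDt, hDx] at hc
      linear_combination hc
  -- time derivative vanishes on the cone
  have hDt0 : ∀ x ∈ Icc XA XB, ∀ t ∈ Icc Ts Te, a * (t - Ts) ≤ XB - x →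
      fderiv ℝ W (x, t) (0, 1) = 0 := by
    intro x hx t ht hcone
    have h₁ := hR x hx t ht hcone
    have h₂ := hL x hx t ht hcone
    linarith
  -- conclude by integrating in time
  intro x hx t ht hcone
  have key : ∀ s ∈ Icc Ts t, HasDerivAt (fun r => W (x, r)) 0 s := by
    intro s hs
    have hsmem : s ∈ Icc Ts Te := ⟨hs.1, le_trans hs.2 ht.2⟩
    have hscone : a * (s - Ts) ≤ XB - x := by nlinarith [hs.2, ha.le]
    have hd := slice_t hU hW (hUK ⟨hx, hsmem⟩)
    rwa [hDt0 x hx s hsmem hscone] at hd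
  have hcont : ContinuousOn (fun r => W (x, r)) (Icc Ts t) :=
    fun s hs => (key s hs).continuousAt.continuousWithinAt
  have hconst := constant_of_has_deriv_right_zero hcont
    (fun s hs => (key s (Ico_subset_Icc_self hs)).hasDerivWithinAt)
  have := hconst t (right_mem_Icc.2 ht.1)
  rw [this]
  exact h0 x hx


end PVL

end PVLHelpers

open Set Filter Topology PVL in
/-- Prediction Validation Theorem, left sub-domain: the zero-flux predictive
solution on Ω₁ agrees with the true solution wherever the backward light cone
does not reach the input boundary x = X₁B; in particular its value and output
flux at the output boundary x = X₂A agree with the true solution's for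
a·(t − Tₛ) ≤ X₁B − X₂A. -/
theorem prediction_validation_left
    (a T_s τ X_A X1A X2A X1B X2B X_B : ℝ)
    (ha : 0 < a) (hτ : 0 < τ)
    (hA : X_A = X1A) (h1 : X1A < X2A) (h2 : X2A < X1B) (h3 : X1B < X2B)
    (hB : X2B = X_B)
    (u phat₁ : ℝ → ℝ → ℝ)
    (hu : IsWaveSolution a X_A X_B T_s (T_s + τ) u)
    (hp : IsWaveSolution a X1A X1B T_s (T_s + τ) phat₁)
    (hinit : ∀ x ∈ Set.Icc X1A X1B, phat₁ x T_s = u x T_s)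
    (hinit' : ∀ x ∈ Set.Icc X1A X1B,
      deriv (fun s => phat₁ x s) T_s = deriv (fun s => u x s) T_s)
    (hDir : ∀ t ∈ Set.Icc T_s (T_s + τ), phat₁ X1A t = u X1A t)
    (hzero : ∀ t ∈ Set.Icc T_s (T_s + τ), deriv (fun y => phat₁ y t) X1B = 0) :
    (∀ x ∈ Set.Icc X1A X1B, ∀ t ∈ Set.Icc T_s (T_s + τ),
      a * (t - T_s) ≤ X1B - x → phat₁ x t = u x t) ∧
    (∀ t ∈ Set.Icc T_s (T_s + τ), a * (t - T_s) ≤ X1B - X2A →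
      phat₁ X2A t = u X2A t ∧
      deriv (fun y => phat₁ y t) X2A = deriv (fun y => u y t) X2A) := by
  obtain ⟨Uu, hUu, hUuK, huC, huW⟩ := hu
  obtain ⟨Up, hUp, hUpK, hpC, hpW⟩ := hp
  have hT : T_s < T_s + τ := by linarith
  have hIccSub : Icc X1A X1B ⊆ Icc X_A X_B := Icc_subset_Icc (le_of_eq hA) (by linarith)
  set U : Set (ℝ × ℝ) := Uu ∩ Up with hUdef
  have hUopen : IsOpen U := hUu.inter hUp
  have hKU : Icc X1A X1B ×ˢ Icc T_s (T_s + τ) ⊆ U := fun q hq =>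
    ⟨hUuK ⟨hIccSub hq.1, hq.2⟩, hUpK hq⟩
  have huC' : ContDiffOn ℝ 2 (fun q : ℝ × ℝ => u q.1 q.2) U := huC.mono inter_subset_left
  have hpC' : ContDiffOn ℝ 2 (fun q : ℝ × ℝ => phat₁ q.1 q.2) U := hpC.mono inter_subset_right
  set W : ℝ × ℝ → ℝ := fun q : ℝ × ℝ => phat₁ q.1 q.2 - u q.1 q.2 with hWdef
  have hWC : ContDiffOn ℝ 2 W U := hpC'.sub huC'
  -- second derivative of W is the difference of second derivatives
  have hsub2 : ∀ q ∈ U, ∀ v w : ℝ × ℝ,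
      fderiv ℝ (fderiv ℝ W) q v w
        = fderiv ℝ (fderiv ℝ (fun q : ℝ × ℝ => phat₁ q.1 q.2)) q v w
          - fderiv ℝ (fderiv ℝ (fun q : ℝ × ℝ => u q.1 q.2)) q v w := by
    intro q hq v w
    have hev : fderiv ℝ W =ᶠ[𝓝 q]
        fun z => fderiv ℝ (fun q : ℝ × ℝ => phat₁ q.1 q.2) z
          - fderiv ℝ (fun q : ℝ × ℝ => u q.1 q.2) z := by
      filter_upwards [hUopen.mem_nhds hq] with z hz
      exact fderiv_sub (diffAt hUopen hpC' hz) (diffAt hUopen huC' hz)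
    rw [hev.fderiv_eq, fderiv_fun_sub (hasFDerivAt_fderiv hUopen hpC' hq).differentiableAt
      (hasFDerivAt_fderiv hUopen huC' hq).differentiableAt]
    simp
  -- wave equation for W in second-fderiv form
  have hwaveW : ∀ q ∈ Icc X1A X1B ×ˢ Icc T_s (T_s + τ),
      fderiv ℝ (fderiv ℝ W) q (0, 1) (0, 1)
        = a ^ 2 * fderiv ℝ (fderiv ℝ W) q (1, 0) (1, 0) := by
    rintro ⟨x, t⟩ ⟨hx, ht⟩
    have hx' : x ∈ Icc X_A X_B := hIccSub hx
    have hqu : (x, t) ∈ Uu := hUuK ⟨hx', ht⟩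
    have hqp : (x, t) ∈ Up := hUpK ⟨hx, ht⟩
    have hqU : (x, t) ∈ U := ⟨hqu, hqp⟩
    have h2u : fderiv ℝ (fderiv ℝ (fun q : ℝ × ℝ => u q.1 q.2)) (x, t) (0, 1) (0, 1)
        = a ^ 2 * fderiv ℝ (fderiv ℝ (fun q : ℝ × ℝ => u q.1 q.2)) (x, t) (1, 0) (1, 0) := by
      rw [← deriv2_slice_t hUu huC hqu, ← deriv2_slice_x hUu huC hqu]
      exact huW x hx' t ht
    have h2p : fderiv ℝ (fderiv ℝ (fun q : ℝ × ℝ => phat₁ q.1 q.2)) (x, t) (0, 1) (0, 1)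
        = a ^ 2 * fderiv ℝ (fderiv ℝ (fun q : ℝ × ℝ => phat₁ q.1 q.2)) (x, t) (1, 0) (1, 0) := by
      rw [← deriv2_slice_t hUp hpC hqp, ← deriv2_slice_x hUp hpC hqp]
      exact hpW x hx t ht
    rw [hsub2 _ hqU, hsub2 _ hqU, h2u, h2p]
    ring
  -- initial and boundary conditions for W
  have h0 : ∀ x ∈ Icc X1A X1B, W (x, T_s) = 0 := by
    intro x hx
    show phat₁ x T_s - u x T_s = 0
    rw [hinit x hx]; ring
  have h0' : ∀ x ∈ Icc X1A X1B, fderiv ℝ W (x, T_s) (0, 1) = 0 := by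
    intro x hx
    have hqU : (x, T_s) ∈ U := hKU ⟨hx, left_mem_Icc.2 hT.le⟩
    have hdp : HasDerivAt (fun s => phat₁ x s)
        (fderiv ℝ (fun q : ℝ × ℝ => phat₁ q.1 q.2) (x, T_s) (0, 1)) T_s :=
      slice_t hUopen hpC' hqU
    have hdu : HasDerivAt (fun s => u x s)
        (fderiv ℝ (fun q : ℝ × ℝ => u q.1 q.2) (x, T_s) (0, 1)) T_s :=
      slice_t hUopen huC' hqU
    have hdw : HasDerivAt (fun s => W (x, s)) (fderiv ℝ W (x, T_s) (0, 1)) T_s :=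
      slice_t hUopen hWC hqU
    have hdw' : HasDerivAt (fun s => W (x, s))
        (fderiv ℝ (fun q : ℝ × ℝ => phat₁ q.1 q.2) (x, T_s) (0, 1)
          - fderiv ℝ (fun q : ℝ × ℝ => u q.1 q.2) (x, T_s) (0, 1)) T_s := hdp.sub hdu
    rw [hdw.unique hdw', ← hdp.deriv, ← hdu.deriv, hinit' x hx]
    ring
  have hbd : ∀ t ∈ Icc T_s (T_s + τ), W (X1A, t) = 0 := by
    intro t ht
    show phat₁ X1A t - u X1A t = 0
    rw [hDir t ht]; ring
  -- apply the uniqueness result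
  have hW0 := core ha (h1.trans h2) hT hUopen hKU hWC hwaveW h0 h0' hbd
  constructor
  · intro x hx t ht hc
    have h' : phat₁ x t - u x t = 0 := hW0 x hx t ht hc
    linarith
  · intro t ht hc
    have hX2A : X2A ∈ Icc X1A X1B := ⟨h1.le, h2.le⟩
    refine ⟨?_, ?_⟩
    · have h' : phat₁ X2A t - u X2A t = 0 := hW0 X2A hX2A t ht (by linarith)
      linarith
    · have hqU : (X2A, t) ∈ U := hKU ⟨hX2A, ht⟩
      have hdp : HasDerivAt (fun y => phat₁ y t)
          (fderiv ℝ (fun q : ℝ × ℝ => phat₁ q.1 q.2) (X2A, t) (1, 0)) X2A :=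
        slice_x hUopen hpC' hqU
      have hdu : HasDerivAt (fun y => u y t)
          (fderiv ℝ (fun q : ℝ × ℝ => u q.1 q.2) (X2A, t) (1, 0)) X2A :=
        slice_x hUopen huC' hqU
      have hdw : HasDerivAt (fun y => W (y, t)) (fderiv ℝ W (X2A, t) (1, 0)) X2A :=
        slice_x hUopen hWC hqU
      have hzero' : ∀ y ∈ Icc X1A X2A, W (y, t) = 0 := by
        intro y hy
        exact hW0 y ⟨hy.1, le_trans hy.2 h2.le⟩ t ht (by linarith [hy.2])
      have hX2Amem : X2A ∈ Icc X1A X2A := right_mem_Icc.2 h1.le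
      have hdwIn : derivWithin (fun y => W (y, t)) (Icc X1A X2A) X2A = 0 := by
        rw [derivWithin_congr hzero' (hzero' X2A hX2Amem)]
        exact congrFun (derivWithin_const (s := Icc X1A X2A) (c := (0:ℝ))) X2A
      have hWx : fderiv ℝ W (X2A, t) (1, 0) = 0 := by
        rw [← hdw.deriv, ← hdw.differentiableAt.derivWithin (uniqueDiffOn_Icc h1 X2A hX2Amem)]
        exact hdwIn
      have hdw' : HasDerivAt (fun y => W (y, t))
          (fderiv ℝ (fun q : ℝ × ℝ => phat₁ q.1 q.2) (X2A, t) (1, 0)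
            - fderiv ℝ (fun q : ℝ × ℝ => u q.1 q.2) (X2A, t) (1, 0)) X2A := hdp.sub hdu
      have hsplit := hdw.unique hdw'
      rw [hdp.deriv, hdu.deriv]
      linarith [hsplit, hWx]
end

section
/- (Prediction Validation Theorem, right sub-domain.) Let a > 0, T_s ∈ ℝ, τ > 0, and X_A = X_{1A} < X_{2A} < X_{1B} < X_{2B} = X_B. Let u be a classical solution of the 1-D wave equation with speed a on [X_A, X_B] × [T_s, T_s + τ]. Let p̂₂ be a classical solution of the 1-D wave equation with speed a on [X_{2A}, X_{2B}] × [T_s, T_s + τ] satisfying the predictive problem: p̂₂(x, T_s) = u(x, T_s) and ∂p̂₂/∂t(x, T_s) = ∂u/∂t(x, T_s) for all x ∈ [X_{2A}, X_{2B}]; p̂₂(X_{2B}, t) = u(X_{2B}, t) for all t ∈ [T_s, T_s + τ]; and the zero-flux prediction ∂p̂₂/∂x(X_{2A}, t) = 0 for all t ∈ [T_s, T_s + τ]. Then p̂₂(x,t) = u(x,t) for every (x,t) with x ∈ [X_{2A}, X_{2B}], t ∈ [T_s, T_s + τ] and a·(t − T_s) ≤ x − X_{2A}; in particular, at the output boundary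 x = X_{1B} one has p̂₂(X_{1B}, t) = u(X_{1B}, t) and ∂p̂₂/∂x(X_{1B}, t) = ∂u/∂x(X_{1B}, t) for all t ∈ [T_s, T_s + τ] with a·(t − T_s) ≤ X_{1B} − X_{2A}. -/
open Set Filter Topology

/-- A function with vanishing derivative on a closed interval is constant there. -/
lemma const_of_hasDerivAt_zero' {g : ℝ → ℝ} {s1 s2 : ℝ}
    (h : ∀ s ∈ Set.Icc s1 s2, HasDerivAt g 0 s) :
    ∀ s ∈ Set.Icc s1 s2, g s = g s1 :=
  constant_of_has_deriv_right_zero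
    (fun s hs => (h s hs).continuousAt.continuousWithinAt)
    (fun s hs => (h s (Set.mem_Icc_of_Ico hs)).hasDerivWithinAt)

/-- A function continuous on `[c,d]` that vanishes on `(c,d)` vanishes on `[c,d]`. -/
lemma zero_on_Icc_of_zero_on_Ioo {g : ℝ → ℝ} {c d : ℝ} (hcd : c < d)
    (hc : ∀ y ∈ Set.Icc c d, ContinuousAt g y)
    (h0 : ∀ y ∈ Set.Ioo c d, g y = 0) : ∀ y ∈ Set.Icc c d, g y = 0 := by
  intro y hy
  have hycl : y ∈ closure (Set.Ioo c d) := by rw [closure_Ioo hcd.ne]; exact hy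
  have hne : (𝓝[Set.Ioo c d] y).NeBot := mem_closure_iff_nhdsWithin_neBot.1 hycl
  have h1 : Tendsto g (𝓝[Set.Ioo c d] y) (𝓝 (g y)) :=
    ((hc y hy).continuousWithinAt).tendsto
  have h2 : Tendsto g (𝓝[Set.Ioo c d] y) (𝓝 0) := by
    apply Tendsto.congr' _ tendsto_const_nhds
    filter_upwards [eventually_mem_nhdsWithin] with z hz
    exact (h0 z hz).symm
  exact tendsto_nhds_unique h1 h2

lemma deriv_zero_of_eventually_zero {g : ℝ → ℝ} {x : ℝ} (h : ∀ᶠ y in 𝓝 x, g y = 0) :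
    deriv g x = 0 := by
  have he : g =ᶠ[𝓝 x] fun _ => (0 : ℝ) := h
  rw [he.deriv_eq, deriv_const]

section Lines

variable {E : Type*} [NormedAddCommGroup E] [NormedSpace ℝ E]
  {P : ℝ × ℝ → E} {U : Set (ℝ × ℝ)}

lemma lineT_hasDerivAt (hU : IsOpen U) (hP : DifferentiableOn ℝ P U) {c s : ℝ}
    (hq : ((c, s) : ℝ × ℝ) ∈ U) :
    HasDerivAt (fun r => P (c, r)) (fderiv ℝ P (c, s) (0, 1)) s := by
  have h1 : HasFDerivAt P (fderiv ℝ P (c, s)) (c, s) :=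
    (hP.differentiableAt (hU.mem_nhds hq)).hasFDerivAt
  have h2 : HasDerivAt (fun r : ℝ => ((c, r) : ℝ × ℝ)) ((0 : ℝ), (1 : ℝ)) s :=
    HasDerivAt.prodMk (hasDerivAt_const s c) (hasDerivAt_id s)
  exact h1.comp_hasDerivAt s h2

lemma lineX_hasDerivAt (hU : IsOpen U) (hP : DifferentiableOn ℝ P U) {y t : ℝ}
    (hq : ((y, t) : ℝ × ℝ) ∈ U) :
    HasDerivAt (fun z => P (z, t)) (fderiv ℝ P (y, t) (1, 0)) y := by
  have h1 : HasFDerivAt P (fderiv ℝ P (y, t)) (y, t) :=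
    (hP.differentiableAt (hU.mem_nhds hq)).hasFDerivAt
  have h2 : HasDerivAt (fun z : ℝ => ((z, t) : ℝ × ℝ)) ((1 : ℝ), (0 : ℝ)) y :=
    HasDerivAt.prodMk (hasDerivAt_id y) (hasDerivAt_const y t)
  exact h1.comp_hasDerivAt y h2

lemma line_hasDerivAt (hU : IsOpen U) (hP : DifferentiableOn ℝ P U) (c b : ℝ) {s : ℝ}
    (hq : ((c + b * s, s) : ℝ × ℝ) ∈ U) :
    HasDerivAt (fun r => P (c + b * r, r)) (fderiv ℝ P (c + b * s, s) (b, 1)) s := by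
  have h1 : HasFDerivAt P (fderiv ℝ P (c + b * s, s)) (c + b * s, s) :=
    (hP.differentiableAt (hU.mem_nhds hq)).hasFDerivAt
  have h2 : HasDerivAt (fun r : ℝ => ((c + b * r, r) : ℝ × ℝ)) ((b : ℝ), (1 : ℝ)) s := by
    have hx : HasDerivAt (fun r : ℝ => c + b * r) b s := by
      simpa using ((hasDerivAt_id s).const_mul b).const_add c
    exact HasDerivAt.prodMk hx (hasDerivAt_id s)
  exact HasFDerivAt.comp_hasDerivAt (f := fun r : ℝ => ((c + b * r, r) : ℝ × ℝ)) s h1 h2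

end Lines

section Cont

variable {E F : Type*} [NormedAddCommGroup E] [NormedSpace ℝ E]
  [NormedAddCommGroup F] [NormedSpace ℝ F]

lemma continuousAt_clm_apply' {X : Type*} [TopologicalSpace X] {f : X → (E →L[ℝ] F)} {x : X}
    (hf : ContinuousAt f x) (v : E) : ContinuousAt (fun y => f y v) x := by
  have h1 : ContinuousAt (fun g : E →L[ℝ] F => g v) (f x) :=
    (ContinuousLinearMap.apply ℝ F v).continuous.continuousAt
  exact h1.comp hf

lemma continuousAt_lineX {P : ℝ × ℝ → E} {x t : ℝ} (h : ContinuousAt P (x, t)) :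
    ContinuousAt (fun y : ℝ => P (y, t)) x :=
  ContinuousAt.comp h
    (((continuous_id.prodMk continuous_const).continuousAt :
      ContinuousAt (fun y : ℝ => ((y, t) : ℝ × ℝ)) x))

lemma continuousAt_lineT {P : ℝ × ℝ → E} {x t : ℝ} (h : ContinuousAt P (x, t)) :
    ContinuousAt (fun s : ℝ => P (x, s)) t :=
  ContinuousAt.comp h
    (((continuous_const.prodMk continuous_id).continuousAt :
      ContinuousAt (fun s : ℝ => ((x, s) : ℝ × ℝ)) t))

end Cont

section Slice

variable {Φ : ℝ × ℝ → ℝ} {U : Set (ℝ × ℝ)}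

lemma fderiv_contDiffOn (hU : IsOpen U) (hC : ContDiffOn ℝ 2 Φ U) :
    ContDiffOn ℝ 1 (fderiv ℝ Φ) U := by
  have h2 : (2 : WithTop ℕ∞) = 1 + 1 := by norm_num
  exact ((contDiffOn_succ_iff_fderiv_of_isOpen hU).1 (h2 ▸ hC)).2.2

lemma secondDeriv_tt (hU : IsOpen U) (hC : ContDiffOn ℝ 2 Φ U) {x t : ℝ}
    (hq : ((x, t) : ℝ × ℝ) ∈ U) :
    deriv (deriv (fun s => Φ (x, s))) t = fderiv ℝ (fderiv ℝ Φ) (x, t) (0, 1) (0, 1) := by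
  have hdiff : DifferentiableOn ℝ Φ U := hC.differentiableOn (by norm_num)
  have hd1 : DifferentiableOn ℝ (fderiv ℝ Φ) U :=
    (fderiv_contDiffOn hU hC).differentiableOn one_ne_zero
  have hev : ∀ᶠ s in 𝓝 t, deriv (fun r => Φ (x, r)) s = fderiv ℝ Φ (x, s) (0, 1) := by
    have hco : Continuous fun s : ℝ => ((x, s) : ℝ × ℝ) := continuous_const.prodMk continuous_id
    filter_upwards [(hU.preimage hco).mem_nhds hq] with s hs
    exact (lineT_hasDerivAt hU hdiff hs).deriv
  have heq : deriv (fun r => Φ (x, r)) =ᶠ[𝓝 t] fun s => fderiv ℝ Φ (x, s) (0, 1) := hev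
  rw [heq.deriv_eq]
  have h1 : HasDerivAt (fun s => fderiv ℝ Φ (x, s)) (fderiv ℝ (fderiv ℝ Φ) (x, t) (0, 1)) t :=
    lineT_hasDerivAt hU hd1 hq
  have h2 : HasDerivAt (fun s => fderiv ℝ Φ (x, s) (0, 1))
      (fderiv ℝ (fderiv ℝ Φ) (x, t) (0, 1) (0, 1)) t := by
    simpa using h1.clm_apply (hasDerivAt_const t ((0 : ℝ), (1 : ℝ)))
  exact h2.deriv

lemma secondDeriv_xx (hU : IsOpen U) (hC : ContDiffOn ℝ 2 Φ U) {x t : ℝ}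
    (hq : ((x, t) : ℝ × ℝ) ∈ U) :
    deriv (deriv (fun y => Φ (y, t))) x = fderiv ℝ (fderiv ℝ Φ) (x, t) (1, 0) (1, 0) := by
  have hdiff : DifferentiableOn ℝ Φ U := hC.differentiableOn (by norm_num)
  have hd1 : DifferentiableOn ℝ (fderiv ℝ Φ) U :=
    (fderiv_contDiffOn hU hC).differentiableOn one_ne_zero
  have hev : ∀ᶠ y in 𝓝 x, deriv (fun z => Φ (z, t)) y = fderiv ℝ Φ (y, t) (1, 0) := by
    have hco : Continuous fun y : ℝ => ((y, t) : ℝ × ℝ) := continuous_id.prodMk continuous_const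
    filter_upwards [(hU.preimage hco).mem_nhds hq] with y hy
    exact (lineX_hasDerivAt hU hdiff hy).deriv
  have heq : deriv (fun z => Φ (z, t)) =ᶠ[𝓝 x] fun y => fderiv ℝ Φ (y, t) (1, 0) := hev
  rw [heq.deriv_eq]
  have h1 : HasDerivAt (fun y => fderiv ℝ Φ (y, t)) (fderiv ℝ (fderiv ℝ Φ) (x, t) (1, 0)) x :=
    lineX_hasDerivAt hU hd1 hq
  have h2 : HasDerivAt (fun y => fderiv ℝ Φ (y, t) (1, 0))
      (fderiv ℝ (fderiv ℝ Φ) (x, t) (1, 0) (1, 0)) x := by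
    simpa using h1.clm_apply (hasDerivAt_const x ((1 : ℝ), (0 : ℝ)))
  exact h2.deriv

end Slice

lemma wave_fderiv {a c d T0 T1 : ℝ} {p : ℝ → ℝ → ℝ} {U : Set (ℝ × ℝ)}
    (hU : IsOpen U) (hC : ContDiffOn ℝ 2 (fun q : ℝ × ℝ => p q.1 q.2) U)
    (hpde : ∀ x ∈ Set.Icc c d, ∀ t ∈ Set.Icc T0 T1,
      deriv (deriv (fun s => p x s)) t = a ^ 2 * deriv (deriv (fun y => p y t)) x)
    {x t : ℝ} (hx : x ∈ Set.Icc c d) (ht : t ∈ Set.Icc T0 T1)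
    (hq : ((x, t) : ℝ × ℝ) ∈ U) :
    fderiv ℝ (fderiv ℝ (fun q : ℝ × ℝ => p q.1 q.2)) (x, t) (0, 1) (0, 1)
      = a ^ 2 * fderiv ℝ (fderiv ℝ (fun q : ℝ × ℝ => p q.1 q.2)) (x, t) (1, 0) (1, 0) := by
  have h1 : deriv (deriv (fun s => p x s)) t
      = fderiv ℝ (fderiv ℝ (fun q : ℝ × ℝ => p q.1 q.2)) (x, t) (0, 1) (0, 1) :=
    secondDeriv_tt hU hC hq
  have h2 : deriv (deriv (fun y => p y t)) x
      = fderiv ℝ (fderiv ℝ (fun q : ℝ × ℝ => p q.1 q.2)) (x, t) (1, 0) (1, 0) :=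
    secondDeriv_xx hU hC hq
  rw [← h1, ← h2]
  exact hpde x hx t ht



set_option maxHeartbeats 1000000 in
/-- Prediction Validation Theorem, right sub-domain: the zero-flux predictive
solution on Ω₂ agrees with the true solution wherever the backward light cone
does not reach the input boundary x = X₂A; in particular its value and output
flux at the output boundary x = X₁B agree with the true solution's for
a·(t − Tₛ) ≤ X₁B − X₂A. -/
theorem prediction_validation_right
    (a T_s τ X_A X1A X2A X1B X2B X_B : ℝ)
    (ha : 0 < a) (hτ : 0 < τ)
    (hA : X_A = X1A) (h1 : X1A < X2A) (h2 : X2A < X1B) (h3 : X1B < X2B)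
    (hB : X2B = X_B)
    (u phat₂ : ℝ → ℝ → ℝ)
    (hu : IsWaveSolution a X_A X_B T_s (T_s + τ) u)
    (hp : IsWaveSolution a X2A X2B T_s (T_s + τ) phat₂)
    (hinit : ∀ x ∈ Set.Icc X2A X2B, phat₂ x T_s = u x T_s)
    (hinit' : ∀ x ∈ Set.Icc X2A X2B,
      deriv (fun s => phat₂ x s) T_s = deriv (fun s => u x s) T_s)
    (hDir : ∀ t ∈ Set.Icc T_s (T_s + τ), phat₂ X2B t = u X2B t)
    (hzero : ∀ t ∈ Set.Icc T_s (T_s + τ), deriv (fun y => phat₂ y t) X2A = 0) :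
    (∀ x ∈ Set.Icc X2A X2B, ∀ t ∈ Set.Icc T_s (T_s + τ),
      a * (t - T_s) ≤ x - X2A → phat₂ x t = u x t) ∧
    (∀ t ∈ Set.Icc T_s (T_s + τ), a * (t - T_s) ≤ X1B - X2A →
      phat₂ X1B t = u X1B t ∧
      deriv (fun y => phat₂ y t) X1B = deriv (fun y => u y t) X1B) := by
  obtain ⟨Up, hUpo, hUps, hpC, hpPDE⟩ := hp
  obtain ⟨Uu, hUuo, hUus, huC, huPDE⟩ := hu
  set T1 := T_s + τ with hT1
  have hIccsub : Set.Icc X2A X2B ⊆ Set.Icc X_A X_B :=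
    Set.Icc_subset_Icc (by linarith) (by linarith)
  have hRu : Set.Icc X2A X2B ×ˢ Set.Icc T_s T1 ⊆ Uu :=
    Set.Subset.trans (Set.prod_mono_left hIccsub) hUus
  set U := Up ∩ Uu with hUdef
  have hUo : IsOpen U := hUpo.inter hUuo
  have hmemU : ∀ {x t : ℝ}, x ∈ Set.Icc X2A X2B → t ∈ Set.Icc T_s T1 →
      ((x, t) : ℝ × ℝ) ∈ U := fun hx ht =>
    ⟨hUps (Set.mk_mem_prod hx ht), hRu (Set.mk_mem_prod hx ht)⟩
  set W : ℝ × ℝ → ℝ := fun q => phat₂ q.1 q.2 - u q.1 q.2 with hWdef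
  have hWC : ContDiffOn ℝ 2 W U :=
    (hpC.mono Set.inter_subset_left).sub (huC.mono Set.inter_subset_right)
  have hpD : DifferentiableOn ℝ (fun q : ℝ × ℝ => phat₂ q.1 q.2) Up :=
    hpC.differentiableOn (by norm_num)
  have huD : DifferentiableOn ℝ (fun q : ℝ × ℝ => u q.1 q.2) Uu :=
    huC.differentiableOn (by norm_num)
  have hWD : DifferentiableOn ℝ W U := hWC.differentiableOn (by norm_num)
  have hWC1 : ContDiffOn ℝ 1 (fderiv ℝ W) U := fderiv_contDiffOn hUo hWC
  have hDWD : DifferentiableOn ℝ (fderiv ℝ W) U := hWC1.differentiableOn one_ne_zero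
  have hpD1 : DifferentiableOn ℝ (fderiv ℝ (fun q : ℝ × ℝ => phat₂ q.1 q.2)) Up :=
    (fderiv_contDiffOn hUpo hpC).differentiableOn one_ne_zero
  have huD1 : DifferentiableOn ℝ (fderiv ℝ (fun q : ℝ × ℝ => u q.1 q.2)) Uu :=
    (fderiv_contDiffOn hUuo huC).differentiableOn one_ne_zero
  -- first derivative of W is the difference of first derivatives
  have hDWsub : ∀ q ∈ U, fderiv ℝ W q
      = fderiv ℝ (fun y : ℝ × ℝ => phat₂ y.1 y.2) q - fderiv ℝ (fun y : ℝ × ℝ => u y.1 y.2) q := by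
    intro q hq
    rw [hWdef]
    exact fderiv_sub (hpD.differentiableAt (hUpo.mem_nhds hq.1))
      (huD.differentiableAt (hUuo.mem_nhds hq.2))
  -- second derivative of W is the difference of second derivatives
  have hDDWsub : ∀ q ∈ U, fderiv ℝ (fderiv ℝ W) q
      = fderiv ℝ (fderiv ℝ (fun y : ℝ × ℝ => phat₂ y.1 y.2)) q
        - fderiv ℝ (fderiv ℝ (fun y : ℝ × ℝ => u y.1 y.2)) q := by
    intro q hq
    have hev : fderiv ℝ W =ᶠ[𝓝 q] fun y =>
        fderiv ℝ (fun z : ℝ × ℝ => phat₂ z.1 z.2) y - fderiv ℝ (fun z : ℝ × ℝ => u z.1 z.2) y := by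
      filter_upwards [hUo.mem_nhds hq] with y hy
      exact hDWsub y hy
    rw [hev.fderiv_eq]
    exact fderiv_sub (hpD1.differentiableAt (hUpo.mem_nhds hq.1))
      (huD1.differentiableAt (hUuo.mem_nhds hq.2))
  -- symmetry of the second derivative of W
  have hsym : ∀ q ∈ U, ∀ v w : ℝ × ℝ, fderiv ℝ (fderiv ℝ W) q v w = fderiv ℝ (fderiv ℝ W) q w v := by
    intro q hq v w
    refine second_derivative_symmetric_of_eventually (f := W) ?_
      ((hDWD.differentiableAt (hUo.mem_nhds hq)).hasFDerivAt) v w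
    filter_upwards [hUo.mem_nhds hq] with y hy
    exact (hWD.differentiableAt (hUo.mem_nhds hy)).hasFDerivAt
  -- wave equation for W in fderiv form
  have hWpde : ∀ x ∈ Set.Icc X2A X2B, ∀ t ∈ Set.Icc T_s T1,
      fderiv ℝ (fderiv ℝ W) (x, t) (0, 1) (0, 1)
        = a ^ 2 * fderiv ℝ (fderiv ℝ W) (x, t) (1, 0) (1, 0) := by
    intro x hx t ht
    have hqU := hmemU hx ht
    have hpW := wave_fderiv hUpo hpC hpPDE hx ht (hUps (Set.mk_mem_prod hx ht))
    have hx' : x ∈ Set.Icc X_A X_B := hIccsub hx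
    have huW := wave_fderiv hUuo huC huPDE hx' ht (hUus (Set.mk_mem_prod hx' ht))
    rw [hDDWsub _ hqU]
    simp only [ContinuousLinearMap.sub_apply]
    rw [hpW, huW]; ring
  -- characteristic derivative vanishes
  have hchar : ∀ x t, x ∈ Set.Icc X2A X2B → t ∈ Set.Icc T_s T1 → ∀ b : ℝ, (b = a ∨ b = -a) →
      fderiv ℝ (fderiv ℝ W) (x, t) (b, 1) (-b, 1) = 0 := by
    intro x t hx ht b hb
    have hqU := hmemU hx ht
    have he1 : ((b, 1) : ℝ × ℝ) = b • ((1 : ℝ), (0 : ℝ)) + ((0 : ℝ), (1 : ℝ)) := by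
      simp [Prod.ext_iff]
    have he2 : ((-b, 1) : ℝ × ℝ) = (-b) • ((1 : ℝ), (0 : ℝ)) + ((0 : ℝ), (1 : ℝ)) := by
      simp [Prod.ext_iff]
    rw [he1, he2]
    simp only [map_add, map_smul, ContinuousLinearMap.add_apply,
      ContinuousLinearMap.smul_apply, smul_eq_mul]
    have hs := hsym (x, t) hqU (1, 0) (0, 1)
    have hP := hWpde x hx t ht
    rw [hP, hs]
    rcases hb with rfl | rfl <;> ring
  have hT_mem : T_s ∈ Set.Icc T_s T1 := ⟨le_refl _, by simp [hT1]; linarith⟩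
  -- initial data for W
  have hW0 : ∀ x ∈ Set.Icc X2A X2B, W (x, T_s) = 0 := by
    intro x hx
    have := hinit x hx
    simp [hWdef, sub_eq_zero, this]
  -- time derivative of W at initial time vanishes
  have hWt0 : ∀ x ∈ Set.Icc X2A X2B, fderiv ℝ W (x, T_s) (0, 1) = 0 := by
    intro x hx
    have hqU := hmemU hx hT_mem
    have hp' : deriv (fun s => phat₂ x s) T_s
        = fderiv ℝ (fun q : ℝ × ℝ => phat₂ q.1 q.2) (x, T_s) (0, 1) :=
      (lineT_hasDerivAt hUpo hpD (hUps (Set.mk_mem_prod hx hT_mem))).deriv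
    have hu' : deriv (fun s => u x s) T_s
        = fderiv ℝ (fun q : ℝ × ℝ => u q.1 q.2) (x, T_s) (0, 1) :=
      (lineT_hasDerivAt hUuo huD (hRu (Set.mk_mem_prod hx hT_mem))).deriv
    rw [hDWsub _ hqU]
    rw [ContinuousLinearMap.sub_apply, ← hp', ← hu', hinit' x hx, sub_self]
  -- space derivative of W at initial time vanishes
  have hWx0 : ∀ x ∈ Set.Icc X2A X2B, fderiv ℝ W (x, T_s) (1, 0) = 0 := by
    have hint : ∀ x ∈ Set.Ioo X2A X2B, fderiv ℝ W (x, T_s) (1, 0) = 0 := by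
      intro x hx
      have hqU := hmemU (Set.Ioo_subset_Icc_self hx) hT_mem
      have hd : HasDerivAt (fun y => W (y, T_s)) (fderiv ℝ W (x, T_s) (1, 0)) x :=
        lineX_hasDerivAt hUo hWD hqU
      have hz : deriv (fun y => W (y, T_s)) x = 0 := by
        apply deriv_zero_of_eventually_zero
        filter_upwards [Ioo_mem_nhds hx.1 hx.2] with y hy
        exact hW0 y (Set.Ioo_subset_Icc_self hy)
      rw [← hd.deriv]; exact hz
    refine zero_on_Icc_of_zero_on_Ioo (lt_trans h2 h3) ?_ hint
    intro x hx
    have hqU := hmemU hx hT_mem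
    have hcDW : ContinuousAt (fderiv ℝ W) (x, T_s) :=
      hWC1.continuousOn.continuousAt (hUo.mem_nhds hqU)
    exact continuousAt_clm_apply' (continuousAt_lineX hcDW) _
  -- the full derivative of W vanishes on the initial segment
  have hDW0init : ∀ x0 ∈ Set.Icc X2A X2B, ∀ v : ℝ × ℝ, fderiv ℝ W (x0, T_s) v = 0 := by
    intro x0 hx0 v
    have hv : v = v.1 • ((1 : ℝ), (0 : ℝ)) + v.2 • ((0 : ℝ), (1 : ℝ)) := by
      simp [Prod.ext_iff]
    rw [hv, map_add, map_smul, map_smul, hWx0 x0 hx0, hWt0 x0 hx0]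
    simp
  -- time derivative of W at the right boundary vanishes
  have hWtB : ∀ t ∈ Set.Icc T_s T1, fderiv ℝ W (X2B, t) (0, 1) = 0 := by
    have hX2B : X2B ∈ Set.Icc X2A X2B := Set.right_mem_Icc.mpr (by linarith)
    have hWB0 : ∀ t ∈ Set.Icc T_s T1, W (X2B, t) = 0 := by
      intro t ht
      have := hDir t ht
      simp [hWdef, sub_eq_zero, this]
    have hint : ∀ t ∈ Set.Ioo T_s T1, fderiv ℝ W (X2B, t) (0, 1) = 0 := by
      intro t ht
      have hqU := hmemU hX2B (Set.Ioo_subset_Icc_self ht)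
      have hd : HasDerivAt (fun s => W (X2B, s)) (fderiv ℝ W (X2B, t) (0, 1)) t :=
        lineT_hasDerivAt hUo hWD hqU
      have hz : deriv (fun s => W (X2B, s)) t = 0 := by
        apply deriv_zero_of_eventually_zero
        filter_upwards [Ioo_mem_nhds ht.1 ht.2] with s hs
        exact hWB0 s (Set.Ioo_subset_Icc_self hs)
      rw [← hd.deriv]; exact hz
    refine zero_on_Icc_of_zero_on_Ioo (by simp [hT1]; linarith) ?_ hint
    intro t ht
    have hqU := hmemU hX2B ht
    have hcDW : ContinuousAt (fderiv ℝ W) (X2B, t) :=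
      hWC1.continuousOn.continuousAt (hUo.mem_nhds hqU)
    exact continuousAt_clm_apply' (continuousAt_lineT hcDW) _
  -- G = W_t - a W_x vanishes on the cone
  have hG0 : ∀ x t, x ∈ Set.Icc X2A X2B → t ∈ Set.Icc T_s T1 → a * (t - T_s) ≤ x - X2A →
      fderiv ℝ W (x, t) (-a, 1) = 0 := by
    intro x t hx ht hcone
    have hseg : ∀ s ∈ Set.Icc T_s t,
        HasDerivAt (fun r => fderiv ℝ W (x - a * t + a * r, r) ((-a, 1) : ℝ × ℝ)) 0 s := by
      intro s hs
      have hx' : x - a * t + a * s ∈ Set.Icc X2A X2B := by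
        constructor
        · nlinarith [hs.1, hs.2, hx.1, hx.2]
        · nlinarith [hs.1, hs.2, hx.1, hx.2]
      have ht' : s ∈ Set.Icc T_s T1 := ⟨hs.1, le_trans hs.2 ht.2⟩
      have hqU := hmemU hx' ht'
      have h1 := line_hasDerivAt hUo hDWD (x - a * t) a hqU
      have h2 := h1.clm_apply (hasDerivAt_const s ((-a, 1) : ℝ × ℝ))
      have h3 : fderiv ℝ (fderiv ℝ W) (x - a * t + a * s, s) (a, 1) (-a, 1) = 0 :=
        hchar _ _ hx' ht' a (Or.inl rfl)
      simpa [h3] using h2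
    have hconst := const_of_hasDerivAt_zero' hseg t (Set.right_mem_Icc.mpr ht.1)
    have hx0 : x - a * t + a * T_s ∈ Set.Icc X2A X2B := by
      constructor
      · nlinarith [hx.1, hx.2, ht.1]
      · nlinarith [hx.1, hx.2, ht.1]
    have hzero0 : fderiv ℝ W (x - a * t + a * T_s, T_s) ((-a, 1) : ℝ × ℝ) = 0 :=
      hDW0init _ hx0 _
    have hxt : x - a * t + a * t = x := by ring
    simpa [hxt, hzero0] using hconst
  -- F = W_t + a W_x vanishes on the cone
  have hF0 : ∀ x t, x ∈ Set.Icc X2A X2B → t ∈ Set.Icc T_s T1 → a * (t - T_s) ≤ x - X2A →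
      fderiv ℝ W (x, t) (a, 1) = 0 := by
    intro x t hx ht hcone
    have hFseg : ∀ t0 t2 : ℝ, t0 ∈ Set.Icc T_s T1 → t2 ∈ Set.Icc T_s T1 → t0 ≤ t2 →
        (∀ s ∈ Set.Icc t0 t2, x + a * t + (-a) * s ∈ Set.Icc X2A X2B) →
        fderiv ℝ W (x + a * t + (-a) * t2, t2) ((a, 1) : ℝ × ℝ)
          = fderiv ℝ W (x + a * t + (-a) * t0, t0) ((a, 1) : ℝ × ℝ) := by
      intro t0 t2 ht0 ht2 h02 hmem
      have hseg : ∀ s ∈ Set.Icc t0 t2,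
          HasDerivAt (fun r => fderiv ℝ W (x + a * t + (-a) * r, r) ((a, 1) : ℝ × ℝ)) 0 s := by
        intro s hs
        have hx' := hmem s hs
        have ht' : s ∈ Set.Icc T_s T1 := ⟨le_trans ht0.1 hs.1, le_trans hs.2 ht2.2⟩
        have hqU := hmemU hx' ht'
        have h1 := line_hasDerivAt hUo hDWD (x + a * t) (-a) hqU
        have h2 := h1.clm_apply (hasDerivAt_const s ((a, 1) : ℝ × ℝ))
        have h3 : fderiv ℝ (fderiv ℝ W) (x + a * t + (-a) * s, s) (-a, 1) (a, 1) = 0 := by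
          have h4 := hchar _ _ hx' ht' (-a) (Or.inr rfl)
          rw [neg_neg] at h4
          exact h4
        rw [h3] at h2
        simpa using h2
      exact const_of_hasDerivAt_zero' hseg t2 (Set.right_mem_Icc.mpr h02)
    by_cases hcase : x + a * (t - T_s) ≤ X2B
    · -- the backward characteristic stays in the rectangle
      have hmem : ∀ s ∈ Set.Icc T_s t, x + a * t + (-a) * s ∈ Set.Icc X2A X2B := by
        intro s hs
        constructor
        · nlinarith [hs.1, hs.2, hx.1, hx.2]
        · nlinarith [hs.1, hs.2, hx.1, hx.2]
      have hconst := hFseg T_s t hT_mem ht ht.1 hmem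
      have hx0 : x + a * t + (-a) * T_s ∈ Set.Icc X2A X2B :=
        hmem T_s (Set.left_mem_Icc.mpr ht.1)
      calc fderiv ℝ W (x, t) ((a, 1) : ℝ × ℝ)
          = fderiv ℝ W (x + a * t + (-a) * t, t) ((a, 1) : ℝ × ℝ) := by
            rw [show x + a * t + (-a) * t = x by ring]
        _ = fderiv ℝ W (x + a * t + (-a) * T_s, T_s) ((a, 1) : ℝ × ℝ) := hconst
        _ = 0 := hDW0init _ hx0 _
    · -- reflect off the right boundary
      push_neg at hcase
      obtain ⟨ts, hts⟩ : ∃ ts, ts = t - (X2B - x) / a := ⟨_, rfl⟩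
      have had : a * ((X2B - x) / a) = X2B - x := mul_div_cancel₀ _ ha.ne'
      have h4 : a * (t - ts) = X2B - x := by
        rw [hts, show t - (t - (X2B - x) / a) = (X2B - x) / a by ring, had]
      have hts1 : T_s ≤ ts := by
        have hlt : (X2B - x) / a < t - T_s := (div_lt_iff₀ ha).mpr (by nlinarith)
        rw [hts]; linarith
      have hts2 : ts ≤ t := by
        have h0 : 0 ≤ (X2B - x) / a := div_nonneg (by linarith [hx.2]) ha.le
        rw [hts]; linarith
      have htsmem : ts ∈ Set.Icc T_s T1 := ⟨hts1, le_trans hts2 ht.2⟩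
      have hmem : ∀ s ∈ Set.Icc ts t, x + a * t + (-a) * s ∈ Set.Icc X2A X2B := by
        intro s hs
        constructor
        · nlinarith [hs.1, hs.2, hx.1, hx.2, hts1]
        · nlinarith [hs.1, hs.2, hx.1, hx.2, h4]
      have hconst := hFseg ts t htsmem ht hts2 hmem
      have hxts : x + a * t + (-a) * ts = X2B := by linear_combination h4
      -- at the boundary point, F = -G and G vanishes there by the cone argument
      have hGb : fderiv ℝ W (X2B, ts) ((-a, 1) : ℝ × ℝ) = 0 := by
        apply hG0 X2B ts (Set.right_mem_Icc.mpr (by linarith)) htsmem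
        have h5 : a * (ts - T_s) = a * (t - T_s) - (X2B - x) := by linear_combination -h4
        nlinarith [hx.2]
      have hTb : fderiv ℝ W (X2B, ts) ((0 : ℝ), (1 : ℝ)) = 0 := hWtB ts htsmem
      have hFb : fderiv ℝ W (X2B, ts) ((a, 1) : ℝ × ℝ) = 0 := by
        have hv : ((a, 1) : ℝ × ℝ) = (2 : ℝ) • ((0 : ℝ), (1 : ℝ)) - ((-a, 1) : ℝ × ℝ) := by
          simp [Prod.ext_iff]; norm_num
        rw [hv, map_sub, map_smul, hGb, hTb]
        simp
      calc fderiv ℝ W (x, t) ((a, 1) : ℝ × ℝ)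
          = fderiv ℝ W (x + a * t + (-a) * t, t) ((a, 1) : ℝ × ℝ) := by
            rw [show x + a * t + (-a) * t = x by ring]
        _ = fderiv ℝ W (x + a * t + (-a) * ts, ts) ((a, 1) : ℝ × ℝ) := hconst
        _ = 0 := by rw [hxts]; exact hFb
  -- all first derivatives of W vanish on the cone
  have hKall : ∀ x t, x ∈ Set.Icc X2A X2B → t ∈ Set.Icc T_s T1 → a * (t - T_s) ≤ x - X2A →
      ∀ v : ℝ × ℝ, fderiv ℝ W (x, t) v = 0 := by
    intro x t hx ht hcone v
    have hF := hF0 x t hx ht hcone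
    have hG := hG0 x t hx ht hcone
    have hWt : fderiv ℝ W (x, t) ((0 : ℝ), (1 : ℝ)) = 0 := by
      have hv : ((0 : ℝ), (1 : ℝ)) = (2 : ℝ)⁻¹ • (((a, 1) : ℝ × ℝ) + ((-a, 1) : ℝ × ℝ)) := by
        simp [Prod.ext_iff]; norm_num
      rw [hv, map_smul, map_add, hF, hG]
      simp
    have hWx : fderiv ℝ W (x, t) ((1 : ℝ), (0 : ℝ)) = 0 := by
      have hv : ((2 * a) : ℝ) • ((1 : ℝ), (0 : ℝ)) = (((a, 1) : ℝ × ℝ) - ((-a, 1) : ℝ × ℝ)) := by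
        simp [Prod.ext_iff]
        ring
      have h6 : (2 * a) * fderiv ℝ W (x, t) ((1 : ℝ), (0 : ℝ)) = 0 := by
        have h7 := congrArg (fderiv ℝ W (x, t)) hv
        rw [map_smul, map_sub, hF, hG] at h7
        simpa using h7
      have h2a : ((2 * a) : ℝ) ≠ 0 := by positivity
      exact (mul_eq_zero.mp h6).resolve_left h2a
    have hv : v = v.1 • ((1 : ℝ), (0 : ℝ)) + v.2 • ((0 : ℝ), (1 : ℝ)) := by
      simp [Prod.ext_iff]
    rw [hv, map_add, map_smul, map_smul, hWx, hWt]
    simp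
  -- W vanishes on the cone
  have hWzero : ∀ x t, x ∈ Set.Icc X2A X2B → t ∈ Set.Icc T_s T1 → a * (t - T_s) ≤ x - X2A →
      W (x, t) = 0 := by
    intro x t hx ht hcone
    have hseg : ∀ s ∈ Set.Icc T_s t, HasDerivAt (fun r => W (x, r)) 0 s := by
      intro s hs
      have ht' : s ∈ Set.Icc T_s T1 := ⟨hs.1, le_trans hs.2 ht.2⟩
      have hd := lineT_hasDerivAt hUo hWD (hmemU hx ht')
      have h0 : fderiv ℝ W (x, s) ((0 : ℝ), (1 : ℝ)) = 0 := by
        apply hKall x s hx ht'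
        nlinarith [hs.1, hs.2, ht.1]
      rwa [h0] at hd
    have hconst := const_of_hasDerivAt_zero' hseg t (Set.right_mem_Icc.mpr ht.1)
    simpa [hW0 x hx] using hconst
  constructor
  · intro x hx t ht hcone
    have hz := hWzero x t hx ht hcone
    rw [hWdef] at hz
    simpa [sub_eq_zero] using hz
  · intro t ht hcone
    have hX1B : X1B ∈ Set.Icc X2A X2B := ⟨le_of_lt h2, le_of_lt h3⟩
    constructor
    · have hz := hWzero X1B t hX1B ht hcone
      rw [hWdef] at hz
      simpa [sub_eq_zero] using hz
    · have hWx := hKall X1B t hX1B ht hcone ((1 : ℝ), (0 : ℝ))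
      have hqU := hmemU hX1B ht
      have hp' : deriv (fun y => phat₂ y t) X1B
          = fderiv ℝ (fun q : ℝ × ℝ => phat₂ q.1 q.2) (X1B, t) (1, 0) :=
        (lineX_hasDerivAt hUpo hpD (hUps (Set.mk_mem_prod hX1B ht))).deriv
      have hu' : deriv (fun y => u y t) X1B
          = fderiv ℝ (fun q : ℝ × ℝ => u q.1 q.2) (X1B, t) (1, 0) :=
        (lineX_hasDerivAt hUuo huD (hRu (Set.mk_mem_prod hX1B ht))).deriv
      rw [hDWsub _ hqU] at hWx
      rw [hp', hu']
      rw [ContinuousLinearMap.sub_apply] at hWx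
      linarith [hWx]
end

section
/- (Agreement of the two predictive solutions on the overlap.) Let a > 0, T_s ∈ ℝ, τ > 0, and X_A = X_{1A} < X_{2A} < X_{1B} < X_{2B} = X_B. Let u be a classical solution of the 1-D wave equation with speed a on [X_A, X_B] × [T_s, T_s + τ]. Let p̂₁ be a classical solution on [X_{1A}, X_{1B}] × [T_s, T_s + τ] with p̂₁(x,T_s) = u(x,T_s), ∂p̂₁/∂t(x,T_s) = ∂u/∂t(x,T_s), p̂₁(X_{1A},t) = u(X_{1A},t), and ∂p̂₁/∂x(X_{1B},t) = 0, and let p̂₂ be a classical solution on [X_{2A}, X_{2B}] × [T_s, T_s + τ] with p̂₂(x,T_s) = u(x,T_s), ∂p̂₂/∂t(x,T_s) = ∂u/∂t(x,T_s), p̂₂(X_{2B},t) = u(X_{2B},t), and ∂p̂₂/∂x(X_{2A},t) = 0 (all for the relevant x and t). Then for every x in the overlap [X_{2A}, X_{1B}] and every t ∈ [T_s, T_s + τ] with a·(t − T_s) ≤ min(X_{1B} − x, x − X_{2A}), one has p̂₁(x,t) = u(x,t) = p̂₂(x,t). -/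
section WaveHelpers


lemma hasDerivAt_line {E : Type*} [NormedAddCommGroup E] [NormedSpace ℝ E] {F : ℝ × ℝ → E}
    {Φ : ℝ × ℝ →L[ℝ] E} {q v : ℝ × ℝ} {s₀ : ℝ} (hF : HasFDerivAt F Φ (q + s₀ • v)) :
    HasDerivAt (fun s => F (q + s • v)) (Φ v) s₀ := by
  have h1 : HasDerivAt (fun s : ℝ => q + s • v) v s₀ := by
    simpa using ((hasDerivAt_id s₀).smul_const v).const_add q
  exact hF.comp_hasDerivAt s₀ h1

lemma differentiableAt_of_contDiffOn {W : ℝ × ℝ → ℝ} {U : Set (ℝ × ℝ)} (hU : IsOpen U)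
    (hC2 : ContDiffOn ℝ 2 W U) {q : ℝ × ℝ} (hq : q ∈ U) : DifferentiableAt ℝ W q :=
  ((hC2.differentiableOn (by norm_num)).differentiableAt (hU.mem_nhds hq))

lemma fderiv_differentiableAt {W : ℝ × ℝ → ℝ} {U : Set (ℝ × ℝ)} (hU : IsOpen U)
    (hC2 : ContDiffOn ℝ 2 W U) {q : ℝ × ℝ} (hq : q ∈ U) :
    DifferentiableAt ℝ (fderiv ℝ W) q :=
  (((hC2.fderiv_of_isOpen (m := 1) hU (by norm_num)).differentiableOn one_ne_zero).differentiableAt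
    (hU.mem_nhds hq))

/-- First derivative along a line for the slice of a `C²` function. -/
lemma deriv_line {W : ℝ × ℝ → ℝ} {U : Set (ℝ × ℝ)} (hU : IsOpen U)
    (hC2 : ContDiffOn ℝ 2 W U) {q v : ℝ × ℝ} {s₀ : ℝ} (h : q + s₀ • v ∈ U) :
    HasDerivAt (fun s => W (q + s • v)) (fderiv ℝ W (q + s₀ • v) v) s₀ :=
  hasDerivAt_line (differentiableAt_of_contDiffOn hU hC2 h).hasFDerivAt

/-- The partial `fun r => fderiv ℝ W r v` has derivative `e ↦ fderiv ℝ (fderiv ℝ W) p e v`. -/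
lemma pd_hasFDerivAt {W : ℝ × ℝ → ℝ} {U : Set (ℝ × ℝ)} (hU : IsOpen U)
    (hC2 : ContDiffOn ℝ 2 W U) (v : ℝ × ℝ) {p : ℝ × ℝ} (hp : p ∈ U) :
    HasFDerivAt (fun r => fderiv ℝ W r v)
      ((ContinuousLinearMap.apply ℝ ℝ v).comp (fderiv ℝ (fderiv ℝ W) p)) p :=
  (ContinuousLinearMap.apply ℝ ℝ v).hasFDerivAt.comp p
    (fderiv_differentiableAt hU hC2 hp).hasFDerivAt

/-- Second derivative along a line. -/
lemma second_deriv_line {W : ℝ × ℝ → ℝ} {U : Set (ℝ × ℝ)} (hU : IsOpen U)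
    (hC2 : ContDiffOn ℝ 2 W U) {q v : ℝ × ℝ} {s₀ : ℝ} (h : q + s₀ • v ∈ U) :
    deriv (deriv (fun s => W (q + s • v))) s₀ = fderiv ℝ (fderiv ℝ W) (q + s₀ • v) v v := by
  have hev : deriv (fun s => W (q + s • v)) =ᶠ[nhds s₀] fun s => fderiv ℝ W (q + s • v) v := by
    have hopen : IsOpen {s : ℝ | q + s • v ∈ U} :=
      hU.preimage (by fun_prop : Continuous fun s : ℝ => q + s • v)
    filter_upwards [hopen.mem_nhds h] with s hs
    exact (deriv_line hU hC2 hs).deriv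
  rw [hev.deriv_eq]
  exact (hasDerivAt_line (pd_hasFDerivAt hU hC2 v h)).deriv

lemma second_symm {W : ℝ × ℝ → ℝ} {U : Set (ℝ × ℝ)} (hU : IsOpen U)
    (hC2 : ContDiffOn ℝ 2 W U) {q : ℝ × ℝ} (hq : q ∈ U) (e v : ℝ × ℝ) :
    fderiv ℝ (fderiv ℝ W) q e v = fderiv ℝ (fderiv ℝ W) q v e := by
  refine second_derivative_symmetric_of_eventually (f := W) ?_ (fderiv_differentiableAt hU hC2 hq).hasFDerivAt e v
  filter_upwards [hU.mem_nhds hq] with r hr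
  exact (differentiableAt_of_contDiffOn hU hC2 hr).hasFDerivAt

lemma prod_pt_t (x t : ℝ) : ((x, (0:ℝ)) : ℝ × ℝ) + t • ((0:ℝ), (1:ℝ)) = (x, t) := by
  simp [Prod.ext_iff]

lemma prod_pt_x (x t : ℝ) : (((0:ℝ), t) : ℝ × ℝ) + x • ((1:ℝ), (0:ℝ)) = (x, t) := by
  simp [Prod.ext_iff]

lemma slice_t_eq (p : ℝ → ℝ → ℝ) (x : ℝ) :
    (fun s => p x s) = fun s => (fun q : ℝ × ℝ => p q.1 q.2) ((x, (0:ℝ)) + s • ((0:ℝ), (1:ℝ))) := by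
  funext s; simp

lemma slice_x_eq (p : ℝ → ℝ → ℝ) (t : ℝ) :
    (fun y => p y t) = fun y => (fun q : ℝ × ℝ => p q.1 q.2) (((0:ℝ), t) + y • ((1:ℝ), (0:ℝ))) := by
  funext y; simp

lemma slice_t_hasDerivAt {p : ℝ → ℝ → ℝ} {U : Set (ℝ × ℝ)} (hU : IsOpen U)
    (hC2 : ContDiffOn ℝ 2 (fun q : ℝ × ℝ => p q.1 q.2) U) {x t : ℝ} (h : (x, t) ∈ U) :
    HasDerivAt (fun s => p x s)
      (fderiv ℝ (fun q : ℝ × ℝ => p q.1 q.2) (x, t) ((0:ℝ), (1:ℝ))) t := by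
  rw [slice_t_eq p x]
  have := deriv_line (q := (x, (0:ℝ))) (v := ((0:ℝ), (1:ℝ))) (s₀ := t) hU hC2
    (by rw [prod_pt_t]; exact h)
  rwa [prod_pt_t] at this

lemma slice_x_hasDerivAt {p : ℝ → ℝ → ℝ} {U : Set (ℝ × ℝ)} (hU : IsOpen U)
    (hC2 : ContDiffOn ℝ 2 (fun q : ℝ × ℝ => p q.1 q.2) U) {x t : ℝ} (h : (x, t) ∈ U) :
    HasDerivAt (fun y => p y t)
      (fderiv ℝ (fun q : ℝ × ℝ => p q.1 q.2) (x, t) ((1:ℝ), (0:ℝ))) x := by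
  rw [slice_x_eq p t]
  have := deriv_line (q := ((0:ℝ), t)) (v := ((1:ℝ), (0:ℝ))) (s₀ := x) hU hC2
    (by rw [prod_pt_x]; exact h)
  rwa [prod_pt_x] at this

lemma second_t {p : ℝ → ℝ → ℝ} {U : Set (ℝ × ℝ)} (hU : IsOpen U)
    (hC2 : ContDiffOn ℝ 2 (fun q : ℝ × ℝ => p q.1 q.2) U) {x t : ℝ} (h : (x, t) ∈ U) :
    deriv (deriv (fun s => p x s)) t =
      fderiv ℝ (fderiv ℝ (fun q : ℝ × ℝ => p q.1 q.2)) (x, t) ((0:ℝ), (1:ℝ)) ((0:ℝ), (1:ℝ)) := by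
  rw [slice_t_eq p x]
  have := second_deriv_line (q := (x, (0:ℝ))) (v := ((0:ℝ), (1:ℝ))) (s₀ := t) hU hC2
    (by rw [prod_pt_t]; exact h)
  rwa [prod_pt_t] at this

lemma second_x {p : ℝ → ℝ → ℝ} {U : Set (ℝ × ℝ)} (hU : IsOpen U)
    (hC2 : ContDiffOn ℝ 2 (fun q : ℝ × ℝ => p q.1 q.2) U) {x t : ℝ} (h : (x, t) ∈ U) :
    deriv (deriv (fun y => p y t)) x =
      fderiv ℝ (fderiv ℝ (fun q : ℝ × ℝ => p q.1 q.2)) (x, t) ((1:ℝ), (0:ℝ)) ((1:ℝ), (0:ℝ)) := by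
  rw [slice_x_eq p t]
  have := second_deriv_line (q := ((0:ℝ), t)) (v := ((1:ℝ), (0:ℝ))) (s₀ := x) hU hC2
    (by rw [prod_pt_x]; exact h)
  rwa [prod_pt_x] at this

lemma cone_vanish {a c d T₀ T₁ : ℝ} (ha : 0 < a) (hcd : c < d)
    {w : ℝ → ℝ → ℝ} {U : Set (ℝ × ℝ)} (hU : IsOpen U)
    (hsub : (Set.Icc c d ×ˢ Set.Icc T₀ T₁) ⊆ U)
    (hC2 : ContDiffOn ℝ 2 (fun q : ℝ × ℝ => w q.1 q.2) U)
    (hwave : ∀ q ∈ (Set.Icc c d ×ˢ Set.Icc T₀ T₁),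
      fderiv ℝ (fderiv ℝ (fun q : ℝ × ℝ => w q.1 q.2)) q ((0:ℝ),(1:ℝ)) ((0:ℝ),(1:ℝ)) =
        a ^ 2 * fderiv ℝ (fderiv ℝ (fun q : ℝ × ℝ => w q.1 q.2)) q ((1:ℝ),(0:ℝ)) ((1:ℝ),(0:ℝ)))
    (hinit : ∀ y ∈ Set.Icc c d, w y T₀ = 0)
    (hinit' : ∀ y ∈ Set.Icc c d, deriv (fun s => w y s) T₀ = 0)
    {x t : ℝ} (ht : t ∈ Set.Icc T₀ T₁)
    (hx1 : c ≤ x - a * (t - T₀)) (hx2 : x + a * (t - T₀) ≤ d) :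
    w x t = 0 := by
  obtain ⟨hT₀t, htT₁⟩ := ht
  have haT : 0 ≤ a * (t - T₀) := mul_nonneg ha.le (by linarith)
  have hxc : c ≤ x := by linarith
  have hxd : x ≤ d := by linarith
  have hT₀T₁ : T₀ ≤ T₁ := le_trans hT₀t htT₁
  set W : ℝ × ℝ → ℝ := fun q => w q.1 q.2 with hW
  -- initial conditions in fderiv form
  have hy0 : ∀ y ∈ Set.Icc c d, fderiv ℝ W (y, T₀) ((0:ℝ),(1:ℝ)) = 0 := by
    intro y hy
    have hmem : ((y, T₀) : ℝ × ℝ) ∈ (Set.Icc c d ×ˢ Set.Icc T₀ T₁) :=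
      ⟨hy, ⟨le_rfl, hT₀T₁⟩⟩
    rw [← (slice_t_hasDerivAt hU hC2 (hsub hmem)).deriv]
    exact hinit' y hy
  have hy1 : ∀ y ∈ Set.Icc c d, fderiv ℝ W (y, T₀) ((1:ℝ),(0:ℝ)) = 0 := by
    intro y hy
    have hmem : ((y, T₀) : ℝ × ℝ) ∈ (Set.Icc c d ×ˢ Set.Icc T₀ T₁) :=
      ⟨hy, ⟨le_rfl, hT₀T₁⟩⟩
    have hD := (slice_x_hasDerivAt hU hC2 (hsub hmem)).hasDerivWithinAt (s := Set.Icc c d)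
    have h0 : HasDerivWithinAt (fun z => w z T₀) 0 (Set.Icc c d) y :=
      (hasDerivWithinAt_const y (Set.Icc c d) (0:ℝ)).congr
        (fun z hz => hinit z hz) (hinit y hy)
    have hu := (uniqueDiffOn_Icc hcd) y hy
    rw [← hD.derivWithin hu, h0.derivWithin hu]
  -- the characteristic propagation
  have char : ∀ ε : ℝ, ε = 1 ∨ ε = -1 → ∀ s ∈ Set.Icc T₀ t,
      fderiv ℝ W (x, s) ((0:ℝ),(1:ℝ)) + ε * a * fderiv ℝ W (x, s) ((1:ℝ),(0:ℝ)) = 0 := by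
    intro ε hε s hs
    set qc : ℝ × ℝ := (x + ε*a*s, 0) with hqc
    set vv : ℝ × ℝ := (-(ε*a), 1) with hvv
    have hq : ∀ σ : ℝ, qc + σ • vv = (x + ε*a*(s - σ), σ) := by
      intro σ; simp [hqc, hvv, Prod.ext_iff]; ring
    have hmem : ∀ σ ∈ Set.Icc T₀ s, ((x + ε*a*(s - σ), σ) : ℝ × ℝ) ∈
        (Set.Icc c d ×ˢ Set.Icc T₀ T₁) := by
      intro σ hσ
      have h1 : 0 ≤ a * (s - σ) := mul_nonneg ha.le (by linarith [hσ.2])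
      have h2 : a * (s - σ) ≤ a * (t - T₀) :=
        mul_le_mul_of_nonneg_left (show s - σ ≤ t - T₀ by linarith [hσ.1, hs.2]) ha.le
      simp only [Set.mem_prod, Set.mem_Icc]
      rcases hε with h | h <;> subst h <;>
        refine ⟨⟨by linarith, by linarith⟩, hσ.1, by linarith [hσ.2, hs.2]⟩
    have hg : ∀ σ ∈ Set.Icc T₀ s,
        HasDerivAt (fun σ => fderiv ℝ W (qc + σ • vv) ((0:ℝ),(1:ℝ)) +
          ε * a * fderiv ℝ W (qc + σ • vv) ((1:ℝ),(0:ℝ))) 0 σ := by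
      intro σ hσ
      have hrect := hmem σ hσ
      have hUσ : qc + σ • vv ∈ U := by rw [hq]; exact hsub hrect
      have h1 := hasDerivAt_line (pd_hasFDerivAt hU hC2 ((0:ℝ),(1:ℝ)) hUσ)
      have h2 := (hasDerivAt_line (pd_hasFDerivAt hU hC2 ((1:ℝ),(0:ℝ)) hUσ)).const_mul (ε * a)
      have h3 := h1.add h2
      simp only [ContinuousLinearMap.coe_comp', Function.comp_apply,
        ContinuousLinearMap.apply_apply] at h3
      have hval : fderiv ℝ (fderiv ℝ W) (qc + σ • vv) vv ((0:ℝ),(1:ℝ)) +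
          ε * a * fderiv ℝ (fderiv ℝ W) (qc + σ • vv) vv ((1:ℝ),(0:ℝ)) = 0 := by
        have hvs : vv = ((0:ℝ),(1:ℝ)) - (ε*a) • ((1:ℝ),(0:ℝ)) := by
          simp [hvv, Prod.ext_iff]
        have hwv := hwave _ hrect
        have hsym := second_symm hU hC2 (hsub hrect) ((1:ℝ),(0:ℝ)) ((0:ℝ),(1:ℝ))
        rw [hq σ]
        rw [hvs, map_sub, map_smul, ContinuousLinearMap.sub_apply,
          ContinuousLinearMap.smul_apply, ContinuousLinearMap.sub_apply,
          ContinuousLinearMap.smul_apply, smul_eq_mul, smul_eq_mul]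
        rcases hε with h | h <;> subst h
        · linear_combination hwv - a * hsym
        · linear_combination hwv + a * hsym
      rwa [hval] at h3
    have hconst := constant_of_has_deriv_right_zero
      (fun σ hσ => ((hg σ hσ).continuousAt.continuousWithinAt))
      (fun σ hσ => ((hg σ (Set.Ico_subset_Icc_self hσ)).hasDerivWithinAt))
      s (Set.right_mem_Icc.mpr hs.1)
    have hbase : ((x + ε*a*(s - T₀)) : ℝ) ∈ Set.Icc c d :=
      (hmem T₀ (Set.left_mem_Icc.mpr hs.1)).1
    rw [hq, hq] at hconst
    simp only [sub_self, mul_zero, add_zero] at hconst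
    rw [hconst, hy0 _ hbase, hy1 _ hbase]
    ring
  -- time derivative vanishes on the vertical segment
  have ht0 : ∀ s ∈ Set.Icc T₀ t, fderiv ℝ W (x, s) ((0:ℝ),(1:ℝ)) = 0 := by
    intro s hs
    have h1 := char 1 (Or.inl rfl) s hs
    have h2 := char (-1) (Or.inr rfl) s hs
    nlinarith [h1, h2]
  have hfin : ∀ s ∈ Set.Icc T₀ t, HasDerivAt (fun s => w x s) 0 s := by
    intro s hs
    have hmem : ((x, s) : ℝ × ℝ) ∈ (Set.Icc c d ×ˢ Set.Icc T₀ T₁) :=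
      ⟨⟨hxc, hxd⟩, ⟨hs.1, le_trans hs.2 htT₁⟩⟩
    have := slice_t_hasDerivAt hU hC2 (hsub hmem)
    rwa [ht0 s hs] at this
  have hconst := constant_of_has_deriv_right_zero
    (fun s hs => ((hfin s hs).continuousAt.continuousWithinAt))
    (fun s hs => ((hfin s (Set.Ico_subset_Icc_self hs)).hasDerivWithinAt))
    t (Set.right_mem_Icc.mpr hT₀t)
  rw [hconst, hinit x ⟨hxc, hxd⟩]

lemma two_sol_cone {a c d cu du T₀ T₁ : ℝ} (ha : 0 < a) (hcd : c < d)
    (hcu : cu ≤ c) (hdu : d ≤ du)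
    {p u : ℝ → ℝ → ℝ}
    (hp : IsWaveSolution a c d T₀ T₁ p) (hu : IsWaveSolution a cu du T₀ T₁ u)
    (hinit : ∀ y ∈ Set.Icc c d, p y T₀ = u y T₀)
    (hinit' : ∀ y ∈ Set.Icc c d,
      deriv (fun s => p y s) T₀ = deriv (fun s => u y s) T₀)
    {x t : ℝ} (ht : t ∈ Set.Icc T₀ T₁)
    (hx1 : c ≤ x - a * (t - T₀)) (hx2 : x + a * (t - T₀) ≤ d) :
    p x t = u x t := by
  obtain ⟨U₁, hU₁, hs₁, hC2₁, hw₁⟩ := hp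
  obtain ⟨Uu, hUu, hsu, hC2u, hwu⟩ := hu
  have hIcc : Set.Icc c d ⊆ Set.Icc cu du := Set.Icc_subset_Icc hcu hdu
  have hU : IsOpen (U₁ ∩ Uu) := hU₁.inter hUu
  have hmapu : ∀ q : ℝ × ℝ, q ∈ (Set.Icc c d ×ˢ Set.Icc T₀ T₁) →
      q ∈ (Set.Icc cu du ×ˢ Set.Icc T₀ T₁) := fun q hq => ⟨hIcc hq.1, hq.2⟩
  have hrsub : (Set.Icc c d ×ˢ Set.Icc T₀ T₁) ⊆ U₁ ∩ Uu :=
    fun q hq => ⟨hs₁ hq, hsu (hmapu q hq)⟩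
  have hC2d : ContDiffOn ℝ 2 (fun q : ℝ × ℝ => p q.1 q.2 - u q.1 q.2) (U₁ ∩ Uu) :=
    (hC2₁.mono Set.inter_subset_left).sub (hC2u.mono Set.inter_subset_right)
  have e₁ : ∀ q ∈ (Set.Icc c d ×ˢ Set.Icc T₀ T₁),
      fderiv ℝ (fderiv ℝ (fun q : ℝ × ℝ => p q.1 q.2)) q ((0:ℝ),(1:ℝ)) ((0:ℝ),(1:ℝ)) =
        a ^ 2 * fderiv ℝ (fderiv ℝ (fun q : ℝ × ℝ => p q.1 q.2)) q ((1:ℝ),(0:ℝ)) ((1:ℝ),(0:ℝ)) := by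
    rintro ⟨x', t'⟩ hq
    have hqU := hs₁ hq
    have := hw₁ x' hq.1 t' hq.2
    rwa [second_t hU₁ hC2₁ hqU, second_x hU₁ hC2₁ hqU] at this
  have eu : ∀ q ∈ (Set.Icc c d ×ˢ Set.Icc T₀ T₁),
      fderiv ℝ (fderiv ℝ (fun q : ℝ × ℝ => u q.1 q.2)) q ((0:ℝ),(1:ℝ)) ((0:ℝ),(1:ℝ)) =
        a ^ 2 * fderiv ℝ (fderiv ℝ (fun q : ℝ × ℝ => u q.1 q.2)) q ((1:ℝ),(0:ℝ)) ((1:ℝ),(0:ℝ)) := by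
    rintro ⟨x', t'⟩ hq
    have hqm := hmapu _ hq
    have hqU := hsu hqm
    have := hwu x' hqm.1 t' hqm.2
    rwa [second_t hUu hC2u hqU, second_x hUu hC2u hqU] at this
  have hfd : ∀ r ∈ U₁ ∩ Uu, fderiv ℝ (fun q : ℝ × ℝ => p q.1 q.2 - u q.1 q.2) r =
      fderiv ℝ (fun q : ℝ × ℝ => p q.1 q.2) r - fderiv ℝ (fun q : ℝ × ℝ => u q.1 q.2) r :=
    fun r hr => fderiv_sub (differentiableAt_of_contDiffOn hU₁ hC2₁ hr.1)
      (differentiableAt_of_contDiffOn hUu hC2u hr.2)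
  have hAd : ∀ q ∈ (Set.Icc c d ×ˢ Set.Icc T₀ T₁), ∀ e v : ℝ × ℝ,
      fderiv ℝ (fderiv ℝ (fun q : ℝ × ℝ => p q.1 q.2 - u q.1 q.2)) q e v =
        fderiv ℝ (fderiv ℝ (fun q : ℝ × ℝ => p q.1 q.2)) q e v -
          fderiv ℝ (fderiv ℝ (fun q : ℝ × ℝ => u q.1 q.2)) q e v := by
    intro q hq e v
    have hqU := hrsub hq
    have hev : fderiv ℝ (fun q : ℝ × ℝ => p q.1 q.2 - u q.1 q.2) =ᶠ[nhds q]
        (fun r => fderiv ℝ (fun q : ℝ × ℝ => p q.1 q.2) r -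
          fderiv ℝ (fun q : ℝ × ℝ => u q.1 q.2) r) := by
      filter_upwards [hU.mem_nhds hqU] with r hr using hfd r hr
    rw [hev.fderiv_eq, fderiv_fun_sub (fderiv_differentiableAt hU₁ hC2₁ hqU.1)
      (fderiv_differentiableAt hUu hC2u hqU.2)]
    simp
  have hwaveD : ∀ q ∈ (Set.Icc c d ×ˢ Set.Icc T₀ T₁),
      fderiv ℝ (fderiv ℝ (fun q : ℝ × ℝ => p q.1 q.2 - u q.1 q.2)) q
          ((0:ℝ),(1:ℝ)) ((0:ℝ),(1:ℝ)) =
        a ^ 2 * fderiv ℝ (fderiv ℝ (fun q : ℝ × ℝ => p q.1 q.2 - u q.1 q.2)) q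
          ((1:ℝ),(0:ℝ)) ((1:ℝ),(0:ℝ)) := by
    intro q hq
    rw [hAd q hq, hAd q hq]
    linear_combination e₁ q hq - eu q hq
  have hT₀T₁ : T₀ ≤ T₁ := le_trans ht.1 ht.2
  have hinitD : ∀ y ∈ Set.Icc c d, p y T₀ - u y T₀ = 0 :=
    fun y hy => sub_eq_zero.mpr (hinit y hy)
  have hinit'D : ∀ y ∈ Set.Icc c d, deriv (fun s => p y s - u y s) T₀ = 0 := by
    intro y hy
    have hmem : ((y, T₀) : ℝ × ℝ) ∈ (Set.Icc c d ×ˢ Set.Icc T₀ T₁) :=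
      ⟨hy, ⟨le_rfl, hT₀T₁⟩⟩
    have d₁ := slice_t_hasDerivAt hU₁ hC2₁ (hs₁ hmem)
    have du := slice_t_hasDerivAt hUu hC2u (hsu (hmapu _ hmem))
    rw [(d₁.fun_sub du).deriv, ← d₁.deriv, ← du.deriv, hinit' y hy, sub_self]
  have := cone_vanish (w := fun y s => p y s - u y s) ha hcd hU hrsub hC2d hwaveD
    hinitD hinit'D ht hx1 hx2
  exact sub_eq_zero.mp this

end WaveHelpers

/-- Agreement of the two predictive solutions on the overlap: both equal the
true solution at any overlap point whose backward light cone reaches neither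
input boundary. -/
theorem predictive_solutions_agree_on_overlap
    (a T_s τ X_A X1A X2A X1B X2B X_B : ℝ)
    (ha : 0 < a) (hτ : 0 < τ)
    (hA : X_A = X1A) (h1 : X1A < X2A) (h2 : X2A < X1B) (h3 : X1B < X2B)
    (hB : X2B = X_B)
    (u phat₁ phat₂ : ℝ → ℝ → ℝ)
    (hu : IsWaveSolution a X_A X_B T_s (T_s + τ) u)
    (hp₁ : IsWaveSolution a X1A X1B T_s (T_s + τ) phat₁)
    (hp₂ : IsWaveSolution a X2A X2B T_s (T_s + τ) phat₂)
    (hinit₁ : ∀ x ∈ Set.Icc X1A X1B, phat₁ x T_s = u x T_s)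
    (hinit₁' : ∀ x ∈ Set.Icc X1A X1B,
      deriv (fun s => phat₁ x s) T_s = deriv (fun s => u x s) T_s)
    (hDir₁ : ∀ t ∈ Set.Icc T_s (T_s + τ), phat₁ X1A t = u X1A t)
    (hzero₁ : ∀ t ∈ Set.Icc T_s (T_s + τ), deriv (fun y => phat₁ y t) X1B = 0)
    (hinit₂ : ∀ x ∈ Set.Icc X2A X2B, phat₂ x T_s = u x T_s)
    (hinit₂' : ∀ x ∈ Set.Icc X2A X2B,
      deriv (fun s => phat₂ x s) T_s = deriv (fun s => u x s) T_s)
    (hDir₂ : ∀ t ∈ Set.Icc T_s (T_s + τ), phat₂ X2B t = u X2B t)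
    (hzero₂ : ∀ t ∈ Set.Icc T_s (T_s + τ), deriv (fun y => phat₂ y t) X2A = 0) :
    ∀ x ∈ Set.Icc X2A X1B, ∀ t ∈ Set.Icc T_s (T_s + τ),
      a * (t - T_s) ≤ min (X1B - x) (x - X2A) →
      phat₁ x t = u x t ∧ u x t = phat₂ x t := by
  intro x hx t ht hcone
  have hm1 := le_trans hcone (min_le_left _ _)
  have hm2 := le_trans hcone (min_le_right _ _)
  constructor
  · exact two_sol_cone (cu := X_A) (du := X_B) ha (h1.trans h2) (le_of_eq hA)
      (by rw [← hB]; linarith) hp₁ hu hinit₁ hinit₁' ht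
      (by linarith) (by linarith)
  · exact (two_sol_cone (cu := X_A) (du := X_B) ha (h2.trans h3) (by rw [hA]; linarith)
      (le_of_eq hB) hp₂ hu hinit₂ hinit₂' ht
      (by linarith) (by linarith)).symm
end

section
/- (Waveform Time Span Theorem.) Let a > 0, T_s ∈ ℝ, τ > 0, and X_A = X_{1A} < X_{2A} < X_{1B} < X_{2B} = X_B, and set ΔX = X_{1B} − X_{2A} (the width of the overlapping region). Let u, p̂₁, p̂₂ be as follows: u is a classical solution of the 1-D wave equation with speed a on [X_A, X_B] × [T_s, T_s + τ]; p̂₁ is a classical solution on [X_{1A}, X_{1B}] × [T_s, T_s + τ] with initial data p̂₁(·,T_s) = u(·,T_s), ∂p̂₁/∂t(·,T_s) = ∂u/∂t(·,T_s), Dirichlet data p̂₁(X_{1A},t) = u(X_{1A},t), and zero flux ∂p̂₁/∂x(X_{1B},t) = 0; p̂₂ is a classical solution on [X_{2A}, X_{2B}] × [T_s, T_s + τ] with initial data p̂₂(·,T_s) = u(·,T_s), ∂p̂₂/∂t(·,T_s) = ∂u/∂t(·,T_s), Dirichlet data p̂₂(X_{2B},t) = u(X_{2B},t), and zero flux ∂p̂₂/∂x(X_{2A},t)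 = 0. Then: (i) the supremum over x ∈ [X_{2A}, X_{1B}] of min(X_{1B} − x, x − X_{2A})/a equals ΔX/(2a), and it is attained exactly at the midpoint x_m = (X_{2A} + X_{1B})/2; and (ii) at the midpoint x_m, p̂₁(x_m, t) = p̂₂(x_m, t) = u(x_m, t) for all t ∈ [T_s, T_s + τ] with t − T_s ≤ ΔX/(2a). In other words, the waveform time span guaranteed by finite propagation speed at any overlap point is at most ΔX/(2a), i.e. half the minimum time the wave needs to transmit through the overlapping region. -/
open Set Filter Topology

private lemma hasDerivAt_slice_t {W : ℝ × ℝ → ℝ} {x t : ℝ}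
    (h : DifferentiableAt ℝ W (x, t)) :
    HasDerivAt (fun s => W (x, s)) (fderiv ℝ W (x, t) (0, 1)) t := by
  have hγ : HasDerivAt (fun s : ℝ => ((x, s) : ℝ × ℝ)) (0, 1) t :=
    (hasDerivAt_const t x).prodMk (hasDerivAt_id t)
  exact h.hasFDerivAt.comp_hasDerivAt t hγ

private lemma hasDerivAt_slice_x {W : ℝ × ℝ → ℝ} {x t : ℝ}
    (h : DifferentiableAt ℝ W (x, t)) :
    HasDerivAt (fun y => W (y, t)) (fderiv ℝ W (x, t) (1, 0)) x := by
  have hγ : HasDerivAt (fun y : ℝ => ((y, t) : ℝ × ℝ)) (1, 0) x :=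
    (hasDerivAt_id x).prodMk (hasDerivAt_const x t)
  exact h.hasFDerivAt.comp_hasDerivAt x hγ

private lemma diffAt_of_C1 {F : Type*} [NormedAddCommGroup F] [NormedSpace ℝ F]
    {W : ℝ × ℝ → F} {U : Set (ℝ × ℝ)} (hU : IsOpen U)
    (hW : ContDiffOn ℝ 1 W U) {q : ℝ × ℝ} (hq : q ∈ U) :
    DifferentiableAt ℝ W q :=
  (hW.differentiableOn one_ne_zero).differentiableAt (hU.mem_nhds hq)

private lemma pd_contDiffOn {W : ℝ × ℝ → ℝ} {U : Set (ℝ × ℝ)} (hU : IsOpen U)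
    (hW : ContDiffOn ℝ 2 W U) (v : ℝ × ℝ) :
    ContDiffOn ℝ 1 (fun r => fderiv ℝ W r v) U :=
  (hW.fderiv_of_isOpen hU (by norm_num)).clm_apply contDiffOn_const

private lemma second_deriv_t {W : ℝ × ℝ → ℝ} {U : Set (ℝ × ℝ)} (hU : IsOpen U)
    (hW : ContDiffOn ℝ 2 W U) {x t : ℝ} (hq : (x, t) ∈ U) :
    deriv (deriv (fun s => W (x, s))) t
      = fderiv ℝ (fun r => fderiv ℝ W r (0, 1)) (x, t) (0, 1) := by
  have hWt := pd_contDiffOn hU hW (0, 1)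
  have hev : deriv (fun s => W (x, s)) =ᶠ[𝓝 t] fun s => fderiv ℝ W (x, s) (0, 1) := by
    have hop : IsOpen {s : ℝ | (x, s) ∈ U} := hU.preimage (by fun_prop)
    filter_upwards [hop.mem_nhds hq] with s hs
    exact (hasDerivAt_slice_t (diffAt_of_C1 hU (hW.of_le one_le_two) hs)).deriv
  rw [hev.deriv_eq]
  exact (hasDerivAt_slice_t (diffAt_of_C1 hU hWt hq)).deriv

private lemma second_deriv_x {W : ℝ × ℝ → ℝ} {U : Set (ℝ × ℝ)} (hU : IsOpen U)
    (hW : ContDiffOn ℝ 2 W U) {x t : ℝ} (hq : (x, t) ∈ U) :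
    deriv (deriv (fun y => W (y, t))) x
      = fderiv ℝ (fun r => fderiv ℝ W r (1, 0)) (x, t) (1, 0) := by
  have hWx := pd_contDiffOn hU hW (1, 0)
  have hev : deriv (fun y => W (y, t)) =ᶠ[𝓝 x] fun y => fderiv ℝ W (y, t) (1, 0) := by
    have hop : IsOpen {y : ℝ | (y, t) ∈ U} := hU.preimage (by fun_prop)
    filter_upwards [hop.mem_nhds hq] with y hy
    exact (hasDerivAt_slice_x (diffAt_of_C1 hU (hW.of_le one_le_two) hy)).deriv
  rw [hev.deriv_eq]
  exact (hasDerivAt_slice_x (diffAt_of_C1 hU hWx hq)).deriv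

private lemma pd_sub {P Q : ℝ × ℝ → ℝ} {U : Set (ℝ × ℝ)} (hU : IsOpen U)
    (hP : ContDiffOn ℝ 1 P U) (hQ : ContDiffOn ℝ 1 Q U) (v : ℝ × ℝ) {q : ℝ × ℝ}
    (hq : q ∈ U) :
    fderiv ℝ (fun r => P r - Q r) q v = fderiv ℝ P q v - fderiv ℝ Q q v := by
  rw [fderiv_fun_sub (diffAt_of_C1 hU hP hq) (diffAt_of_C1 hU hQ hq)]
  rfl

private lemma pd2_sub {P Q : ℝ × ℝ → ℝ} {U : Set (ℝ × ℝ)} (hU : IsOpen U)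
    (hP : ContDiffOn ℝ 2 P U) (hQ : ContDiffOn ℝ 2 Q U) (v z : ℝ × ℝ) {q : ℝ × ℝ}
    (hq : q ∈ U) :
    fderiv ℝ (fun r => fderiv ℝ (fun r' => P r' - Q r') r v) q z
      = fderiv ℝ (fun r => fderiv ℝ P r v) q z
        - fderiv ℝ (fun r => fderiv ℝ Q r v) q z := by
  have hev : (fun r => fderiv ℝ (fun r' => P r' - Q r') r v)
      =ᶠ[𝓝 q] fun r => fderiv ℝ P r v - fderiv ℝ Q r v := by
    filter_upwards [hU.mem_nhds hq] with r hr
    exact pd_sub hU (hP.of_le one_le_two) (hQ.of_le one_le_two) v hr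
  rw [hev.fderiv_eq, fderiv_fun_sub (diffAt_of_C1 hU (pd_contDiffOn hU hP v) hq)
    (diffAt_of_C1 hU (pd_contDiffOn hU hQ v) hq)]
  rfl

private lemma fderiv_pd (W : ℝ × ℝ → ℝ) (v : ℝ × ℝ) {q : ℝ × ℝ}
    (hdf : DifferentiableAt ℝ (fderiv ℝ W) q) (z : ℝ × ℝ) :
    fderiv ℝ (fun r => fderiv ℝ W r v) q z = fderiv ℝ (fderiv ℝ W) q z v := by
  have h := ((ContinuousLinearMap.apply ℝ ℝ v).hasFDerivAt.comp q hdf.hasFDerivAt).fderiv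
  have he : (fun r => fderiv ℝ W r v)
      = (ContinuousLinearMap.apply ℝ ℝ v) ∘ (fderiv ℝ W) := rfl
  rw [he, h]; rfl

private lemma key_cone {a : ℝ} (ha : 0 < a) {c d T₀ T₁ : ℝ}
    {W : ℝ × ℝ → ℝ} {U : Set (ℝ × ℝ)} (hU : IsOpen U)
    (hsub : (Set.Icc c d ×ˢ Set.Icc T₀ T₁) ⊆ U)
    (hW : ContDiffOn ℝ 2 W U)
    (hwave : ∀ q ∈ (Set.Icc c d ×ˢ Set.Icc T₀ T₁),
      fderiv ℝ (fun r => fderiv ℝ W r (0, 1)) q (0, 1)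
        = a ^ 2 * fderiv ℝ (fun r => fderiv ℝ W r (1, 0)) q (1, 0))
    (hinit : ∀ x ∈ Set.Icc c d, W (x, T₀) = 0)
    (hinit' : ∀ x ∈ Set.Icc c d, fderiv ℝ W (x, T₀) (0, 1) = 0)
    {x t : ℝ} (ht : t ∈ Set.Icc T₀ T₁)
    (hc : c < x - a * (t - T₀)) (hd : x + a * (t - T₀) < d) :
    fderiv ℝ W (x, t) (0, 1) = 0 := by
  set Wt : ℝ × ℝ → ℝ := fun r => fderiv ℝ W r (0, 1) with hWt_def
  set Wx : ℝ × ℝ → ℝ := fun r => fderiv ℝ W r (1, 0) with hWx_def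
  have hWtC : ContDiffOn ℝ 1 Wt U := pd_contDiffOn hU hW (0, 1)
  have hWxC : ContDiffOn ℝ 1 Wx U := pd_contDiffOn hU hW (1, 0)
  have hWf : ContDiffOn ℝ 1 (fderiv ℝ W) U := hW.fderiv_of_isOpen hU (by norm_num)
  have haT : 0 ≤ a * (t - T₀) := mul_nonneg ha.le (by linarith [ht.1])
  -- symmetry of second derivatives, and the zero directional derivative of Wt - b*Wx
  have hkey : ∀ b : ℝ, b ^ 2 = a ^ 2 → ∀ q ∈ (Set.Icc c d ×ˢ Set.Icc T₀ T₁),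
      fderiv ℝ Wt q (b, 1) - b * fderiv ℝ Wx q (b, 1) = 0 := by
    intro b hb2 q hq
    have hqU : q ∈ U := hsub hq
    have hdf : DifferentiableAt ℝ (fderiv ℝ W) q := diffAt_of_C1 hU hWf hqU
    have hsym : IsSymmSndFDerivAt ℝ W q :=
      (hW.contDiffAt (hU.mem_nhds hqU)).isSymmSndFDerivAt (by simp)
    have hmix : fderiv ℝ Wt q (1, 0) = fderiv ℝ Wx q (0, 1) := by
      rw [hWt_def, hWx_def, fderiv_pd W _ hdf, fderiv_pd W _ hdf]
      exact hsym (1, 0) (0, 1)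
    have hwq := hwave q hq
    have hdec : ((b, 1) : ℝ × ℝ) = b • ((1 : ℝ), (0 : ℝ)) + ((0 : ℝ), (1 : ℝ)) := by
      simp [Prod.ext_iff]
    rw [hdec, map_add, map_add, map_smul, map_smul, smul_eq_mul, smul_eq_mul]
    rw [hmix]
    linear_combination hwq - (fderiv ℝ Wx q (1, 0)) * hb2
  -- characteristic constancy
  have hchar : ∀ b : ℝ, b = a ∨ b = -a →
      Wt (x, t) - b * Wx (x, t) = 0 := by
    intro b hb
    have habs : |b| = a := by
      rcases hb with rfl | rfl
      · exact abs_of_pos ha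
      · rw [abs_neg]; exact abs_of_pos ha
    have hb2 : b ^ 2 = a ^ 2 := by rcases hb with rfl | rfl <;> ring
    set γ : ℝ → ℝ × ℝ := fun σ => (x + b * (σ - t), σ) with hγ_def
    have hmem : ∀ σ ∈ Set.Icc T₀ t, γ σ ∈ (Set.Icc c d ×ˢ Set.Icc T₀ T₁) := by
      intro σ hσ
      have h1 : |b * (σ - t)| ≤ a * (t - T₀) := by
        rw [abs_mul, habs, abs_of_nonpos (by linarith [hσ.2])]
        exact mul_le_mul_of_nonneg_left (by linarith [hσ.1]) ha.le
      have h1' := abs_le.1 h1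
      refine Set.mem_prod.2 ⟨Set.mem_Icc.2 ⟨?_, ?_⟩, Set.mem_Icc.2 ⟨hσ.1, le_trans hσ.2 ht.2⟩⟩
      · show c ≤ x + b * (σ - t)
        linarith [h1'.1]
      · show x + b * (σ - t) ≤ d
        linarith [h1'.2]
    -- φ has zero derivative
    set φ : ℝ → ℝ := fun σ => Wt (γ σ) - b * Wx (γ σ) with hφ_def
    have hφd : ∀ σ ∈ Set.Icc T₀ t, HasDerivAt φ 0 σ := by
      intro σ hσ
      have hqr := hmem σ hσ
      have hqU : γ σ ∈ U := hsub hqr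
      have hγd : HasDerivAt γ (b, 1) σ := by
        have h1 : HasDerivAt (fun σ : ℝ => x + b * (σ - t)) (b * 1) σ :=
          (((hasDerivAt_id σ).sub_const t).const_mul b).const_add x
        rw [mul_one] at h1
        exact h1.prodMk (hasDerivAt_id σ)
      have hWtq : HasDerivAt (fun σ => Wt (γ σ)) (fderiv ℝ Wt (γ σ) (b, 1)) σ :=
        (diffAt_of_C1 hU hWtC hqU).hasFDerivAt.comp_hasDerivAt σ hγd
      have hWxq : HasDerivAt (fun σ => Wx (γ σ)) (fderiv ℝ Wx (γ σ) (b, 1)) σ :=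
        (diffAt_of_C1 hU hWxC hqU).hasFDerivAt.comp_hasDerivAt σ hγd
      have := hWtq.sub (hWxq.const_mul b)
      rwa [hkey b hb2 (γ σ) hqr] at this
    have hcont : ContinuousOn φ (Set.Icc T₀ t) := fun σ hσ =>
      (hφd σ hσ).continuousAt.continuousWithinAt
    have hconst := constant_of_has_deriv_right_zero hcont
      (fun σ hσ => (hφd σ (Set.mem_Icc.2 ⟨hσ.1, hσ.2.le⟩)).hasDerivWithinAt) t
      (Set.mem_Icc.2 ⟨ht.1, le_refl t⟩)
    -- evaluate at the base point
    have hx0 : x + b * (T₀ - t) ∈ Set.Ioo c d := by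
      have h1 : |b * (T₀ - t)| ≤ a * (t - T₀) := by
        rw [abs_mul, habs, abs_of_nonpos (by linarith [ht.1])]
        exact mul_le_mul_of_nonneg_left (by linarith) ha.le
      have h1' := abs_le.1 h1
      exact ⟨by linarith [h1'.1], by linarith [h1'.2]⟩
    have hWt0 : Wt (x + b * (T₀ - t), T₀) = 0 := hinit' _ (Set.Ioo_subset_Icc_self hx0)
    have hWx0 : Wx (x + b * (T₀ - t), T₀) = 0 := by
      have hdiff : DifferentiableAt ℝ W (x + b * (T₀ - t), T₀) := by
        refine diffAt_of_C1 hU (hW.of_le one_le_two) (hsub ?_)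
        exact Set.mem_prod.2 ⟨Set.Ioo_subset_Icc_self hx0,
          Set.mem_Icc.2 ⟨le_refl T₀, by linarith [ht.1, ht.2]⟩⟩
      have hder := (hasDerivAt_slice_x hdiff).deriv
      have hev : (fun y => W (y, T₀)) =ᶠ[𝓝 (x + b * (T₀ - t))] fun _ => (0 : ℝ) := by
        filter_upwards [isOpen_Ioo.mem_nhds hx0] with y hy
        exact hinit y (Set.Ioo_subset_Icc_self hy)
      show fderiv ℝ W (x + b * (T₀ - t), T₀) (1, 0) = 0
      rw [← hder, hev.deriv_eq, deriv_const]
    have hφT₀ : φ T₀ = 0 := by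
      simp only [hφ_def, hγ_def, hWt0, hWx0]
      ring
    have hφt : φ t = Wt (x, t) - b * Wx (x, t) := by
      simp [hφ_def, hγ_def]
    rw [← hφt, hconst, hφT₀]
  have hFa := hchar a (Or.inl rfl)
  have hFna := hchar (-a) (Or.inr rfl)
  have : Wt (x, t) = 0 := by linarith
  exact this

private lemma pred_eq {a T₀ T₁ c d : ℝ} (ha : 0 < a) (hT : T₀ ≤ T₁)
    {p u : ℝ → ℝ → ℝ}
    (hp : IsWaveSolution a c d T₀ T₁ p)
    (hu : IsWaveSolution a c d T₀ T₁ u)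
    (hinit : ∀ x ∈ Set.Icc c d, p x T₀ = u x T₀)
    (hinit' : ∀ x ∈ Set.Icc c d,
      deriv (fun s => p x s) T₀ = deriv (fun s => u x s) T₀)
    {x t : ℝ} (hx : x ∈ Set.Icc c d) (ht : t ∈ Set.Icc T₀ T₁)
    (hcone : ∀ σ ∈ Set.Ico T₀ t, c < x - a * (σ - T₀) ∧ x + a * (σ - T₀) < d) :
    p x t = u x t := by
  obtain ⟨U₁, hU₁o, hU₁s, hC₁, hw₁⟩ := hp
  obtain ⟨U₂, hU₂o, hU₂s, hC₂, hw₂⟩ := hu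
  have hUo : IsOpen (U₁ ∩ U₂) := hU₁o.inter hU₂o
  have hUs : (Set.Icc c d ×ˢ Set.Icc T₀ T₁) ⊆ U₁ ∩ U₂ := Set.subset_inter hU₁s hU₂s
  have hPC : ContDiffOn ℝ 2 (fun q : ℝ × ℝ => p q.1 q.2) (U₁ ∩ U₂) :=
    hC₁.mono Set.inter_subset_left
  have hQC : ContDiffOn ℝ 2 (fun q : ℝ × ℝ => u q.1 q.2) (U₁ ∩ U₂) :=
    hC₂.mono Set.inter_subset_right
  have hWC : ContDiffOn ℝ 2 (fun q : ℝ × ℝ => p q.1 q.2 - u q.1 q.2) (U₁ ∩ U₂) :=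
    hPC.sub hQC
  have hwave : ∀ q ∈ (Set.Icc c d ×ˢ Set.Icc T₀ T₁),
      fderiv ℝ (fun r => fderiv ℝ (fun q : ℝ × ℝ => p q.1 q.2 - u q.1 q.2) r (0, 1)) q (0, 1)
        = a ^ 2 * fderiv ℝ (fun r => fderiv ℝ (fun q : ℝ × ℝ => p q.1 q.2 - u q.1 q.2) r (1, 0)) q (1, 0) := by
    rintro ⟨y, s⟩ hq
    have hq1 : y ∈ Set.Icc c d := hq.1
    have hq2 : s ∈ Set.Icc T₀ T₁ := hq.2
    have hqU : (y, s) ∈ U₁ ∩ U₂ := hUs hq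
    have h01 : fderiv ℝ (fun r => fderiv ℝ (fun q : ℝ × ℝ => p q.1 q.2 - u q.1 q.2) r (0, 1)) (y, s) (0, 1)
        = fderiv ℝ (fun r => fderiv ℝ (fun q : ℝ × ℝ => p q.1 q.2) r (0, 1)) (y, s) (0, 1)
          - fderiv ℝ (fun r => fderiv ℝ (fun q : ℝ × ℝ => u q.1 q.2) r (0, 1)) (y, s) (0, 1) :=
      pd2_sub hUo hPC hQC (0, 1) (0, 1) hqU
    have h10 : fderiv ℝ (fun r => fderiv ℝ (fun q : ℝ × ℝ => p q.1 q.2 - u q.1 q.2) r (1, 0)) (y, s) (1, 0)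
        = fderiv ℝ (fun r => fderiv ℝ (fun q : ℝ × ℝ => p q.1 q.2) r (1, 0)) (y, s) (1, 0)
          - fderiv ℝ (fun r => fderiv ℝ (fun q : ℝ × ℝ => u q.1 q.2) r (1, 0)) (y, s) (1, 0) :=
      pd2_sub hUo hPC hQC (1, 0) (1, 0) hqU
    have hAP : fderiv ℝ (fun r => fderiv ℝ (fun q : ℝ × ℝ => p q.1 q.2) r (0, 1)) (y, s) (0, 1)
        = a ^ 2 * fderiv ℝ (fun r => fderiv ℝ (fun q : ℝ × ℝ => p q.1 q.2) r (1, 0)) (y, s) (1, 0) := by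
      rw [← second_deriv_t hU₁o hC₁ (hU₁s hq), ← second_deriv_x hU₁o hC₁ (hU₁s hq)]
      exact hw₁ y hq1 s hq2
    have hAQ : fderiv ℝ (fun r => fderiv ℝ (fun q : ℝ × ℝ => u q.1 q.2) r (0, 1)) (y, s) (0, 1)
        = a ^ 2 * fderiv ℝ (fun r => fderiv ℝ (fun q : ℝ × ℝ => u q.1 q.2) r (1, 0)) (y, s) (1, 0) := by
      rw [← second_deriv_t hU₂o hC₂ (hU₂s hq), ← second_deriv_x hU₂o hC₂ (hU₂s hq)]
      exact hw₂ y hq1 s hq2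
    rw [h01, h10, hAP, hAQ]
    ring
  have hT₀ : T₀ ∈ Set.Icc T₀ T₁ := Set.mem_Icc.2 ⟨le_refl T₀, hT⟩
  have hinitW : ∀ z ∈ Set.Icc c d,
      (fun q : ℝ × ℝ => p q.1 q.2 - u q.1 q.2) (z, T₀) = 0 := by
    intro z hz
    show p z T₀ - u z T₀ = 0
    rw [hinit z hz, sub_self]
  have hinitW' : ∀ z ∈ Set.Icc c d,
      fderiv ℝ (fun q : ℝ × ℝ => p q.1 q.2 - u q.1 q.2) (z, T₀) (0, 1) = 0 := by
    intro z hz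
    have hzU : (z, T₀) ∈ U₁ ∩ U₂ := hUs (Set.mem_prod.2 ⟨hz, hT₀⟩)
    have hs : fderiv ℝ (fun q : ℝ × ℝ => p q.1 q.2 - u q.1 q.2) (z, T₀) (0, 1)
        = fderiv ℝ (fun q : ℝ × ℝ => p q.1 q.2) (z, T₀) (0, 1)
          - fderiv ℝ (fun q : ℝ × ℝ => u q.1 q.2) (z, T₀) (0, 1) :=
      pd_sub hUo (hPC.of_le one_le_two) (hQC.of_le one_le_two) (0, 1) hzU
    have hp' : fderiv ℝ (fun q : ℝ × ℝ => p q.1 q.2) (z, T₀) (0, 1)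
        = deriv (fun s => p z s) T₀ :=
      (hasDerivAt_slice_t (diffAt_of_C1 hUo (hPC.of_le one_le_two) hzU)).deriv.symm
    have hu' : fderiv ℝ (fun q : ℝ × ℝ => u q.1 q.2) (z, T₀) (0, 1)
        = deriv (fun s => u z s) T₀ :=
      (hasDerivAt_slice_t (diffAt_of_C1 hUo (hQC.of_le one_le_two) hzU)).deriv.symm
    rw [hs, hp', hu', hinit' z hz, sub_self]
  -- the time slice at x is constant on [T₀, t]
  have hmemU : ∀ σ ∈ Set.Icc T₀ t, (x, σ) ∈ U₁ ∩ U₂ := by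
    intro σ hσ
    exact hUs (Set.mem_prod.2 ⟨hx, Set.mem_Icc.2 ⟨hσ.1, le_trans hσ.2 ht.2⟩⟩)
  have hcontW : ContinuousOn (fun σ => (fun q : ℝ × ℝ => p q.1 q.2 - u q.1 q.2) (x, σ))
      (Set.Icc T₀ t) := by
    intro σ hσ
    exact (hasDerivAt_slice_t (diffAt_of_C1 hUo (hWC.of_le one_le_two)
      (hmemU σ hσ))).continuousAt.continuousWithinAt
  have hderW : ∀ σ ∈ Set.Ico T₀ t,
      HasDerivWithinAt (fun σ => (fun q : ℝ × ℝ => p q.1 q.2 - u q.1 q.2) (x, σ))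
        0 (Set.Ici σ) σ := by
    intro σ hσ
    have hσ' : σ ∈ Set.Icc T₀ T₁ := Set.mem_Icc.2 ⟨hσ.1, le_trans hσ.2.le ht.2⟩
    have hzero := key_cone ha hUo hUs hWC hwave hinitW hinitW' hσ'
      (hcone σ hσ).1 (hcone σ hσ).2
    have hda := hasDerivAt_slice_t (diffAt_of_C1 hUo (hWC.of_le one_le_two)
      (hmemU σ (Set.mem_Icc.2 ⟨hσ.1, hσ.2.le⟩)))
    rw [hzero] at hda
    exact hda.hasDerivWithinAt
  have hfinal := constant_of_has_deriv_right_zero hcontW hderW t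
    (Set.mem_Icc.2 ⟨ht.1, le_refl t⟩)
  have : p x t - u x t = p x T₀ - u x T₀ := hfinal
  rw [hinit x hx, sub_self] at this
  linarith [this]

private lemma wave_restrict {a c d c' d' T₀ T₁ : ℝ} {p : ℝ → ℝ → ℝ}
    (h : IsWaveSolution a c d T₀ T₁ p) (hc : c ≤ c') (hd : d' ≤ d) :
    IsWaveSolution a c' d' T₀ T₁ p := by
  obtain ⟨U, hUo, hUs, hC, hw⟩ := h
  exact ⟨U, hUo,
    Set.Subset.trans (Set.prod_mono (Set.Icc_subset_Icc hc hd) (le_refl _)) hUs, hC,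
    fun x hx t ht => hw x (Set.Icc_subset_Icc hc hd hx) t ht⟩

/-- Waveform Time Span Theorem: the time span guaranteed by finite propagation
speed at an overlap point x, namely min(X₁B − x, x − X₂A)/a, has supremum
ΔX/(2a) over the overlap (ΔX = X₁B − X₂A), attained exactly at the midpoint;
and at the midpoint both predictive solutions equal the true solution for all
t with t − Tₛ ≤ ΔX/(2a). -/
theorem waveform_time_span_theorem
    (a T_s τ X_A X1A X2A X1B X2B X_B : ℝ)
    (ha : 0 < a) (hτ : 0 < τ)
    (hA : X_A = X1A) (h1 : X1A < X2A) (h2 : X2A < X1B) (h3 : X1B < X2B)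
    (hB : X2B = X_B)
    (u phat₁ phat₂ : ℝ → ℝ → ℝ)
    (hu : IsWaveSolution a X_A X_B T_s (T_s + τ) u)
    (hp₁ : IsWaveSolution a X1A X1B T_s (T_s + τ) phat₁)
    (hp₂ : IsWaveSolution a X2A X2B T_s (T_s + τ) phat₂)
    (hinit₁ : ∀ x ∈ Set.Icc X1A X1B, phat₁ x T_s = u x T_s)
    (hinit₁' : ∀ x ∈ Set.Icc X1A X1B,
      deriv (fun s => phat₁ x s) T_s = deriv (fun s => u x s) T_s)
    (hDir₁ : ∀ t ∈ Set.Icc T_s (T_s + τ), phat₁ X1A t = u X1A t)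
    (hzero₁ : ∀ t ∈ Set.Icc T_s (T_s + τ), deriv (fun y => phat₁ y t) X1B = 0)
    (hinit₂ : ∀ x ∈ Set.Icc X2A X2B, phat₂ x T_s = u x T_s)
    (hinit₂' : ∀ x ∈ Set.Icc X2A X2B,
      deriv (fun s => phat₂ x s) T_s = deriv (fun s => u x s) T_s)
    (hDir₂ : ∀ t ∈ Set.Icc T_s (T_s + τ), phat₂ X2B t = u X2B t)
    (hzero₂ : ∀ t ∈ Set.Icc T_s (T_s + τ), deriv (fun y => phat₂ y t) X2A = 0) :
    IsGreatest ((fun x => min (X1B - x) (x - X2A) / a) '' Set.Icc X2A X1B)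
      ((X1B - X2A) / (2 * a)) ∧
    (∀ x ∈ Set.Icc X2A X1B,
      (min (X1B - x) (x - X2A) / a = (X1B - X2A) / (2 * a) ↔
        x = (X2A + X1B) / 2)) ∧
    (∀ t ∈ Set.Icc T_s (T_s + τ), t - T_s ≤ (X1B - X2A) / (2 * a) →
      phat₁ ((X2A + X1B) / 2) t = u ((X2A + X1B) / 2) t ∧
      phat₂ ((X2A + X1B) / 2) t = u ((X2A + X1B) / 2) t) := by
  have hmid_val : min (X1B - (X2A + X1B) / 2) ((X2A + X1B) / 2 - X2A) / a
      = (X1B - X2A) / (2 * a) := by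
    rw [show X1B - (X2A + X1B) / 2 = (X1B - X2A) / 2 by ring,
        show (X2A + X1B) / 2 - X2A = (X1B - X2A) / 2 by ring, min_self, div_div]
  have haΔ : a * ((X1B - X2A) / (2 * a)) = (X1B - X2A) / 2 := by
    field_simp
  refine ⟨⟨⟨(X2A + X1B) / 2, ⟨by linarith, by linarith⟩, hmid_val⟩, ?_⟩, ?_, ?_⟩
  · -- upper bound
    rintro y ⟨x, hx, rfl⟩
    have hmin : min (X1B - x) (x - X2A) ≤ (X1B - X2A) / 2 := by
      rcases le_total (X1B - x) (x - X2A) with h | h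
      · rw [min_eq_left h]; linarith
      · rw [min_eq_right h]; linarith
    rw [← div_div]
    exact (div_le_div_iff_of_pos_right ha).2 hmin

  · -- characterization of the maximizer
    intro x hx
    constructor
    · intro h
      have hm : min (X1B - x) (x - X2A) = (X1B - X2A) / 2 := by
        have h2' := congrArg (fun z => z * a) h
        rw [div_mul_cancel₀ _ (ne_of_gt ha)] at h2'
        rw [h2']
        field_simp
      rcases le_total (X1B - x) (x - X2A) with hc | hc
      · rw [min_eq_left hc] at hm; linarith
      · rw [min_eq_right hc] at hm; linarith
    · rintro rfl
      exact hmid_val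
  · -- the PDE statement
    intro t ht hΔ
    have hT : T_s ≤ T_s + τ := by linarith
    have hcone_half : ∀ σ ∈ Set.Ico T_s t, a * (σ - T_s) < (X1B - X2A) / 2 := by
      intro σ hσ
      have hlt : a * (σ - T_s) < a * (t - T_s) :=
        mul_lt_mul_of_pos_left (by linarith [hσ.2]) ha
      have hle : a * (t - T_s) ≤ a * ((X1B - X2A) / (2 * a)) :=
        mul_le_mul_of_nonneg_left hΔ ha.le
      rw [haΔ] at hle
      linarith
    constructor
    · -- phat₁
      refine pred_eq ha hT hp₁ (wave_restrict hu (le_of_eq hA) (by linarith)) hinit₁ hinit₁'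
        ⟨by linarith, by linarith⟩ ht ?_
      intro σ hσ
      have := hcone_half σ hσ
      constructor <;> linarith
    · -- phat₂
      refine pred_eq ha hT hp₂ (wave_restrict hu (by linarith) (le_of_eq hB)) hinit₂ hinit₂'
        ⟨by linarith, by linarith⟩ ht ?_
      intro σ hσ
      have := hcone_half σ hσ
      constructor <;> linarith
end
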